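/- arXiv:1408.5817 — 4 statements merged into one kernel-verified Lean document; each statement's English description precedes it below -/
import Mathlib

section
/- For all n ≥ 1, all 0 ≤ k ≤ n−1, and every element q of a commutative ring, Σ_{(σ,S)∈𝔖^<_{n,k}} q^{comaj(σ) − Σ_{i∈S} |Asc(σ) ∩ {i, i+1, …, n−1}|} = [n−k]_q! · S_{n,n−k}(q), where comaj(σ) = Σ_{i∈Asc(σ)} i. (The exponent is a nonnegative integer.) -/
open Finset

/-- One-line notation: `oneline σ i` is the value σ_i ∈ {1,…,n} at position i ∈ {1,…,n}. -/
def oneline {n : ℕ} (σ : Equiv.Perm (Fin n)) (i : ℕ) : ℕ :=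
  if h : 1 ≤ i ∧ i ≤ n then (σ ⟨i - 1, by omega⟩ : ℕ) + 1 else 0

/-- The descent set Des(σ) = {i ∈ {1,…,n−1} : σ_i > σ_{i+1}}. -/
def DesSet {n : ℕ} (σ : Equiv.Perm (Fin n)) : Finset ℕ :=
  (Finset.Icc 1 (n - 1)).filter fun i => oneline σ (i + 1) < oneline σ i

/-- The ascent set Asc(σ) = {i ∈ {1,…,n−1} : σ_i < σ_{i+1}}. -/
def AscSet {n : ℕ} (σ : Equiv.Perm (Fin n)) : Finset ℕ :=
  (Finset.Icc 1 (n - 1)).filter fun i => oneline σ i < oneline σ (i + 1)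

/-- maj(σ) = Σ_{i ∈ Des(σ)} i. -/
def majNum {n : ℕ} (σ : Equiv.Perm (Fin n)) : ℕ := ∑ i ∈ DesSet σ, i

/-- des(σ) = |Des(σ)|. -/
def desNum {n : ℕ} (σ : Equiv.Perm (Fin n)) : ℕ := (DesSet σ).card

/-- inv(σ) = #{(i,j) : 1 ≤ i < j ≤ n, σ_i > σ_j}. -/
def invNum {n : ℕ} (σ : Equiv.Perm (Fin n)) : ℕ :=
  ((Finset.Icc 1 n ×ˢ Finset.Icc 1 n).filter fun p =>
    p.1 < p.2 ∧ oneline σ p.2 < oneline σ p.1).card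

/-- coinv(σ) = #{(i,j) : 1 ≤ i < j ≤ n, σ_i < σ_j}. -/
def coinvNum {n : ℕ} (σ : Equiv.Perm (Fin n)) : ℕ :=
  ((Finset.Icc 1 n ×ˢ Finset.Icc 1 n).filter fun p =>
    p.1 < p.2 ∧ oneline σ p.1 < oneline σ p.2).card

/-- inv^{□,j}(σ) = #{i : 1 ≤ i < j, σ_i > σ_j}, inversions ending at position j. -/
def invEnd {n : ℕ} (σ : Equiv.Perm (Fin n)) (j : ℕ) : ℕ :=
  ((Finset.Icc 1 n).filter fun i => i < j ∧ oneline σ j < oneline σ i).card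

/-- inv^{i,□}(σ) = #{j : i < j ≤ n, σ_i > σ_j}, inversions starting at position i. -/
def invStart {n : ℕ} (σ : Equiv.Perm (Fin n)) (i : ℕ) : ℕ :=
  ((Finset.Icc 1 n).filter fun j => i < j ∧ oneline σ j < oneline σ i).card

/-- [m]_q = 1 + q + ⋯ + q^{m−1}. -/
def qnum {R : Type*} [CommRing R] (q : R) (m : ℕ) : R := ∑ i ∈ Finset.range m, q ^ i

/-- [m]_q! = [1]_q [2]_q ⋯ [m]_q, with [0]_q! = 1. -/
def qfact {R : Type*} [CommRing R] (q : R) (m : ℕ) : R := ∏ i ∈ Finset.range m, qnum q (i + 1)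

/-- q-Stirling numbers: S_{0,0}(q)=1, S_{n,k}(q)=0 for k<0 or k>n, and
S_{n+1,k}(q) = S_{n,k−1}(q) + [k]_q S_{n,k}(q). -/
def qStirling {R : Type*} [CommRing R] (q : R) : ℕ → ℕ → R
  | 0, 0 => 1
  | 0, _ + 1 => 0
  | _ + 1, 0 => 0
  | n + 1, k + 1 => qStirling q n k + qnum q (k + 1) * qStirling q n (k + 1)

/-- The set of star-sets of size k inside a given finite set (e.g. the descent set). -/
def starSets (D : Finset ℕ) (k : ℕ) : Finset (Finset ℕ) :=
  D.powerset.filter fun S => S.card = k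

/-- inv((σ,S)) = inv(σ) − Σ_{i∈S} (1 + inv^{□,i}(σ)) for a descent-starred permutation. -/
def starInv {n : ℕ} (σ : Equiv.Perm (Fin n)) (S : Finset ℕ) : ℕ :=
  invNum σ - ∑ i ∈ S, (1 + invEnd σ i)

/-- maj((σ,S)) = maj(σ) − Σ_{i∈S} |Des(σ) ∩ {i,…,n−1}| for a descent-starred permutation. -/
def starMaj {n : ℕ} (σ : Equiv.Perm (Fin n)) (S : Finset ℕ) : ℕ :=
  majNum σ - ∑ i ∈ S, (DesSet σ ∩ Finset.Icc i (n - 1)).card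

/-- Gaussian binomial coefficients: binom_q(m,0)=1, binom_q(m,r)=0 for r>m, and
binom_q(m,r) = binom_q(m−1,r−1) + q^r · binom_q(m−1,r). -/
def qbinom {R : Type*} [CommRing R] (q : R) : ℕ → ℕ → R
  | _, 0 => 1
  | 0, _ + 1 => 0
  | m + 1, r + 1 => qbinom q m r + q ^ (r + 1) * qbinom q m (r + 1)

/-- A_{n,j}(q) = Σ_{σ ∈ 𝔖_n, des(σ)=j} q^{maj(σ)}. -/
def eulerA {R : Type*} [CommRing R] (q : R) (n j : ℕ) : R :=
  ∑ σ ∈ (Finset.univ : Finset (Equiv.Perm (Fin n))).filter (fun σ => desNum σ = j),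
    q ^ majNum σ

/-- [m]_{p,q} = p^{m−1} + p^{m−2} q + ⋯ + p q^{m−2} + q^{m−1}. -/
def pqnum {R : Type*} [CommRing R] (p q : R) (m : ℕ) : R :=
  ∑ i ∈ Finset.range m, p ^ (m - 1 - i) * q ^ i

/-- [m]_{p,q}! = [1]_{p,q} [2]_{p,q} ⋯ [m]_{p,q}. -/
def pqfact {R : Type*} [CommRing R] (p q : R) (m : ℕ) : R :=
  ∏ i ∈ Finset.range m, pqnum p q (i + 1)

/-- p,q-Stirling numbers: S_{0,0}(p,q)=1, S_{n,k}(p,q)=0 for k<0 or k>n, and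
S_{n+1,k}(p,q) = S_{n,k−1}(p,q) + [k]_{p,q} S_{n,k}(p,q). -/
def pqStirling {R : Type*} [CommRing R] (p q : R) : ℕ → ℕ → R
  | 0, 0 => 1
  | 0, _ + 1 => 0
  | _ + 1, 0 => 0
  | n + 1, k + 1 => pqStirling p q n k + pqnum p q (k + 1) * pqStirling p q n (k + 1)

/-- comaj(σ) = Σ_{i∈Asc(σ)} i. -/
def comajNum {n : ℕ} (σ : Equiv.Perm (Fin n)) : ℕ := ∑ i ∈ AscSet σ, i


noncomputable section S13aux
namespace S13
open LaurentPolynomial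

abbrev L := LaurentPolynomial ℤ

def W (m k : ℕ) : L := ∑ U ∈ powersetCard k (Finset.Icc 1 m), T (-(∑ u ∈ U, (u:ℤ)))

lemma W_zero_right (m : ℕ) : W m 0 = 1 := by simp [W]

lemma W_eq_zero {m k : ℕ} (h : m < k) : W m k = 0 := by
  rw [W, powersetCard_eq_empty.2 (by simpa using h), sum_empty]

lemma sum_powersetCard_insert {a : ℕ} {s : Finset ℕ} (ha : a ∉ s) (k : ℕ) (f : Finset ℕ → L) :
    ∑ U ∈ powersetCard (k+1) (insert a s), f U =
      ∑ U ∈ powersetCard (k+1) s, f U + ∑ U ∈ powersetCard k s, f (insert a U) := by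
  rw [powersetCard_succ_insert ha, sum_union, sum_image]
  · intro U hU V hV hUV
    have hU' : a ∉ U := fun h => ha ((Finset.mem_powersetCard.1 hU).1 h)
    have hV' : a ∉ V := fun h => ha ((Finset.mem_powersetCard.1 hV).1 h)
    rw [← Finset.erase_insert hU', ← Finset.erase_insert hV', hUV]
  · rw [Finset.disjoint_left]
    intro U hU hU2
    obtain ⟨V, hV, rfl⟩ := Finset.mem_image.1 hU2
    exact ha ((Finset.mem_powersetCard.1 hU).1 (Finset.mem_insert_self a V))

lemma W_rec1 (m k : ℕ) : W (m+1) (k+1) = T (-(m+1 : ℤ)) * W m k + W m (k+1) := by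
  have hins : Finset.Icc 1 (m+1) = insert (m+1) (Finset.Icc 1 m) := by
    ext x; simp [Finset.mem_Icc]; omega
  have hnm : (m+1) ∉ Finset.Icc 1 m := by simp
  rw [W, hins, sum_powersetCard_insert hnm, add_comm]
  have h2 : ∑ U ∈ powersetCard k (Finset.Icc 1 m), T (-(∑ u ∈ insert (m+1) U, (u:ℤ))) =
      T (-(m+1 : ℤ)) * W m k := by
    rw [W, Finset.mul_sum]
    refine Finset.sum_congr rfl fun U hU => ?_
    have hU' : (m+1) ∉ U := fun h => hnm ((Finset.mem_powersetCard.1 hU).1 h)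
    rw [Finset.sum_insert hU', ← T_add]
    push_cast; ring_nf
  rw [h2]; rfl

lemma W_shift (m k : ℕ) :
    ∑ U ∈ powersetCard k (Finset.Icc 2 (m+1)), T (-(∑ u ∈ U, (u:ℤ))) = T (-(k:ℤ)) * W m k := by
  rw [W, Finset.mul_sum]
  refine Finset.sum_nbij' (fun U => U.image (· - 1)) (fun V => V.image (· + 1)) ?_ ?_ ?_ ?_ ?_
  · intro U hU
    obtain ⟨hs, hc⟩ := Finset.mem_powersetCard.1 hU
    refine Finset.mem_powersetCard.2 ⟨?_, ?_⟩
    · intro x hx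
      obtain ⟨u, hu, rfl⟩ := Finset.mem_image.1 hx
      have h1 := Finset.mem_Icc.1 (hs hu)
      rw [Finset.mem_Icc]; omega
    · rw [Finset.card_image_of_injOn, hc]
      intro x hx y hy hxy
      have hx' := Finset.mem_Icc.1 (hs hx); have hy' := Finset.mem_Icc.1 (hs hy)
      have h2 : x - 1 = y - 1 := hxy
      omega
  · intro V hV
    obtain ⟨hs, hc⟩ := Finset.mem_powersetCard.1 hV
    refine Finset.mem_powersetCard.2 ⟨?_, ?_⟩
    · intro x hx
      obtain ⟨u, hu, rfl⟩ := Finset.mem_image.1 hx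
      have h1 := Finset.mem_Icc.1 (hs hu)
      rw [Finset.mem_Icc]; omega
    · rw [Finset.card_image_of_injective _ (add_left_injective 1), hc]
  · intro U hU
    obtain ⟨hs, hc⟩ := Finset.mem_powersetCard.1 hU
    ext x
    simp only [Finset.mem_image]
    constructor
    · rintro ⟨y, ⟨z, hz, rfl⟩, rfl⟩
      have h1 := Finset.mem_Icc.1 (hs hz)
      have h2 : z - 1 + 1 = z := by omega
      rw [h2]; exact hz
    · intro hx
      have h1 := Finset.mem_Icc.1 (hs hx)
      exact ⟨x - 1, ⟨x, hx, rfl⟩, by omega⟩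
  · intro V hV
    obtain ⟨hs, hc⟩ := Finset.mem_powersetCard.1 hV
    ext x
    simp only [Finset.mem_image]
    constructor
    · rintro ⟨y, ⟨z, hz, rfl⟩, rfl⟩
      simpa using hz
    · intro hx
      exact ⟨x + 1, ⟨x, hx, rfl⟩, by omega⟩
  · intro U hU
    obtain ⟨hs, hc⟩ := Finset.mem_powersetCard.1 hU
    rw [← T_add]
    congr 1
    have hinj : ∀ x ∈ U, ∀ y ∈ U, x - 1 = y - 1 → x = y := by
      intro x hx y hy h
      have hx' := Finset.mem_Icc.1 (hs hx); have hy' := Finset.mem_Icc.1 (hs hy); omega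
    have e1 : ∀ x ∈ U, (((x - 1:ℕ)):ℤ) = (x:ℤ) - 1 := fun x hx => by
      have := Finset.mem_Icc.1 (hs hx); omega
    rw [Finset.sum_image hinj, Finset.sum_congr rfl e1, Finset.sum_sub_distrib]
    rw [Finset.sum_const, hc]
    push_cast; ring

lemma W_rec2 (m k : ℕ) : W (m+1) (k+1) = T (-(k+1 : ℤ)) * (W m k + W m (k+1)) := by
  have hins : Finset.Icc 1 (m+1) = insert 1 (Finset.Icc 2 (m+1)) := by
    ext x; simp [Finset.mem_Icc]; omega
  have hnm : (1:ℕ) ∉ Finset.Icc 2 (m+1) := by simp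
  rw [W, hins, sum_powersetCard_insert hnm]
  have h2 : ∑ U ∈ powersetCard k (Finset.Icc 2 (m+1)), T (-(∑ u ∈ insert 1 U, (u:ℤ))) =
      T (-1) * (T (-(k:ℤ)) * W m k) := by
    rw [← W_shift, Finset.mul_sum]
    refine Finset.sum_congr rfl fun U hU => ?_
    have hU' : (1:ℕ) ∉ U := fun h => hnm ((Finset.mem_powersetCard.1 hU).1 h)
    rw [Finset.sum_insert hU', ← T_add]
    push_cast; ring_nf
  rw [h2, W_shift]
  push_cast
  rw [show -((k:ℤ) + 1) = -1 + -(k:ℤ) by ring, T_add]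
  ring

-- basic qnum lemmas (general ring)
lemma qnum_zero {R : Type*} [CommRing R] (q : R) : qnum q 0 = 0 := by simp [qnum]
lemma qnum_one {R : Type*} [CommRing R] (q : R) : qnum q 1 = 1 := by simp [qnum]
lemma qnum_succ {R : Type*} [CommRing R] (q : R) (m : ℕ) :
    qnum q (m+1) = qnum q m + q ^ m := by simp [qnum, Finset.sum_range_succ]
lemma qnum_succ' {R : Type*} [CommRing R] (q : R) (m : ℕ) :
    qnum q (m+1) = 1 + q * qnum q m := by
  simp only [qnum]
  rw [Finset.sum_range_succ']
  simp only [pow_succ', pow_zero, ← Finset.mul_sum]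
  ring
lemma qnum_add {R : Type*} [CommRing R] (q : R) (a b : ℕ) :
    qnum q (a + b) = qnum q a + q ^ a * qnum q b := by
  induction b with
  | zero => simp [qnum_zero]
  | succ b ih => rw [← Nat.add_assoc, qnum_succ, ih, qnum_succ, pow_add]; ring

lemma qfact_succ {R : Type*} [CommRing R] (q : R) (m : ℕ) :
    qfact q (m+1) = qfact q m * qnum q (m+1) := by
  rw [qfact, Finset.prod_range_succ]; rfl

def q : L := T 1

lemma q_pow (e : ℕ) : (q : L) ^ e = T (e : ℤ) := by
  rw [q, T_pow]; norm_num

lemma q_pow_T (e : ℕ) : (q:L) ^ e * T (-(e:ℤ)) = 1 := by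
  rw [q_pow, ← T_add]; simp

-- absorption identity
lemma I1 : ∀ m k : ℕ, 1 ≤ k →
    (q:L) ^ (m + 1 - k) * qnum q k * W m k = qnum q (m + 1 - k) * W m (k - 1) := by
  intro m
  induction m with
  | zero =>
    intro k hk
    rw [W_eq_zero (by omega : 0 < k)]
    rcases Nat.eq_or_lt_of_le hk with h | h
    · rw [← h]; simp [qnum_zero]
    · rw [W_eq_zero (by omega : (0:ℕ) < k - 1)]; ring
  | succ m IH =>
    intro k hk
    rcases Nat.lt_or_ge k 2 with hk2 | hk2
    · -- k = 1 : q^(m+1) * W (m+1) 1 = [m+1]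
      have hk1 : k = 1 := by omega
      subst hk1
      have h1 := q_pow_T (m+1)
      push_cast at h1
      have h2 := qnum_succ' (q:L) m
      have h3 : W (m+1) 1 = T (-((m:ℤ)+1)) + W m 1 := by
        simpa [W_zero_right] using W_rec1 m 0
      have ih1 := IH 1 (by omega)
      simp only [show m+1-1 = m from rfl, show (1:ℕ)-1 = 0 from rfl, qnum_one, W_zero_right,
        mul_one] at ih1
      simp only [show m+1+1-1 = m+1 from rfl, show (1:ℕ)-1 = 0 from rfl, qnum_one, W_zero_right,
        mul_one]
      linear_combination (q:L)^(m+1) * h3 + h1 + q * ih1 - h2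
    rcases Nat.lt_or_ge (m+2) k with hbig | hle
    · -- k ≥ m+3 : both sides zero
      rw [W_eq_zero (by omega), W_eq_zero (by omega : m + 1 < k - 1)]
      ring
    rcases Nat.eq_or_lt_of_le hle with heq | hlt
    · -- k = m+2
      rw [← heq]
      simp only [Nat.sub_self, Nat.add_sub_cancel]
      rw [W_eq_zero (by omega), qnum_zero]
      ring
    · -- 2 ≤ k ≤ m+1
      obtain ⟨j, rfl⟩ : ∃ j, k = j + 2 := ⟨k - 2, by omega⟩
      obtain ⟨i, rfl⟩ : ∃ i, m = j + 1 + i := ⟨m - j - 1, by omega⟩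
      have r1 : W (j+1+i+1) (j+2) = T (-((j:ℤ)+1+i+1)) * W (j+1+i) (j+1) + W (j+1+i) (j+2) := by
        have := W_rec1 (j+1+i) (j+1); push_cast at this ⊢; convert this using 3 <;> push_cast <;> ring
      have r2 : W (j+1+i+1) (j+1) = T (-((j:ℤ)+1+i+1)) * W (j+1+i) j + W (j+1+i) (j+1) := by
        have := W_rec1 (j+1+i) j; push_cast at this ⊢; convert this using 3 <;> push_cast <;> ring
      have IH1 := IH (j+2) (by omega)
      have IH2 := IH (j+1) (by omega)
      have e1 : j + 1 + i + 1 - (j + 2) = i := by omega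
      have e2 : j + 1 + i + 1 - (j + 1) = i + 1 := by omega
      have e5 : j + 1 + i + 1 + 1 - (j + 2) = i + 1 := by omega
      simp only [e1, e2, e5, show j + 2 - 1 = j + 1 from rfl, show j + 1 - 1 = j from rfl]
        at IH1 IH2 ⊢
      have h1 : qnum (q:L) (j+2) = qnum (q:L) (j+1) + q^(j+1) := qnum_succ q (j+1)
      have h2 : qnum (q:L) (i+1) = 1 + q * qnum (q:L) i := qnum_succ' q i
      have hT : (q:L)^(i+1) * T (-((j:ℤ)+1+i+1)) * q^(j+1) = 1 := by
        rw [q_pow, q_pow, ← T_add, ← T_add]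
        convert T_zero using 2
        push_cast; ring
      rw [r1, r2]
      linear_combination (T (-((j:ℤ)+1+i+1))) * IH2 + q * IH1 + W (j+1+i) (j+1) * hT +
        (q:L)^(i+1) * T (-((j:ℤ)+1+i+1)) * W (j+1+i) (j+1) * h1 - W (j+1+i) (j+1) * h2

/-- rank lemma -/
lemma rank_sum (B : Finset ℕ) (f : ℕ → L) :
    ∑ j ∈ B, f ((B.filter (fun x => j < x)).card) = ∑ r ∈ Finset.range B.card, f r := by
  induction B using Finset.induction_on_max generalizing f with
  | empty => simp
  | insert a B ha IH =>
    have hna : a ∉ B := fun h => lt_irrefl a (ha a h)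
    rw [Finset.sum_insert hna, Finset.card_insert_of_notMem hna, Finset.sum_range_succ']
    have h1 : (insert a B).filter (fun x => a < x) = ∅ := by
      ext x; simp only [Finset.mem_filter, Finset.mem_insert, Finset.notMem_empty, iff_false]
      rintro ⟨rfl | hx, hlt⟩
      · exact lt_irrefl _ hlt
      · exact absurd hlt (not_lt.2 (le_of_lt (ha x hx)))
    have h2 : ∀ j ∈ B, ((insert a B).filter (fun x => j < x)).card
        = (B.filter (fun x => j < x)).card + 1 := by
      intro j hj
      rw [Finset.filter_insert, if_pos (ha j hj), Finset.card_insert_of_notMem]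
      exact fun h => hna (Finset.mem_filter.1 h).1
    rw [h1, Finset.card_empty, add_comm]
    congr 1
    rw [Finset.sum_congr rfl (fun j hj => by rw [h2 j hj]), IH (fun r => f (r + 1))]

-- oneline basics
lemma oneline_le {n : ℕ} (σ : Equiv.Perm (Fin n)) {j : ℕ} (h1 : 1 ≤ j) (h2 : j ≤ n) :
    oneline σ j ≤ n := by
  rw [oneline, dif_pos ⟨h1, h2⟩]
  exact (σ ⟨j - 1, by omega⟩).isLt

lemma mem_AscSet {n : ℕ} {σ : Equiv.Perm (Fin n)} {i : ℕ} :
    i ∈ AscSet σ ↔ 1 ≤ i ∧ i ≤ n - 1 ∧ oneline σ i < oneline σ (i + 1) := by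
  simp [AscSet, Finset.mem_filter, Finset.mem_Icc, and_assoc]

/-- insertion of a new maximum at position p (0-based) -/
def ins {n : ℕ} (τ : Equiv.Perm (Fin n)) (p : Fin (n+1)) : Equiv.Perm (Fin (n+1)) :=
  (finSuccEquiv' p).trans ((Equiv.optionCongr τ).trans (finSuccEquiv' (Fin.last n)).symm)

lemma ins_apply_self {n : ℕ} (τ : Equiv.Perm (Fin n)) (p : Fin (n+1)) :
    ins τ p p = Fin.last n := by
  simp [ins]

lemma ins_apply_succAbove {n : ℕ} (τ : Equiv.Perm (Fin n)) (p : Fin (n+1)) (j : Fin n) :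
    ins τ p (p.succAbove j) = (τ j).castSucc := by
  simp [ins, ← Fin.succAbove_last]

lemma oneline_ins_self {n : ℕ} (τ : Equiv.Perm (Fin n)) (p : Fin (n+1)) :
    oneline (ins τ p) ((p : ℕ) + 1) = n + 1 := by
  rw [oneline, dif_pos ⟨by omega, by omega⟩]
  have : (⟨(p:ℕ) + 1 - 1, by omega⟩ : Fin (n+1)) = p := by
    ext; simp
  rw [this, ins_apply_self, Fin.val_last]

lemma oneline_ins_lt {n : ℕ} (τ : Equiv.Perm (Fin n)) (p : Fin (n+1)) {j : ℕ}
    (h1 : 1 ≤ j) (h2 : j ≤ (p : ℕ)) : oneline (ins τ p) j = oneline τ j := by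
  have hpn : (p : ℕ) ≤ n := by omega
  have hjn : j - 1 < n := by omega
  rw [oneline, oneline, dif_pos ⟨h1, by omega⟩, dif_pos ⟨h1, by omega⟩]
  have key : (⟨j - 1, by omega⟩ : Fin (n+1)) = p.succAbove ⟨j - 1, hjn⟩ := by
    rw [Fin.succAbove_of_castSucc_lt]
    · rfl
    · rw [Fin.lt_def]; simpa using by omega
  rw [key, ins_apply_succAbove, Fin.coe_castSucc]

lemma oneline_ins_gt {n : ℕ} (τ : Equiv.Perm (Fin n)) (p : Fin (n+1)) {j : ℕ}
    (h1 : (p : ℕ) + 2 ≤ j) (h2 : j ≤ n + 1) : oneline (ins τ p) j = oneline τ (j - 1) := by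
  have hjn : j - 2 < n := by omega
  rw [oneline, oneline, dif_pos ⟨by omega, h2⟩, dif_pos ⟨by omega, by omega⟩]
  have key : (⟨j - 1, by omega⟩ : Fin (n+1)) = p.succAbove ⟨j - 2, hjn⟩ := by
    rw [Fin.succAbove_of_le_castSucc]
    · ext; simp [Fin.val_succ]; omega
    · rw [Fin.le_def]; simpa using by omega
  rw [key, ins_apply_succAbove, Fin.coe_castSucc]
  congr 2

lemma mem_AscSet_bounds {n : ℕ} {σ : Equiv.Perm (Fin n)} {i : ℕ} (h : i ∈ AscSet σ) :
    1 ≤ i ∧ i ≤ n - 1 := ⟨(mem_AscSet.1 h).1, (mem_AscSet.1 h).2.1⟩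

lemma AscSet_ins {n : ℕ} (τ : Equiv.Perm (Fin n)) (p : Fin (n+1)) :
    AscSet (ins τ p) = ((AscSet τ).filter (· < (p:ℕ))) ∪
      (if 1 ≤ (p:ℕ) then {(p:ℕ)} else ∅) ∪
      ((AscSet τ).filter (fun x => (p:ℕ) + 1 ≤ x)).image (· + 1) := by
  have hpn : (p : ℕ) ≤ n := by omega
  ext i
  simp only [Finset.mem_union, Finset.mem_filter, Finset.mem_image]
  rw [mem_AscSet]
  constructor
  · rintro ⟨h1, h2, h3⟩
    rw [show n + 1 - 1 = n from rfl] at h2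
    rcases Nat.lt_or_ge (i+1) ((p:ℕ)+1) with hc | hc
    · -- i + 1 ≤ pv
      rw [oneline_ins_lt τ p h1 (by omega), oneline_ins_lt τ p (by omega) (by omega)] at h3
      exact Or.inl (Or.inl ⟨mem_AscSet.2 ⟨h1, by omega, h3⟩, by omega⟩)
    rcases Nat.eq_or_lt_of_le hc with hc2 | hc2
    · -- i = pv
      have : i = (p:ℕ) := by omega
      subst this
      exact Or.inl (Or.inr (by rw [if_pos h1]; exact Finset.mem_singleton_self _))
    rcases Nat.eq_or_lt_of_le hc2 with hc3 | hc3
    · -- i = pv + 1 : contradiction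
      exfalso
      have hi : i = (p:ℕ) + 1 := by omega
      rw [hi, oneline_ins_self, oneline_ins_gt τ p (by omega) (by omega)] at h3
      have := oneline_le τ (j := (p:ℕ)+1+1-1) (by omega) (by omega)
      omega
    · -- i ≥ pv + 2
      rw [oneline_ins_gt τ p (by omega) (by omega),
        oneline_ins_gt τ p (by omega) (by omega)] at h3
      refine Or.inr ⟨i - 1, ⟨mem_AscSet.2 ⟨by omega, by omega, ?_⟩, by omega⟩, by omega⟩
      have : i + 1 - 1 = (i - 1) + 1 := by omega
      rwa [this] at h3
  · rintro ((⟨hA, hlt⟩ | hpv) | ⟨x, ⟨hA, hge⟩, rfl⟩)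
    · obtain ⟨hb1, hb2⟩ := mem_AscSet_bounds hA
      have h3 := (mem_AscSet.1 hA).2.2
      refine ⟨hb1, by omega, ?_⟩
      rw [oneline_ins_lt τ p hb1 (by omega), oneline_ins_lt τ p (by omega) (by omega)]
      exact h3
    · by_cases h1 : 1 ≤ (p:ℕ)
      · rw [if_pos h1, Finset.mem_singleton] at hpv
        subst hpv
        refine ⟨h1, by omega, ?_⟩
        rw [oneline_ins_lt τ p h1 (le_refl _), oneline_ins_self]
        have := oneline_le τ (j := (p:ℕ)) h1 (by omega)
        omega
      · rw [if_neg h1] at hpv; exact absurd hpv (Finset.notMem_empty _)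
    · obtain ⟨hb1, hb2⟩ := mem_AscSet_bounds hA
      have h3 := (mem_AscSet.1 hA).2.2
      refine ⟨by omega, by omega, ?_⟩
      rw [oneline_ins_gt τ p (by omega) (by omega), oneline_ins_gt τ p (by omega) (by omega)]
      have e1 : x + 1 - 1 = x := by omega
      have e2 : x + 1 + 1 - 1 = x + 1 := by omega
      rw [e1, e2]
      exact h3

lemma split3 (A : Finset ℕ) (pv : ℕ) (g : ℕ → ℕ) :
    ∑ x ∈ A, g x = ∑ x ∈ A.filter (· < pv), g x + ∑ x ∈ A.filter (· = pv), g x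
      + ∑ x ∈ A.filter (fun x => pv < x), g x := by
  have d1 : Disjoint (A.filter (· < pv)) (A.filter (· = pv)) := by
    rw [Finset.disjoint_left]; intro a h1 h2
    have := (Finset.mem_filter.1 h1).2; have := (Finset.mem_filter.1 h2).2; omega
  have d2 : Disjoint (A.filter (· < pv) ∪ A.filter (· = pv)) (A.filter (fun x => pv < x)) := by
    rw [Finset.disjoint_left]; intro a h1 h2
    have h2' := (Finset.mem_filter.1 h2).2
    rcases Finset.mem_union.1 h1 with h | h
    · have := (Finset.mem_filter.1 h).2; omega
    · have := (Finset.mem_filter.1 h).2; omega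
  rw [← Finset.sum_union d1, ← Finset.sum_union d2]
  congr 1
  ext a
  simp only [Finset.mem_union, Finset.mem_filter]
  constructor
  · intro h
    rcases lt_trichotomy a pv with h' | h' | h'
    · exact Or.inl (Or.inl ⟨h, h'⟩)
    · exact Or.inl (Or.inr ⟨h, h'⟩)
    · exact Or.inr ⟨h, h'⟩
  · rintro ((⟨h, _⟩ | ⟨h, _⟩) | ⟨h, _⟩) <;> exact h

lemma filter_eq_singleton {A : Finset ℕ} {pv : ℕ} (h : pv ∈ A) :
    A.filter (· = pv) = {pv} := by
  ext a; simp only [Finset.mem_filter, Finset.mem_singleton]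
  constructor
  · rintro ⟨_, rfl⟩; rfl
  · rintro rfl; exact ⟨h, rfl⟩

lemma filter_eq_empty' {A : Finset ℕ} {pv : ℕ} (h : pv ∉ A) :
    A.filter (· = pv) = ∅ := by
  ext a; simp only [Finset.mem_filter, Finset.notMem_empty, iff_false]
  rintro ⟨ha, rfl⟩; exact h ha

/-- the three pieces of `AscSet_ins` and their card/sum -/
lemma ins_card_sum {n : ℕ} (τ : Equiv.Perm (Fin n)) (p : Fin (n+1)) :
    (AscSet (ins τ p)).card = ((AscSet τ).filter (· < (p:ℕ))).card
        + (if 1 ≤ (p:ℕ) then 1 else 0) + ((AscSet τ).filter (fun x => (p:ℕ) < x)).card ∧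
    comajNum (ins τ p) = (∑ x ∈ (AscSet τ).filter (· < (p:ℕ)), x)
        + (if 1 ≤ (p:ℕ) then (p:ℕ) else 0) + ((∑ x ∈ (AscSet τ).filter (fun x => (p:ℕ) < x), x)
        + ((AscSet τ).filter (fun x => (p:ℕ) < x)).card) := by
  set A := AscSet τ with hA
  set pv := (p:ℕ) with hpv
  have hfe : A.filter (fun x => pv + 1 ≤ x) = A.filter (fun x => pv < x) := by
    apply Finset.filter_congr; intro x _; constructor <;> (intro; omega)
  have hinj : Function.Injective (· + 1 : ℕ → ℕ) := add_left_injective 1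
  have d1 : Disjoint (A.filter (· < pv)) (if 1 ≤ pv then ({pv} : Finset ℕ) else ∅) := by
    rw [Finset.disjoint_left]; intro a h1 h2
    have := (Finset.mem_filter.1 h1).2
    split at h2
    · rw [Finset.mem_singleton] at h2; omega
    · exact Finset.notMem_empty _ h2
  have d2 : Disjoint ((A.filter (· < pv)) ∪ (if 1 ≤ pv then ({pv} : Finset ℕ) else ∅))
      ((A.filter (fun x => pv + 1 ≤ x)).image (· + 1)) := by
    rw [Finset.disjoint_left]; intro a h1 h2
    obtain ⟨x, hx, rfl⟩ := Finset.mem_image.1 h2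
    have hx2 := (Finset.mem_filter.1 hx).2
    rcases Finset.mem_union.1 h1 with h | h
    · have := (Finset.mem_filter.1 h).2; omega
    · split at h
      · rw [Finset.mem_singleton] at h; omega
      · exact Finset.notMem_empty _ h
  constructor
  · show (AscSet (ins τ p)).card = _
    rw [AscSet_ins, Finset.card_union_of_disjoint d2, Finset.card_union_of_disjoint d1,
      Finset.card_image_of_injective _ hinj, hfe]
    congr 1
    congr 1
    split <;> simp
  · show comajNum (ins τ p) = _
    rw [comajNum, AscSet_ins, Finset.sum_union d2, Finset.sum_union d1,
      Finset.sum_image (fun x _ y _ h => hinj h), hfe]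
    congr 1
    · congr 1
      split <;> simp
    · rw [Finset.sum_add_distrib, Finset.sum_const, smul_eq_mul, mul_one]

lemma ins_case_asc {n : ℕ} (τ : Equiv.Perm (Fin n)) (p : Fin (n+1))
    (h : (p:ℕ) = 0 ∨ (p:ℕ) ∈ AscSet τ) :
    (AscSet (ins τ p)).card = (AscSet τ).card ∧
    comajNum (ins τ p) = comajNum τ + ((AscSet τ).filter (fun x => (p:ℕ) < x)).card := by
  obtain ⟨hc, hs⟩ := ins_card_sum τ p
  have hcardA := split3 (AscSet τ) (p:ℕ) (fun _ => 1)
  have hsumA := split3 (AscSet τ) (p:ℕ) id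
  simp only [← Finset.card_eq_sum_ones] at hcardA
  rcases h with h0 | hmem
  · rw [h0] at hc hs
    norm_num at hc hs
    have h2 : ((AscSet τ).filter (fun x => 0 < x)) = AscSet τ := by
      ext a; simp only [Finset.mem_filter, and_iff_left_iff_imp]
      intro ha; have := (mem_AscSet_bounds ha).1; omega
    rw [h2] at hc hs
    have hcm : comajNum τ = ∑ x ∈ AscSet τ, x := rfl
    rw [h0, h2]
    exact ⟨hc, by omega⟩
  · have hone : 1 ≤ (p:ℕ) := (mem_AscSet_bounds hmem).1
    rw [if_pos hone] at hc hs
    rw [filter_eq_singleton hmem] at hcardA hsumA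
    simp only [Finset.card_singleton, Finset.sum_singleton, id] at hcardA hsumA
    have hcm : comajNum τ = ∑ x ∈ AscSet τ, id x := rfl
    simp only [id] at hcm
    constructor
    · omega
    · rw [hs]
      have e : ∑ x ∈ (AscSet τ).filter (· < (p:ℕ)), id x
          = ∑ x ∈ (AscSet τ).filter (· < (p:ℕ)), x := rfl
      have e2 : ∑ x ∈ (AscSet τ).filter (fun x => (p:ℕ) < x), id x
          = ∑ x ∈ (AscSet τ).filter (fun x => (p:ℕ) < x), x := rfl
      omega

lemma ins_case_nonasc {n : ℕ} (τ : Equiv.Perm (Fin n)) (p : Fin (n+1))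
    (h1 : 1 ≤ (p:ℕ)) (h2 : (p:ℕ) ∉ AscSet τ) :
    (AscSet (ins τ p)).card = (AscSet τ).card + 1 ∧
    comajNum (ins τ p) = comajNum τ + ((p:ℕ) + ((AscSet τ).filter (fun x => (p:ℕ) < x)).card) := by
  obtain ⟨hc, hs⟩ := ins_card_sum τ p
  have hcardA := split3 (AscSet τ) (p:ℕ) (fun _ => 1)
  have hsumA := split3 (AscSet τ) (p:ℕ) id
  simp only [← Finset.card_eq_sum_ones] at hcardA
  rw [filter_eq_empty' h2] at hcardA hsumA
  simp only [Finset.card_empty, Finset.sum_empty, id] at hcardA hsumA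
  rw [if_pos h1] at hc hs
  have hcm : comajNum τ = ∑ x ∈ AscSet τ, id x := rfl
  simp only [id] at hcm
  constructor
  · omega
  · rw [hs]
    have e : ∑ x ∈ (AscSet τ).filter (· < (p:ℕ)), id x
        = ∑ x ∈ (AscSet τ).filter (· < (p:ℕ)), x := rfl
    have e2 : ∑ x ∈ (AscSet τ).filter (fun x => (p:ℕ) < x), id x
        = ∑ x ∈ (AscSet τ).filter (fun x => (p:ℕ) < x), x := rfl
    omega

lemma ins_bijective {n : ℕ} :
    Function.Bijective (fun x : Equiv.Perm (Fin n) × Fin (n+1) => ins x.1 x.2) := by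
  rw [Fintype.bijective_iff_injective_and_card]
  constructor
  · rintro ⟨τ, p⟩ ⟨τ', p'⟩ hEq
    simp only at hEq
    have hpp : p = p' := by
      by_contra hne
      obtain ⟨j, hj⟩ := Fin.exists_succAbove_eq hne
      have h1 : ins τ p p = Fin.last n := ins_apply_self τ p
      have h2 : ins τ' p' p = (τ' j).castSucc := by rw [← hj]; exact ins_apply_succAbove τ' p' j
      rw [hEq, h2] at h1
      exact (Fin.castSucc_lt_last (τ' j)).ne h1
    subst hpp
    have hττ : τ = τ' := by
      apply Equiv.ext
      intro j
      have h1 : ins τ p (p.succAbove j) = (τ j).castSucc := ins_apply_succAbove τ p j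
      have h2 : ins τ' p (p.succAbove j) = (τ' j).castSucc := ins_apply_succAbove τ' p j
      rw [hEq] at h1
      exact Fin.castSucc_injective n (h1.symm.trans h2)
    rw [hττ]
  · simp only [Fintype.card_prod, Fintype.card_perm, Fintype.card_fin]
    rw [Nat.factorial_succ, mul_comm]

lemma sum_perm_ins {n : ℕ} (g : Equiv.Perm (Fin (n+1)) → L) :
    ∑ σ : Equiv.Perm (Fin (n+1)), g σ =
      ∑ τ : Equiv.Perm (Fin n), ∑ p : Fin (n+1), g (ins τ p) := by
  calc ∑ σ : Equiv.Perm (Fin (n+1)), g σ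
      = ∑ x : Equiv.Perm (Fin n) × Fin (n+1), g (ins x.1 x.2) :=
        (Fintype.sum_bijective _ ins_bijective _ _ (fun x => rfl)).symm
    _ = ∑ τ : Equiv.Perm (Fin n), ∑ p : Fin (n+1), g (ins τ p) := Fintype.sum_prod_type _

lemma AscSet_subset {n : ℕ} (τ : Equiv.Perm (Fin n)) : AscSet τ ⊆ Finset.Icc 1 (n-1) :=
  Finset.filter_subset _ _

open Fin.NatCast in
lemma pertau {n : ℕ} (τ : Equiv.Perm (Fin n)) (F : ℕ → ℕ → L) :
    ∑ p : Fin (n+1), F ((AscSet (ins τ p)).card) (comajNum (ins τ p)) =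
      (∑ r ∈ Finset.range ((AscSet τ).card + 1), F (AscSet τ).card (comajNum τ + r)) +
      (∑ r ∈ Finset.range (n - (AscSet τ).card),
        F ((AscSet τ).card + 1) (comajNum τ + (n - r))) := by
  set A := AscSet τ with hA
  have hsub : A ⊆ Finset.Icc 1 (n-1) := AscSet_subset τ
  have hmemA : ∀ x ∈ A, 1 ≤ x ∧ x ≤ n - 1 := fun x hx => Finset.mem_Icc.1 (hsub hx)
  set B0 : Finset ℕ := insert 0 A with hB0
  set B1 : Finset ℕ := (Finset.Icc 1 n) \ A with hB1
  have hzA : 0 ∉ A := fun h => by have := (hmemA 0 h).1; omega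
  have hAn : A ⊆ Finset.Icc 1 n := fun x hx => by
    have := hmemA x hx; rw [Finset.mem_Icc]; omega
  have hsplit : Finset.range (n+1) = B0 ∪ B1 := by
    ext x
    simp only [Finset.mem_range, hB0, hB1, Finset.mem_union, Finset.mem_insert,
      Finset.mem_sdiff, Finset.mem_Icc]
    constructor
    · intro hx
      by_cases hxA : x ∈ A
      · exact Or.inl (Or.inr hxA)
      · rcases Nat.eq_zero_or_pos x with rfl | hpos
        · exact Or.inl (Or.inl rfl)
        · exact Or.inr ⟨⟨hpos, by omega⟩, hxA⟩
    · rintro ((rfl | hxA) | ⟨⟨h1, h2⟩, _⟩)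
      · omega
      · have := hmemA x hxA; omega
      · omega
  have hdisj : Disjoint B0 B1 := by
    rw [Finset.disjoint_left]
    intro x hx hx2
    rw [hB1, Finset.mem_sdiff, Finset.mem_Icc] at hx2
    rcases Finset.mem_insert.1 hx with rfl | hxA
    · omega
    · exact hx2.2 hxA
  -- convert Fin-sum to range-sum
  have step1 : ∑ p : Fin (n+1), F ((AscSet (ins τ p)).card) (comajNum (ins τ p)) =
      ∑ j ∈ Finset.range (n+1), F ((AscSet (ins τ ((j : Fin (n+1))))).card)
        (comajNum (ins τ ((j : Fin (n+1))))) := by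
    rw [← Fin.sum_univ_eq_sum_range]
    refine Finset.sum_congr rfl fun p _ => ?_
    rw [Fin.cast_val_eq_self]
  rw [step1, hsplit, Finset.sum_union hdisj]
  congr 1
  · -- B0 part
    have hval : ∀ j ∈ B0, ((j : Fin (n+1)) : ℕ) = j := by
      intro j hj
      rcases Finset.mem_insert.1 hj with rfl | hjA
      · simp
      · exact Fin.val_cast_of_lt (by have := hmemA j hjA; omega)
    have hterm : ∀ j ∈ B0, F ((AscSet (ins τ ((j : Fin (n+1))))).card)
        (comajNum (ins τ ((j : Fin (n+1))))) =
        F A.card (comajNum τ + (B0.filter (fun x => j < x)).card) := by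
      intro j hj
      have hv := hval j hj
      have hcase : ((j : Fin (n+1)) : ℕ) = 0 ∨ ((j : Fin (n+1)) : ℕ) ∈ AscSet τ := by
        rw [hv]
        rcases Finset.mem_insert.1 hj with rfl | hjA
        · exact Or.inl rfl
        · exact Or.inr hjA
      obtain ⟨hcard, hcom⟩ := ins_case_asc τ (j : Fin (n+1)) hcase
      rw [hcard, hcom, hv]
      congr 2
      rw [hB0, Finset.filter_insert, if_neg (by omega)]
    rw [Finset.sum_congr rfl hterm, rank_sum B0 (fun r => F A.card (comajNum τ + r))]
    rw [hB0, Finset.card_insert_of_notMem hzA]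
  · -- B1 part
    have hval : ∀ j ∈ B1, ((j : Fin (n+1)) : ℕ) = j := by
      intro j hj
      rw [hB1, Finset.mem_sdiff, Finset.mem_Icc] at hj
      exact Fin.val_cast_of_lt (by omega)
    have hterm : ∀ j ∈ B1, F ((AscSet (ins τ ((j : Fin (n+1))))).card)
        (comajNum (ins τ ((j : Fin (n+1))))) =
        F (A.card + 1) (comajNum τ + (n - (B1.filter (fun x => j < x)).card)) := by
      intro j hj
      have hv := hval j hj
      have hj' := hj
      rw [hB1, Finset.mem_sdiff, Finset.mem_Icc] at hj'
      obtain ⟨hcard, hcom⟩ := ins_case_nonasc τ (j : Fin (n+1))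
        (by rw [hv]; omega) (by rw [hv]; exact hj'.2)
      rw [hv, ← hA] at hcom
      rw [← hA] at hcard
      -- j + |A.filter (j<·)| = n - |B1.filter (j<·)|
      have hIcc : (Finset.Icc 1 n).filter (fun x => j < x) = Finset.Icc (j+1) n := by
        ext x; simp only [Finset.mem_filter, Finset.mem_Icc]; omega
      have hIcard : ((Finset.Icc 1 n).filter (fun x => j < x)).card = n - j := by
        rw [hIcc, Nat.card_Icc]; omega
      have hunion : (Finset.Icc 1 n).filter (fun x => j < x) =
          A.filter (fun x => j < x) ∪ B1.filter (fun x => j < x) := by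
        rw [hB1, ← Finset.filter_union, Finset.union_sdiff_of_subset hAn]
      have hd : Disjoint (A.filter (fun x => j < x)) (B1.filter (fun x => j < x)) :=
        Finset.disjoint_filter_filter (by rw [hB1]; exact Finset.disjoint_sdiff)
      have hsum : (A.filter (fun x => j < x)).card + (B1.filter (fun x => j < x)).card
          = n - j := by
        rw [← Finset.card_union_of_disjoint hd, ← hunion, hIcard]
      rw [hcard, hcom]
      congr 2
      omega
    rw [Finset.sum_congr rfl hterm,
      rank_sum B1 (fun r => F (A.card + 1) (comajNum τ + (n - r)))]
    have : B1.card = n - A.card := by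
      rw [hB1, Finset.card_sdiff_of_subset hAn, Nat.card_Icc]
      omega
    rw [this]

def Aeul (n m : ℕ) : L :=
  ∑ σ : Equiv.Perm (Fin n), (if (AscSet σ).card = m then (q:L) ^ (comajNum σ) else 0)

lemma AscSet_card_le {n : ℕ} (σ : Equiv.Perm (Fin n)) : (AscSet σ).card ≤ n - 1 :=
  le_trans (Finset.card_le_card (AscSet_subset σ)) (by rw [Nat.card_Icc]; omega)

lemma GEO (s e : ℕ) (h : s ≤ e + 1) :
    ∑ r ∈ Finset.range s, (q:L) ^ (e - r) = q ^ (e + 1 - s) * qnum q s := by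
  induction s with
  | zero => simp [qnum_zero]
  | succ s ih =>
    rw [Finset.sum_range_succ, ih (by omega), show e + 1 - s = (e - s) + 1 by omega,
      show e + 1 - (s + 1) = e - s by omega, pow_succ, qnum_succ']
    ring

lemma Aeul_top {n m : ℕ} (hn : 1 ≤ n) (hm : n ≤ m) : Aeul n m = 0 := by
  rw [Aeul]
  refine Finset.sum_eq_zero fun σ _ => ?_
  rw [if_neg]
  have := AscSet_card_le σ
  omega

lemma ESS0 {n : ℕ} : Aeul (n+1) 0 = Aeul n 0 := by
  rw [Aeul, sum_perm_ins, Aeul]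
  refine Finset.sum_congr rfl fun τ _ => ?_
  rw [pertau τ (fun a c => if a = 0 then (q:L)^c else 0)]
  by_cases h : (AscSet τ).card = 0
  · rw [if_pos h, h]
    simp
  · rw [if_neg h]
    simp [h]

lemma ESS {n m : ℕ} : Aeul (n+1) (m+1) =
    qnum q (m+2) * Aeul n (m+1) + (q:L)^(m+1) * qnum q (n - m) * Aeul n m := by
  rw [Aeul, sum_perm_ins]
  have h1 : ∀ τ : Equiv.Perm (Fin n),
      (∑ p : Fin (n+1), if (AscSet (ins τ p)).card = m+1 then (q:L)^(comajNum (ins τ p)) else 0)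
      = (if (AscSet τ).card = m+1 then (q:L)^(comajNum τ) else 0) * qnum q (m+2)
        + (if (AscSet τ).card = m then (q:L)^(comajNum τ) else 0)
            * ((q:L)^(m+1) * qnum q (n - m)) := by
    intro τ
    rw [pertau τ (fun a c => if a = m+1 then (q:L)^c else 0)]
    congr 1
    · by_cases ha : (AscSet τ).card = m+1
      · rw [if_pos ha, ha]
        simp only [eq_self_iff_true, if_true]
        rw [qnum, Finset.mul_sum]
        refine Finset.sum_congr (by norm_num) fun r _ => pow_add q _ _
      · rw [if_neg ha, zero_mul]
        refine Finset.sum_eq_zero fun r _ => ?_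
        rw [if_neg ha]
    · by_cases ha : (AscSet τ).card = m
      · rw [if_pos ha, ha]
        simp only [eq_self_iff_true, if_true]
        have hmn : m ≤ n := by
          have := AscSet_card_le τ
          omega
        have : ∑ r ∈ Finset.range (n - m), (q:L) ^ (comajNum τ + (n - r))
            = (q:L)^(comajNum τ) * ∑ r ∈ Finset.range (n - m), (q:L) ^ (n - r) := by
          rw [Finset.mul_sum]
          exact Finset.sum_congr rfl fun r _ => pow_add q _ _
        rw [this, GEO (n - m) n (by omega), show n + 1 - (n - m) = m + 1 by omega]
      · rw [if_neg ha, zero_mul]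
        refine Finset.sum_eq_zero fun r _ => ?_
        rw [if_neg (by omega : ¬ (AscSet τ).card + 1 = m + 1)]
  rw [Finset.sum_congr rfl fun τ _ => h1 τ, Finset.sum_add_distrib, ← Finset.sum_mul,
    ← Finset.sum_mul, ← Aeul, ← Aeul]
  ring
lemma qStirling_gt {R : Type*} [CommRing R] (q : R) :
    ∀ n k : ℕ, n < k → qStirling q n k = 0 := by
  intro n
  induction n with
  | zero =>
    rintro (_ | k) h
    · omega
    · rfl
  | succ n IH =>
    rintro (_ | k) h
    · omega
    · rw [qStirling, IH k (by omega), IH (k+1) (by omega)]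
      ring

lemma qStirling_self {R : Type*} [CommRing R] (q : R) : ∀ n : ℕ, qStirling q n n = 1 := by
  intro n
  induction n with
  | zero => rfl
  | succ n IH => rw [qStirling, IH, qStirling_gt q n (n+1) (by omega)]; ring

lemma qStirling_zero {R : Type*} [CommRing R] (q : R) (n : ℕ) : qStirling q (n+1) 0 = 0 := rfl

lemma STEP {n m k' : ℕ} (hmn : m + 1 ≤ n) :
    qnum (q:L) (m+1) * W m (k'+1) + (q:L)^(m+1) * qnum q (n-m) * W (m+1) (k'+1)
      = qnum q (n - k') * (W m (k'+1) + W m k') := by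
  by_cases hk : k' ≤ m
  · rw [W_rec2 m k']
    have hpt := q_pow_T (k'+1)
    push_cast at hpt
    have hq : (q:L)^(m+1) * T (-(k'+1 : ℤ)) = q^(m - k') := by
      rw [show m+1 = (k'+1) + (m - k') by omega, pow_add, mul_comm ((q:L)^(k'+1)) _,
        mul_assoc, hpt, mul_one]
    have h1 : qnum (q:L) (n - k') = qnum q (m - k') + q^(m-k') * qnum q (n - m) := by
      rw [← qnum_add]; congr 1; omega
    have h2 : qnum (q:L) (m+1) = qnum q (m - k') + q^(m-k') * qnum q (k'+1) := by
      rw [← qnum_add]; congr 1; omega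
    have hI := I1 m (k'+1) (by omega)
    rw [show m+1-(k'+1) = m - k' by omega] at hI
    simp only [Nat.add_sub_cancel] at hI
    linear_combination (qnum (q:L) (n-m) * (W m k' + W m (k'+1))) * hq + hI
      + W m (k'+1) * h2 - (W m (k'+1) + W m k') * h1
  · rw [W_eq_zero (by omega : m < k'+1), W_eq_zero (by omega : m+1 < k'+1),
      W_eq_zero (by omega : m < k')]
    ring

lemma Aeul_one : Aeul 1 0 = (1:L) := by
  have h : ∀ σ : Equiv.Perm (Fin 1), AscSet σ = ∅ := by
    intro σ
    rw [AscSet, show (1:ℕ) - 1 = 0 from rfl, Finset.Icc_eq_empty (by omega),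
      Finset.filter_empty]
  have hterm : ∀ σ : Equiv.Perm (Fin 1),
      (if (AscSet σ).card = 0 then (q:L) ^ comajNum σ else 0) = 1 := by
    intro σ
    rw [comajNum, h σ]
    simp
  rw [Aeul, Finset.sum_congr rfl (fun σ _ => hterm σ)]
  simp [Finset.card_univ, Fintype.card_perm]

set_option maxHeartbeats 800000 in
lemma MAIN : ∀ n : ℕ, 1 ≤ n → ∀ k : ℕ,
    (∑ m ∈ Finset.range n, Aeul n m * W m k)
      = qfact (q:L) (n - k) * qStirling (q:L) n (n - k) := by
  intro n
  induction n with
  | zero => omega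
  | succ n IH =>
    intro _ k
    rcases Nat.eq_zero_or_pos n with rfl | hn
    · -- base case n+1 = 1
      rw [Finset.sum_range_one, Aeul_one, one_mul]
      match k with
      | 0 =>
        rw [W_zero_right]
        have h1 : qfact (q:L) 1 = 1 := by simp [qfact, qnum]
        have h2 : qStirling (q:L) 1 1 = 1 := qStirling_self q 1
        rw [show (1:ℕ) - 0 = 1 from rfl, h1, h2, mul_one]
      | (k'+1) =>
        rw [W_eq_zero (by omega), show (1:ℕ) - (k'+1) = 0 by omega, qStirling_zero]
        ring
    · have IH' := IH hn
      -- reduce LHS to a sum over range n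
      have key : ∑ m ∈ Finset.range (n+1), Aeul (n+1) m * W m k
          = ∑ m ∈ Finset.range n, Aeul n m *
              (qnum (q:L) (m+1) * W m k + (q:L)^(m+1) * qnum q (n-m) * W (m+1) k) := by
        rw [Finset.sum_range_succ' (fun m => Aeul (n+1) m * W m k) n]
        have e0 : Aeul (n+1) 0 * W 0 k = Aeul n 0 * W 0 k := by rw [ESS0]
        have e2 : ∀ m, Aeul (n+1) (m+1) * W (m+1) k
            = qnum (q:L) (m+2) * (Aeul n (m+1) * W (m+1) k)
              + Aeul n m * ((q:L)^(m+1) * qnum q (n-m) * W (m+1) k) := by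
          intro m; rw [ESS]; ring
        rw [e0, Finset.sum_congr rfl (fun m _ => e2 m), Finset.sum_add_distrib]
        have e3 : Aeul n 0 * W 0 k
              + ∑ m ∈ Finset.range n, qnum (q:L) (m+2) * (Aeul n (m+1) * W (m+1) k)
            = ∑ m ∈ Finset.range n, qnum (q:L) (m+1) * (Aeul n m * W m k) := by
          have hu := Finset.sum_range_succ' (fun m => qnum (q:L) (m+1) * (Aeul n m * W m k)) n
          have hu2 := Finset.sum_range_succ (fun m => qnum (q:L) (m+1) * (Aeul n m * W m k)) n
          have htop : Aeul n n = 0 := Aeul_top hn le_rfl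
          rw [hu2, htop] at hu
          simp only [zero_add, qnum_one, one_mul, mul_zero, zero_mul, add_zero] at hu
          linear_combination hu.symm
        have e4 : ∑ m ∈ Finset.range n, Aeul n m *
              (qnum (q:L) (m+1) * W m k + (q:L)^(m+1) * qnum q (n-m) * W (m+1) k)
            = ∑ m ∈ Finset.range n, qnum (q:L) (m+1) * (Aeul n m * W m k)
              + ∑ m ∈ Finset.range n, Aeul n m * ((q:L)^(m+1) * qnum q (n-m) * W (m+1) k) := by
          rw [← Finset.sum_add_distrib]
          exact Finset.sum_congr rfl fun m _ => by ring
        rw [e4]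
        linear_combination e3
      rw [key]
      match k with
      | 0 =>
        have hC : ∀ m ∈ Finset.range n, Aeul n m *
            (qnum (q:L) (m+1) * W m 0 + (q:L)^(m+1) * qnum q (n-m) * W (m+1) 0)
            = qnum (q:L) (n+1) * (Aeul n m * W m 0) := by
          intro m hm
          have hmn : m < n := Finset.mem_range.1 hm
          rw [W_zero_right, W_zero_right]
          have : qnum (q:L) (n+1) = qnum (q:L) (m+1) + q^(m+1) * qnum q (n-m) := by
            rw [← qnum_add]; congr 1; omega
          rw [this]; ring
        rw [Finset.sum_congr rfl hC, ← Finset.mul_sum, IH' 0]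
        rw [show n - 0 = n from rfl, show n + 1 - 0 = n + 1 from rfl, qStirling_self,
          qStirling_self, mul_one, mul_one, qfact_succ]
        ring
      | (k'+1) =>
        have hC : ∀ m ∈ Finset.range n, Aeul n m *
            (qnum (q:L) (m+1) * W m (k'+1) + (q:L)^(m+1) * qnum q (n-m) * W (m+1) (k'+1))
            = qnum (q:L) (n - k') * (Aeul n m * W m (k'+1) + Aeul n m * W m k') := by
          intro m hm
          have hmn : m < n := Finset.mem_range.1 hm
          linear_combination (Aeul n m) * STEP (n := n) (m := m) (k' := k') (show m+1 ≤ n by omega)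
        rw [Finset.sum_congr rfl hC, ← Finset.mul_sum, Finset.sum_add_distrib, IH' (k'+1),
          IH' k']
        rcases Nat.lt_or_ge k' n with hkn | hkn
        · obtain ⟨j, hj⟩ : ∃ j, n - k' = j + 1 := ⟨n - k' - 1, by omega⟩
          rw [show n + 1 - (k'+1) = n - k' by omega, hj,
            show n - (k'+1) = j by omega, qStirling, qfact_succ]
          ring
        · rw [show n - k' = 0 by omega, show n + 1 - (k' + 1) = 0 by omega, qnum_zero,
            qStirling_zero]
          ring
lemma subsum : ∀ (A : Finset ℕ) (k : ℕ),
    (∑ S ∈ powersetCard k A,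
      T (-(∑ i ∈ S, ((A.filter (fun x => i ≤ x)).card : ℤ))) : L) = W A.card k := by
  intro A
  induction A using Finset.induction_on_min with
  | empty =>
    intro k
    match k with
    | 0 => simp [W_zero_right]
    | (k+1) => simp [W_eq_zero (by omega : 0 < k + 1)]
  | insert a A ha IH =>
    intro k
    have hna : a ∉ A := fun h => lt_irrefl a (ha a h)
    match k with
    | 0 => simp [W_zero_right]
    | (k+1) =>
      rw [sum_powersetCard_insert hna]
      have hterm1 : ∀ S ∈ powersetCard (k+1) A,
          (T (-(∑ i ∈ S, (((insert a A).filter (fun x => i ≤ x)).card : ℤ))) : L)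
          = T (-(∑ i ∈ S, ((A.filter (fun x => i ≤ x)).card : ℤ))) := by
        intro S hS
        have hSsub := (Finset.mem_powersetCard.1 hS).1
        congr 2
        refine Finset.sum_congr rfl fun i hi => ?_
        congr 2
        rw [Finset.filter_insert, if_neg (by have := ha i (hSsub hi); omega)]
      have hterm2 : ∀ S ∈ powersetCard k A,
          (T (-(∑ i ∈ insert a S, (((insert a A).filter (fun x => i ≤ x)).card : ℤ))) : L)
          = T (-(A.card + 1 : ℤ)) * T (-(∑ i ∈ S, ((A.filter (fun x => i ≤ x)).card : ℤ))) := by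
        intro S hS
        have hSsub := (Finset.mem_powersetCard.1 hS).1
        have haS : a ∉ S := fun h => hna (hSsub h)
        rw [Finset.sum_insert haS, ← T_add]
        congr 1
        have h1 : ((insert a A).filter (fun x => a ≤ x)) = insert a A := by
          apply Finset.filter_true_of_mem
          intro x hx
          rcases Finset.mem_insert.1 hx with rfl | hxA
          · exact le_refl x
          · exact le_of_lt (ha x hxA)
        have h2 : ∀ i ∈ S, ((insert a A).filter (fun x => i ≤ x)) = A.filter (fun x => i ≤ x) := by
          intro i hi
          rw [Finset.filter_insert, if_neg (by have := ha i (hSsub hi); omega)]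
        rw [h1, Finset.card_insert_of_notMem hna]
        rw [Finset.sum_congr rfl (fun i hi => by rw [h2 i hi])]
        push_cast
        ring
      rw [Finset.sum_congr rfl hterm1, Finset.sum_congr rfl hterm2, IH (k+1),
        ← Finset.mul_sum, IH k, Finset.card_insert_of_notMem hna, W_rec1]
      ring
lemma inner_sum {n : ℕ} (σ : Equiv.Perm (Fin n)) (k : ℕ) :
    ∑ S ∈ starSets (AscSet σ) k,
        (q:L) ^ (comajNum σ - ∑ i ∈ S, (AscSet σ ∩ Finset.Icc i (n - 1)).card)
      = (q:L) ^ (comajNum σ) * W ((AscSet σ).card) k := by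
  have hIcc : ∀ i : ℕ, AscSet σ ∩ Finset.Icc i (n-1) = (AscSet σ).filter (fun x => i ≤ x) := by
    intro i
    ext x
    simp only [Finset.mem_inter, Finset.mem_Icc, Finset.mem_filter]
    constructor
    · rintro ⟨hx, h1, _⟩; exact ⟨hx, h1⟩
    · rintro ⟨hx, h1⟩; exact ⟨hx, h1, (mem_AscSet_bounds hx).2⟩
  have hstar : starSets (AscSet σ) k = powersetCard k (AscSet σ) := by
    rw [starSets, ← Finset.powersetCard_eq_filter]
  have hw : ∀ S ∈ powersetCard k (AscSet σ),
      (∑ i ∈ S, ((AscSet σ).filter (fun x => i ≤ x)).card) ≤ comajNum σ := by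
    intro S hS
    have hSsub := (Finset.mem_powersetCard.1 hS).1
    have hdc : ∑ i ∈ S, ((AscSet σ).filter (fun x => i ≤ x)).card
        = ∑ j ∈ AscSet σ, (S.filter (fun i => i ≤ j)).card := by
      simp only [Finset.card_filter]
      rw [Finset.sum_comm]
    rw [hdc, comajNum]
    refine Finset.sum_le_sum fun j _ => ?_
    calc (S.filter (fun i => i ≤ j)).card ≤ (Finset.Icc 1 j).card := by
          apply Finset.card_le_card
          intro x hx
          obtain ⟨hxS, hxj⟩ := Finset.mem_filter.1 hx
          rw [Finset.mem_Icc]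
          exact ⟨(mem_AscSet_bounds (hSsub hxS)).1, hxj⟩
      _ = j := by rw [Nat.card_Icc]; omega
  rw [hstar]
  have hterm : ∀ S ∈ powersetCard k (AscSet σ),
      (q:L) ^ (comajNum σ - ∑ i ∈ S, (AscSet σ ∩ Finset.Icc i (n - 1)).card)
      = (q:L) ^ (comajNum σ) *
          T (-(∑ i ∈ S, (((AscSet σ).filter (fun x => i ≤ x)).card : ℤ))) := by
    intro S hS
    have hw' := hw S hS
    simp only [hIcc]
    rw [q_pow, q_pow, ← T_add]
    congr 1
    push_cast [Nat.cast_sub hw']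
    ring
  rw [Finset.sum_congr rfl hterm, ← Finset.mul_sum, subsum (AscSet σ) k]

lemma group {n : ℕ} (hn : 1 ≤ n) (k : ℕ) :
    ∑ σ : Equiv.Perm (Fin n), (q:L)^(comajNum σ) * W ((AscSet σ).card) k
      = ∑ m ∈ Finset.range n, Aeul n m * W m k := by
  simp only [Aeul, Finset.sum_mul]
  rw [Finset.sum_comm]
  refine Finset.sum_congr rfl fun σ _ => ?_
  have hmem : (AscSet σ).card ∈ Finset.range n := by
    rw [Finset.mem_range]
    have := AscSet_card_le σ
    omega
  have hsplit : ∀ m ∈ Finset.range n,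
      (if (AscSet σ).card = m then (q:L)^(comajNum σ) else 0) * W m k
      = if (AscSet σ).card = m then (q:L)^(comajNum σ) * W m k else 0 := fun m _ => by
    split <;> simp
  rw [Finset.sum_congr rfl hsplit, Finset.sum_ite_eq (Finset.range n) ((AscSet σ).card)
    (fun m => (q:L)^(comajNum σ) * W m k), if_pos hmem]

theorem mainL {n : ℕ} (hn : 1 ≤ n) (k : ℕ) :
    ∑ σ : Equiv.Perm (Fin n), ∑ S ∈ starSets (AscSet σ) k,
        (T 1 : L) ^ (comajNum σ - ∑ i ∈ S, (AscSet σ ∩ Finset.Icc i (n - 1)).card)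
      = qfact (T 1 : L) (n - k) * qStirling (T 1 : L) n (n - k) := by
  rw [show (T 1 : L) = q from rfl]
  rw [Finset.sum_congr rfl (fun σ _ => inner_sum σ k), group hn k, MAIN n hn k]
lemma map_qnum {R R' : Type*} [CommRing R] [CommRing R'] (f : R →+* R') (x : R) (m : ℕ) :
    f (qnum x m) = qnum (f x) m := by
  simp [qnum, map_sum, map_pow]

lemma map_qfact {R R' : Type*} [CommRing R] [CommRing R'] (f : R →+* R') (x : R) (m : ℕ) :
    f (qfact x m) = qfact (f x) m := by
  simp [qfact, map_prod, map_qnum]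

lemma map_qStirling {R R' : Type*} [CommRing R] [CommRing R'] (f : R →+* R') (x : R) :
    ∀ n k : ℕ, f (qStirling x n k) = qStirling (f x) n k := by
  intro n
  induction n with
  | zero =>
    rintro (_ | k)
    · simp [qStirling]
    · simp [qStirling]
  | succ n IH =>
    rintro (_ | k)
    · simp [qStirling]
    · rw [qStirling, map_add, map_mul, map_qnum, IH, IH]
      rfl

end S13
end S13aux

/-- For all n ≥ 1, 0 ≤ k ≤ n−1 and q in a commutative ring,
Σ_{(σ,S)∈𝔖^<_{n,k}} q^{comaj(σ) − Σ_{i∈S} |Asc(σ)∩{i,…,n−1}|} = [n−k]_q! · S_{n,n−k}(q). -/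
theorem statement13 {R : Type*} [CommRing R] (q : R) (n k : ℕ) (hn : 1 ≤ n) (hk : k ≤ n - 1) :
    ∑ σ : Equiv.Perm (Fin n), ∑ S ∈ starSets (AscSet σ) k,
        q ^ (comajNum σ - ∑ i ∈ S, (AscSet σ ∩ Finset.Icc i (n - 1)).card) =
      qfact q (n - k) * qStirling q n (n - k) := by
  have hZ : (∑ σ : Equiv.Perm (Fin n), ∑ S ∈ starSets (AscSet σ) k,
      (Polynomial.X : Polynomial ℤ) ^
        (comajNum σ - ∑ i ∈ S, (AscSet σ ∩ Finset.Icc i (n - 1)).card))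
      = qfact (Polynomial.X : Polynomial ℤ) (n - k)
          * qStirling (Polynomial.X : Polynomial ℤ) n (n - k) := by
    apply Polynomial.toLaurent_injective
    rw [map_sum, map_mul, S13.map_qfact, S13.map_qStirling, Polynomial.toLaurent_X]
    rw [Finset.sum_congr rfl (fun σ _ => map_sum Polynomial.toLaurent _ _)]
    simp only [map_pow, Polynomial.toLaurent_X]
    exact S13.mainL hn k
  have hmap := congrArg ((Polynomial.aeval q : Polynomial ℤ →ₐ[ℤ] R) : Polynomial ℤ →+* R) hZ
  rw [map_sum, map_mul, S13.map_qfact, S13.map_qStirling] at hmap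
  rw [Finset.sum_congr rfl (fun σ _ => map_sum _ _ _)] at hmap
  have hX : ((Polynomial.aeval q : Polynomial ℤ →ₐ[ℤ] R) : Polynomial ℤ →+* R) Polynomial.X = q :=
    Polynomial.aeval_X q
  simp only [map_pow, hX] at hmap
  exact hmap
end

section
/- For all n ≥ 1, all 0 ≤ k ≤ n−1, and every element q of a commutative ring, Σ_{(σ,T)∈𝔖^<_{n,k}} q^{inv(σ) − Σ_{i∈T} inv^{□,i+1}(σ)} = [n−k]_q! · S_{n,n−k}(q). (The exponent is a nonnegative integer.) -/
open Finset

namespace Aux14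

def ol (l : List ℕ) (i : ℕ) : ℕ := if 1 ≤ i ∧ i ≤ l.length then l.getD (i-1) 0 else 0

def lAsc (l : List ℕ) : Finset ℕ :=
  (Finset.Icc 1 (l.length - 1)).filter fun i => ol l i < ol l (i+1)

lemma getD_insertIdx : ∀ (l : List ℕ) (j : ℕ) (_ : j ≤ l.length) (v i : ℕ),
    (l.insertIdx j v).getD i 0 =
      if i < j then l.getD i 0 else if i = j then v else l.getD (i-1) 0
  | l, 0, _, v, i => by
      cases i <;> simp [List.insertIdx_zero]
  | [], j+1, h, v, i => by simp at h
  | a :: t, j+1, h, v, 0 => by simp [List.insertIdx_succ_cons]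
  | a :: t, j+1, h, v, i+1 => by
      simp only [List.insertIdx_succ_cons, List.getD_cons_succ]
      rw [getD_insertIdx t j (by simpa using h) v i]
      rcases Nat.lt_trichotomy i j with h' | h' | h'
      · simp [h', Nat.succ_lt_succ h']
      · simp [h']
      · obtain ⟨i', rfl⟩ : ∃ i', i = i' + 1 := ⟨i - 1, by omega⟩
        have : ¬ (i' + 1 < j) := by omega
        have h2 : ¬ (i' + 1 + 1 < j + 1) := by omega
        have h3 : i' + 1 ≠ j := by omega
        have h4 : i' + 1 + 1 ≠ j + 1 := by omega
        simp [this, h2, h3, h4]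

def ins (l : List ℕ) (p : ℕ) : List ℕ := l.insertIdx (p-1) (l.length+1)

lemma length_ins {l : List ℕ} {p : ℕ} (hp2 : p ≤ l.length + 1) :
    (ins l p).length = l.length + 1 :=
  List.length_insertIdx_of_le_length (by omega) _

lemma ol_ins {l : List ℕ} {p : ℕ} (hp1 : 1 ≤ p) (hp2 : p ≤ l.length + 1) (i : ℕ) :
    ol (ins l p) i =
      if i < p then ol l i else if i = p then l.length + 1 else ol l (i-1) := by
  unfold ol ins
  rw [List.length_insertIdx_of_le_length (i := p-1) (as := l) (by omega), getD_insertIdx l (p-1) (by omega) _ (i-1)]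
  split_ifs <;> first | rfl | (exfalso; omega)

lemma ol_le {l : List ℕ} (hl : ∀ x ∈ l, x ≤ l.length) (j : ℕ) : ol l j ≤ l.length := by
  unfold ol
  split_ifs with h
  · rcases h with ⟨h1, h2⟩
    rw [List.getD_eq_getElem l 0 (by omega)]
    exact hl _ (List.getElem_mem _)
  · omega

lemma not_mem_lAsc_zero (l : List ℕ) : 0 ∉ lAsc l := by
  simp [lAsc]

lemma mem_lAsc_bounds {l : List ℕ} {i : ℕ} (h : i ∈ lAsc l) :
    1 ≤ i ∧ i ≤ l.length - 1 :=
  Finset.mem_Icc.1 (Finset.mem_filter.1 h).1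

lemma mem_lAsc_ins {l : List ℕ} {p : ℕ} (hp1 : 1 ≤ p) (hp2 : p ≤ l.length + 1)
    (hl : ∀ x ∈ l, x ≤ l.length) (i : ℕ) :
    i ∈ lAsc (ins l p) ↔
      (2 ≤ p ∧ i = p - 1) ∨ (i + 1 ≤ p - 1 ∧ i ∈ lAsc l) ∨ (p + 1 ≤ i ∧ i - 1 ∈ lAsc l) := by
  have hb1 : ol l i ≤ l.length := ol_le hl i
  have hb2 : ol l (i+1) ≤ l.length := ol_le hl (i+1)
  have hb3 : ol l (i-1) ≤ l.length := ol_le hl (i-1)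
  by_cases hi0 : i = 0
  · subst hi0
    constructor
    · intro hmem
      exact absurd hmem (not_mem_lAsc_zero _)
    · rintro (⟨h1, h2⟩ | ⟨h1, h2⟩ | ⟨h1, h2⟩)
      · omega
      · exact absurd h2 (not_mem_lAsc_zero _)
      · omega
  have he : i - 1 + 1 = i := by omega
  simp only [lAsc, Finset.mem_filter, Finset.mem_Icc, length_ins hp2,
    ol_ins hp1 hp2, Nat.add_sub_cancel, he]
  split_ifs <;> omega


def linvEnd (l : List ℕ) (j : ℕ) : ℕ :=
  ((Finset.Icc 1 l.length).filter fun i => i < j ∧ ol l j < ol l i).card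

def linv (l : List ℕ) : ℕ :=
  ((Finset.Icc 1 l.length ×ˢ Finset.Icc 1 l.length).filter fun x =>
    x.1 < x.2 ∧ ol l x.2 < ol l x.1).card

def lstat (l : List ℕ) (T : Finset ℕ) : ℕ := linv l - ∑ i ∈ T, linvEnd l (i+1)

def Words (n : ℕ) : Finset (List ℕ) := (List.range' 1 n).permutations.toFinset

lemma mem_Words {n : ℕ} {l : List ℕ} : l ∈ Words n ↔ l.Perm (List.range' 1 n) := by
  simp [Words, List.mem_permutations]

lemma Words_length {n : ℕ} {l : List ℕ} (h : l ∈ Words n) : l.length = n := by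
  simpa using (mem_Words.1 h).length_eq

lemma Words_mem_iff {n : ℕ} {l : List ℕ} (h : l ∈ Words n) {x : ℕ} :
    x ∈ l ↔ 1 ≤ x ∧ x ≤ n := by
  rw [(mem_Words.1 h).mem_iff, List.mem_range'_1]
  omega

lemma Words_nodup {n : ℕ} {l : List ℕ} (h : l ∈ Words n) : l.Nodup :=
  (mem_Words.1 h).nodup_iff.2 (List.nodup_range' (s := 1) (n := n))


section Insert

variable {l : List ℕ} {p : ℕ}

lemma linvEnd_ins_low (hp1 : 1 ≤ p) (hp2 : p ≤ l.length + 1)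
    {j : ℕ} (hj1 : 1 ≤ j) (hj2 : j ≤ p - 1) :
    linvEnd (ins l p) j = linvEnd l j := by
  unfold linvEnd
  apply congrArg Finset.card
  ext i
  simp only [Finset.mem_filter, Finset.mem_Icc, length_ins hp2, ol_ins hp1 hp2]
  split_ifs <;> omega

lemma linvEnd_ins_self (hp1 : 1 ≤ p) (hp2 : p ≤ l.length + 1)
    (hl : ∀ x ∈ l, x ≤ l.length) :
    linvEnd (ins l p) p = 0 := by
  rw [linvEnd, Finset.card_eq_zero, Finset.filter_eq_empty_iff]
  intro i hi
  rw [Finset.mem_Icc, length_ins hp2] at hi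
  have b1 : ol l i ≤ l.length := ol_le hl i
  have b2 : ol l (i-1) ≤ l.length := ol_le hl (i-1)
  rw [ol_ins hp1 hp2, ol_ins hp1 hp2]
  split_ifs <;> omega

lemma ol_ins_lt (hp1 : 1 ≤ p) (hp2 : p ≤ l.length + 1) {i : ℕ} (h : i < p) :
    ol (ins l p) i = ol l i := by
  rw [ol_ins hp1 hp2, if_pos h]

lemma ol_ins_gt (hp1 : 1 ≤ p) (hp2 : p ≤ l.length + 1) {i : ℕ} (h : p < i) :
    ol (ins l p) i = ol l (i-1) := by
  rw [ol_ins hp1 hp2, if_neg (by omega), if_neg (by omega)]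

lemma linvEnd_ins_high (hp1 : 1 ≤ p) (hp2 : p ≤ l.length + 1)
    (hl : ∀ x ∈ l, x ≤ l.length) {j : ℕ} (hpj : p + 1 ≤ j) (hj : j ≤ l.length + 1) :
    linvEnd (ins l p) j = linvEnd l (j-1) + 1 := by
  classical
  unfold linvEnd
  set S := (Finset.Icc 1 (ins l p).length).filter
    (fun i => i < j ∧ ol (ins l p) j < ol (ins l p) i) with hS
  have hb : ∀ m, ol l m ≤ l.length := ol_le hl
  have hpmem : p ∈ S := by
    rw [hS, Finset.mem_filter, Finset.mem_Icc, length_ins hp2,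
      ol_ins_gt hp1 hp2 (by omega : p < j), ol_ins hp1 hp2,
      if_neg (by omega), if_pos rfl]
    have := hb (j-1)
    exact ⟨⟨by omega, by omega⟩, by omega, by omega⟩
  rw [← Finset.card_erase_add_one hpmem]
  congr 1
  apply Finset.card_nbij' (i := fun i => if i < p then i else i - 1)
    (j := fun i => if i < p then i else i + 1)
  · intro i hi
    simp only [Finset.mem_coe] at hi ⊢
    rw [Finset.mem_erase, hS, Finset.mem_filter, Finset.mem_Icc, length_ins hp2] at hi
    rcases hi with ⟨hne, ⟨hi1, hi2⟩, hij, hlt⟩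
    rw [ol_ins_gt hp1 hp2 (by omega : p < j)] at hlt
    rw [Finset.mem_filter, Finset.mem_Icc]
    by_cases hip : i < p
    · rw [ol_ins_lt hp1 hp2 hip] at hlt
      rw [if_pos hip]
      exact ⟨⟨by omega, by omega⟩, by omega, hlt⟩
    · rw [ol_ins_gt hp1 hp2 (by omega)] at hlt
      rw [if_neg hip]
      exact ⟨⟨by omega, by omega⟩, by omega, hlt⟩
  · intro i hi
    simp only [Finset.mem_coe] at hi ⊢
    rw [Finset.mem_filter, Finset.mem_Icc] at hi
    rcases hi with ⟨⟨hi1, hi2⟩, hij, hlt⟩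
    by_cases hip : i < p
    · rw [if_pos hip, Finset.mem_erase, hS, Finset.mem_filter, Finset.mem_Icc,
        length_ins hp2, ol_ins_gt hp1 hp2 (by omega : p < j), ol_ins_lt hp1 hp2 hip]
      exact ⟨by omega, ⟨by omega, by omega⟩, by omega, hlt⟩
    · rw [if_neg hip, Finset.mem_erase, hS, Finset.mem_filter, Finset.mem_Icc,
        length_ins hp2, ol_ins_gt hp1 hp2 (by omega : p < j),
        ol_ins_gt hp1 hp2 (by omega : p < i + 1)]
      have he : i + 1 - 1 = i := by omega
      rw [he]
      exact ⟨by omega, ⟨by omega, by omega⟩, by omega, hlt⟩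
  · intro i hi
    simp only [Finset.mem_coe] at hi ⊢
    rw [Finset.mem_erase] at hi
    by_cases hip : i < p
    · rw [if_pos hip, if_pos hip]
    · rw [if_neg hip, if_neg (by omega)]
      omega
  · intro i hi
    simp only [Finset.mem_coe] at hi ⊢
    rw [Finset.mem_filter, Finset.mem_Icc] at hi
    by_cases hip : i < p
    · rw [if_pos hip, if_pos hip]
    · rw [if_neg hip, if_neg (by omega)]
      omega

lemma linv_eq_sum2 (l : List ℕ) :
    linv l = ∑ j ∈ Finset.Icc 1 l.length, linvEnd l j := by
  rw [linv, Finset.card_eq_sum_card_fiberwise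
    (f := fun x : ℕ × ℕ => x.2) (t := Finset.Icc 1 l.length)
    (fun x hx => (Finset.mem_product.1 (Finset.mem_filter.1 hx).1).2)]
  refine Finset.sum_congr rfl fun j hj => ?_
  rw [linvEnd]
  apply Finset.card_nbij' (i := fun x => x.1) (j := fun i => (i, j))
  · intro x hx
    simp only [Finset.mem_coe, Finset.mem_filter, Finset.mem_product, Finset.mem_Icc] at hx ⊢
    obtain ⟨⟨⟨h1, h2⟩, h3⟩, h4⟩ := hx
    subst h4
    exact ⟨h1, h3⟩
  · intro i hi
    simp only [Finset.mem_coe, Finset.mem_filter, Finset.mem_product, Finset.mem_Icc] at hi ⊢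
    exact ⟨⟨⟨hi.1, Finset.mem_Icc.1 hj⟩, hi.2⟩, trivial⟩
  · intro x hx
    simp only [Finset.mem_coe, Finset.mem_filter] at hx
    rw [← hx.2]
  · intro i hi
    rfl

lemma linv_eq_sum' (l : List ℕ) :
    linv l = ∑ j ∈ Finset.Icc 1 l.length, linvEnd l j := linv_eq_sum2 l

lemma linv_ins (hp1 : 1 ≤ p) (hp2 : p ≤ l.length + 1)
    (hl : ∀ x ∈ l, x ≤ l.length) :
    linv (ins l p) = linv l + (l.length + 1 - p) := by
  rw [linv_eq_sum', linv_eq_sum', length_ins hp2]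
  have hsplit : Finset.Icc 1 (l.length + 1) =
      Finset.Icc 1 (p-1) ∪ Finset.Icc p (l.length + 1) := by
    ext x; simp only [Finset.mem_union, Finset.mem_Icc]; omega
  have hdisj : Disjoint (Finset.Icc 1 (p-1)) (Finset.Icc p (l.length + 1)) := by
    rw [Finset.disjoint_left]
    intro a ha hb
    rw [Finset.mem_Icc] at ha hb
    omega
  rw [hsplit, Finset.sum_union hdisj]
  have h1 : ∑ j ∈ Finset.Icc 1 (p-1), linvEnd (ins l p) j
      = ∑ j ∈ Finset.Icc 1 (p-1), linvEnd l j := by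
    refine Finset.sum_congr rfl fun j hj => ?_
    rw [Finset.mem_Icc] at hj
    exact linvEnd_ins_low hp1 hp2 hj.1 hj.2
  have hins : Finset.Icc p (l.length + 1) = insert p (Finset.Icc (p+1) (l.length+1)) := by
    ext x; simp only [Finset.mem_insert, Finset.mem_Icc]; omega
  have h2 : ∑ j ∈ Finset.Icc p (l.length + 1), linvEnd (ins l p) j
      = ∑ j ∈ Finset.Icc p l.length, linvEnd l j + (l.length + 1 - p) := by
    rw [hins, Finset.sum_insert (by rw [Finset.mem_Icc]; omega),
      linvEnd_ins_self hp1 hp2 hl]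
    have himg : Finset.Icc (p+1) (l.length+1) =
        Finset.image (· + 1) (Finset.Icc p l.length) := by
      rw [Finset.image_add_right_Icc]
    rw [himg, Finset.sum_image (by intro x _ y _ h; beta_reduce at h; omega)]
    have h3 : ∀ j ∈ Finset.Icc p l.length,
        linvEnd (ins l p) (j + 1) = linvEnd l j + 1 := by
      intro j hj
      rw [Finset.mem_Icc] at hj
      have := linvEnd_ins_high hp1 hp2 hl (j := j + 1) (by omega) (by omega)
      simpa using this
    rw [Finset.sum_congr rfl h3, Finset.sum_add_distrib, Finset.sum_const,
      Nat.card_Icc, smul_eq_mul, mul_one]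
    omega
  have h4 : ∑ j ∈ Finset.Icc 1 l.length, linvEnd l j
      = ∑ j ∈ Finset.Icc 1 (p-1), linvEnd l j + ∑ j ∈ Finset.Icc p l.length, linvEnd l j := by
    rw [← Finset.sum_union]
    · congr 1
      ext x; simp only [Finset.mem_union, Finset.mem_Icc]; omega
    · rw [Finset.disjoint_left]
      intro a ha hb
      rw [Finset.mem_Icc] at ha hb
      omega
  rw [h1, h2, h4]
  omega

end Insert


def Tup (p : ℕ) (T : Finset ℕ) : Finset ℕ :=
  (T.filter fun i => i + 1 ≤ p - 1) ∪ (T.filter fun i => p ≤ i).image (· + 1)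

def Tdown (p : ℕ) (T : Finset ℕ) : Finset ℕ :=
  (T.filter fun i => i + 1 ≤ p - 1) ∪ (T.filter fun i => p + 1 ≤ i).image (· - 1)

lemma mem_Tup {p : ℕ} {T : Finset ℕ} {j : ℕ} :
    j ∈ Tup p T ↔ (j + 1 ≤ p - 1 ∧ j ∈ T) ∨ (p + 1 ≤ j ∧ j - 1 ∈ T) := by
  simp only [Tup, Finset.mem_union, Finset.mem_filter, Finset.mem_image]
  constructor
  · rintro (⟨h1, h2⟩ | ⟨i, ⟨h1, h2⟩, rfl⟩)
    · exact Or.inl ⟨h2, h1⟩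
    · exact Or.inr ⟨by omega, by simpa using h1⟩
  · rintro (⟨h1, h2⟩ | ⟨h1, h2⟩)
    · exact Or.inl ⟨h2, h1⟩
    · exact Or.inr ⟨j - 1, ⟨h2, by omega⟩, by omega⟩

lemma mem_Tdown {p : ℕ} {T : Finset ℕ} {j : ℕ} :
    j ∈ Tdown p T ↔ (j + 1 ≤ p - 1 ∧ j ∈ T) ∨ (p ≤ j ∧ j + 1 ∈ T) := by
  simp only [Tdown, Finset.mem_union, Finset.mem_filter, Finset.mem_image]
  constructor
  · rintro (⟨h1, h2⟩ | ⟨i, ⟨h1, h2⟩, rfl⟩)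
    · exact Or.inl ⟨h2, h1⟩
    · refine Or.inr ⟨by omega, ?_⟩
      have : i - 1 + 1 = i := by omega
      rwa [this]
  · rintro (⟨h1, h2⟩ | ⟨h1, h2⟩)
    · exact Or.inl ⟨h2, h1⟩
    · exact Or.inr ⟨j + 1, ⟨h2, by omega⟩, by omega⟩

lemma not_mem_Tup_pred {p : ℕ} (hp1 : 1 ≤ p) (T : Finset ℕ) : p - 1 ∉ Tup p T := by
  rw [mem_Tup]
  rintro (⟨h, _⟩ | ⟨h, _⟩) <;> omega

lemma not_mem_Tup_self {p : ℕ} (hp1 : 1 ≤ p) (T : Finset ℕ) : p ∉ Tup p T := by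
  rw [mem_Tup]
  rintro (⟨h, _⟩ | ⟨h, _⟩) <;> omega

lemma not_mem_Tdown_pred {p : ℕ} (hp1 : 1 ≤ p) (T : Finset ℕ) : p - 1 ∉ Tdown p T := by
  rw [mem_Tdown]
  rintro (⟨h, _⟩ | ⟨h, _⟩) <;> omega

lemma filter_not_low {p : ℕ} {T : Finset ℕ} (hpT : p - 1 ∉ T) :
    T.filter (fun i => ¬ (i + 1 ≤ p - 1)) = T.filter (fun i => p ≤ i) := by
  ext i
  simp only [Finset.mem_filter]
  constructor
  · rintro ⟨h1, h2⟩
    refine ⟨h1, ?_⟩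
    rcases Nat.lt_or_ge i p with h | h
    · exfalso
      have : i = p - 1 := by omega
      exact hpT (this ▸ h1)
    · exact h
  · rintro ⟨h1, h2⟩
    exact ⟨h1, by omega⟩

lemma Tup_disj {p : ℕ} {T : Finset ℕ} :
    Disjoint (T.filter fun i => i + 1 ≤ p - 1) ((T.filter fun i => p ≤ i).image (· + 1)) := by
  rw [Finset.disjoint_left]
  intro a ha hb
  rw [Finset.mem_filter] at ha
  rw [Finset.mem_image] at hb
  obtain ⟨i, hi, rfl⟩ := hb
  rw [Finset.mem_filter] at hi
  omega

lemma card_Tup {p : ℕ} {T : Finset ℕ} (hpT : p - 1 ∉ T) :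
    (Tup p T).card = T.card := by
  rw [Tup, Finset.card_union_of_disjoint Tup_disj,
    Finset.card_image_of_injective _ (fun a b h => by omega)]
  have := Finset.card_filter_add_card_filter_not
    (s := T) (p := fun i => i + 1 ≤ p - 1)
  rw [filter_not_low hpT] at this
  omega

lemma Tdown_Tup {p : ℕ} {T : Finset ℕ} (hp1 : 1 ≤ p) (hpT : p - 1 ∉ T) :
    Tdown p (Tup p T) = T := by
  ext j
  rw [mem_Tdown, mem_Tup, mem_Tup]
  constructor
  · rintro (⟨h1, (⟨h2, hT⟩ | ⟨h2, hT⟩)⟩ | ⟨h1, (⟨h2, hT⟩ | ⟨h2, hT⟩)⟩)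
    · exact hT
    · omega
    · omega
    · have : j + 1 - 1 = j := by omega
      rwa [this] at hT
  · intro hT
    by_cases h1 : j + 1 ≤ p - 1
    · exact Or.inl ⟨h1, Or.inl ⟨h1, hT⟩⟩
    · have hj : p ≤ j := by
        rcases Nat.lt_or_ge j p with h | h
        · exfalso
          have : j = p - 1 := by omega
          exact hpT (this ▸ hT)
        · exact h
      refine Or.inr ⟨hj, Or.inr ⟨by omega, ?_⟩⟩
      have : j + 1 - 1 = j := by omega
      rwa [this]

lemma Tup_Tdown {p : ℕ} {T : Finset ℕ} (hp1 : 1 ≤ p)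
    (h1 : p - 1 ∉ T) (h2 : p ∉ T) :
    Tup p (Tdown p T) = T := by
  ext j
  rw [mem_Tup, mem_Tdown, mem_Tdown]
  constructor
  · rintro (⟨ha, (⟨hb, hT⟩ | ⟨hb, hT⟩)⟩ | ⟨ha, (⟨hb, hT⟩ | ⟨hb, hT⟩)⟩)
    · exact hT
    · omega
    · omega
    · have : j - 1 + 1 = j := by omega
      rwa [this] at hT
  · intro hT
    by_cases hb : j + 1 ≤ p - 1
    · exact Or.inl ⟨hb, Or.inl ⟨hb, hT⟩⟩
    · have hj : p + 1 ≤ j := by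
        rcases Nat.lt_or_ge j p with h | h
        · exfalso
          have : j = p - 1 := by omega
          exact h1 (this ▸ hT)
        · rcases Nat.eq_or_lt_of_le h with h' | h'
          · exfalso; apply h2; rwa [h']
          · omega
      refine Or.inr ⟨hj, Or.inr ⟨by omega, ?_⟩⟩
      have : j - 1 + 1 = j := by omega
      rwa [this]


lemma lAsc_subset (l : List ℕ) : lAsc l ⊆ Finset.Icc 1 (l.length - 1) :=
  Finset.filter_subset _ _

lemma sum_linvEnd_le (l : List ℕ) {T : Finset ℕ} (hT : T ⊆ Finset.Icc 1 (l.length - 1)) :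
    ∑ i ∈ T, linvEnd l (i+1) ≤ linv l := by
  rw [linv_eq_sum']
  have h : ∑ i ∈ T, linvEnd l (i+1) = ∑ j ∈ T.image (· + 1), linvEnd l j := by
    rw [Finset.sum_image (by intro x _ y _ h; beta_reduce at h; omega)]
  rw [h]
  apply Finset.sum_le_sum_of_subset
  intro j hj
  rw [Finset.mem_image] at hj
  obtain ⟨i, hi, rfl⟩ := hj
  have := Finset.mem_Icc.1 (hT hi)
  rw [Finset.mem_Icc]
  omega

section Insert2

variable {l : List ℕ} {p : ℕ} {T : Finset ℕ}

lemma Tup_subset (hp1 : 1 ≤ p) (hp2 : p ≤ l.length + 1) (hl : ∀ x ∈ l, x ≤ l.length)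
    (hT : T ⊆ lAsc l) : Tup p T ⊆ lAsc (ins l p) := by
  intro j hj
  rw [mem_Tup] at hj
  rw [mem_lAsc_ins hp1 hp2 hl]
  rcases hj with ⟨h1, hT'⟩ | ⟨h1, hT'⟩
  · exact Or.inr (Or.inl ⟨h1, hT hT'⟩)
  · exact Or.inr (Or.inr ⟨h1, hT hT'⟩)

lemma Tdown_subset (hp1 : 1 ≤ p) (hp2 : p ≤ l.length + 1) (hl : ∀ x ∈ l, x ≤ l.length)
    (hT : T ⊆ lAsc (ins l p)) : Tdown p T ⊆ lAsc l := by
  intro j hj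
  rw [mem_Tdown] at hj
  rcases hj with ⟨h1, hT'⟩ | ⟨h1, hT'⟩
  · rcases (mem_lAsc_ins hp1 hp2 hl j).1 (hT hT') with ⟨h2, h3⟩ | ⟨h2, h3⟩ | ⟨h2, h3⟩
    · omega
    · exact h3
    · omega
  · rcases (mem_lAsc_ins hp1 hp2 hl (j+1)).1 (hT hT') with ⟨h2, h3⟩ | ⟨h2, h3⟩ | ⟨h2, h3⟩
    · omega
    · omega
    · have e : j + 1 - 1 = j := by omega
      rwa [e] at h3

lemma not_mem_lAsc_ins_self (hp1 : 1 ≤ p) (hp2 : p ≤ l.length + 1)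
    (hl : ∀ x ∈ l, x ≤ l.length) : p ∉ lAsc (ins l p) := by
  rw [mem_lAsc_ins hp1 hp2 hl]
  rintro (⟨a, b⟩ | ⟨a, b⟩ | ⟨a, b⟩) <;> omega

lemma sum_linvEnd_Tup (hp1 : 1 ≤ p) (hp2 : p ≤ l.length + 1)
    (hl : ∀ x ∈ l, x ≤ l.length) (hT : T ⊆ lAsc l) (hpT : p - 1 ∉ T) :
    ∑ i ∈ Tup p T, linvEnd (ins l p) (i+1)
      = ∑ i ∈ T, linvEnd l (i+1) + (T.filter fun i => p ≤ i).card := by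
  rw [Tup, Finset.sum_union Tup_disj, Finset.sum_image (by intro x _ y _ h; beta_reduce at h; omega)]
  have h1 : ∀ i ∈ T.filter (fun i => i + 1 ≤ p - 1),
      linvEnd (ins l p) (i+1) = linvEnd l (i+1) := by
    intro i hi
    rw [Finset.mem_filter] at hi
    exact linvEnd_ins_low hp1 hp2 (by omega) hi.2
  have h2 : ∀ i ∈ T.filter (fun i => p ≤ i),
      linvEnd (ins l p) (i + 1 + 1) = linvEnd l (i+1) + 1 := by
    intro i hi
    rw [Finset.mem_filter] at hi
    have hb := mem_lAsc_bounds (hT hi.1)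
    have := linvEnd_ins_high hp1 hp2 hl (j := i + 1 + 1) (by omega) (by omega)
    simpa using this
  rw [Finset.sum_congr rfl h1, Finset.sum_congr rfl h2, Finset.sum_add_distrib,
    Finset.sum_const, smul_eq_mul, mul_one]
  have h4 := Finset.sum_filter_add_sum_filter_not T (fun i => i + 1 ≤ p - 1)
    (fun i => linvEnd l (i+1))
  rw [filter_not_low hpT] at h4
  omega

lemma card_filter_le (hT : T ⊆ lAsc l) :
    (T.filter fun i => p ≤ i).card ≤ l.length + 1 - p := by
  have hsub : T.filter (fun i => p ≤ i) ⊆ Finset.Icc p (l.length - 1) := by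
    intro j hj
    rw [Finset.mem_filter] at hj
    have := mem_lAsc_bounds (hT hj.1)
    rw [Finset.mem_Icc]
    omega
  have := Finset.card_le_card hsub
  rw [Nat.card_Icc] at this
  omega

lemma lstat_Tup (hp1 : 1 ≤ p) (hp2 : p ≤ l.length + 1)
    (hl : ∀ x ∈ l, x ≤ l.length) (hT : T ⊆ lAsc l) (hpT : p - 1 ∉ T) :
    lstat (ins l p) (Tup p T)
      = lstat l T + ((l.length + 1 - p) - (T.filter fun i => p ≤ i).card) := by
  have hS := sum_linvEnd_le l (hT.trans (lAsc_subset l))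
  have hc := card_filter_le (p := p) hT
  unfold lstat
  rw [linv_ins hp1 hp2 hl, sum_linvEnd_Tup hp1 hp2 hl hT hpT]
  omega

lemma lstat_TupA (hp1 : 1 ≤ p) (hp2 : p ≤ l.length + 1)
    (hl : ∀ x ∈ l, x ≤ l.length) (hT : T ⊆ lAsc l) (hpT : p - 1 ∉ T) :
    lstat (ins l p) (insert (p-1) (Tup p T))
      = lstat l T + ((l.length + 1 - p) - (T.filter fun i => p ≤ i).card) := by
  have hS := sum_linvEnd_le l (hT.trans (lAsc_subset l))
  have hc := card_filter_le (p := p) hT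
  unfold lstat
  rw [Finset.sum_insert (not_mem_Tup_pred hp1 T)]
  have e : p - 1 + 1 = p := by omega
  rw [e, linvEnd_ins_self hp1 hp2 hl, linv_ins hp1 hp2 hl,
    sum_linvEnd_Tup hp1 hp2 hl hT hpT]
  omega

end Insert2


lemma mem_starSets {D T : Finset ℕ} {k : ℕ} :
    T ∈ starSets D k ↔ T ⊆ D ∧ T.card = k := by
  rw [starSets, Finset.mem_filter, Finset.mem_powerset]

section Insert3

variable {R : Type*} [CommRing R] {l : List ℕ} {p : ℕ}

lemma Tdown_insert (p : ℕ) (S : Finset ℕ) (hp1 : 1 ≤ p) :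
    Tdown p (insert (p-1) S) = Tdown p S := by
  unfold Tdown
  rw [Finset.filter_insert, Finset.filter_insert, if_neg (by omega), if_neg (by omega)]

lemma card_Tdown {T : Finset ℕ} (hp1 : 1 ≤ p) (h1 : p - 1 ∉ T) (h2 : p ∉ T) :
    (Tdown p T).card = T.card := by
  conv_rhs => rw [← Tup_Tdown hp1 h1 h2]
  rw [card_Tup (not_mem_Tdown_pred hp1 T)]

lemma sumB (q : R) (hp1 : 1 ≤ p) (hp2 : p ≤ l.length + 1)
    (hl : ∀ x ∈ l, x ≤ l.length) (k : ℕ) :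
    ∑ T ∈ (starSets (lAsc l) k).filter (fun T => p - 1 ∉ T),
        q ^ (lstat l T + ((l.length + 1 - p) - (T.filter fun i => p ≤ i).card))
      = ∑ T' ∈ (starSets (lAsc (ins l p)) k).filter (fun T' => p - 1 ∉ T'),
          q ^ lstat (ins l p) T' := by
  apply Finset.sum_nbij' (i := Tup p) (j := Tdown p)
  · intro T hT
    rw [Finset.mem_filter, mem_starSets] at hT ⊢
    obtain ⟨⟨hsub, hcard⟩, hmem⟩ := hT
    exact ⟨⟨Tup_subset hp1 hp2 hl hsub, by rw [card_Tup hmem]; exact hcard⟩,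
      not_mem_Tup_pred hp1 T⟩
  · intro T' hT'
    rw [Finset.mem_filter, mem_starSets] at hT' ⊢
    obtain ⟨⟨hsub, hcard⟩, hmem⟩ := hT'
    have hp' : p ∉ T' := fun h => not_mem_lAsc_ins_self hp1 hp2 hl (hsub h)
    exact ⟨⟨Tdown_subset hp1 hp2 hl hsub, by rw [card_Tdown hp1 hmem hp']; exact hcard⟩,
      not_mem_Tdown_pred hp1 T'⟩
  · intro T hT
    rw [Finset.mem_filter] at hT
    exact Tdown_Tup hp1 hT.2
  · intro T' hT'
    rw [Finset.mem_filter, mem_starSets] at hT'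
    obtain ⟨⟨hsub, hcard⟩, hmem⟩ := hT'
    have hp' : p ∉ T' := fun h => not_mem_lAsc_ins_self hp1 hp2 hl (hsub h)
    exact Tup_Tdown hp1 hmem hp'
  · intro T hT
    rw [Finset.mem_filter, mem_starSets] at hT
    obtain ⟨⟨hsub, hcard⟩, hmem⟩ := hT
    rw [lstat_Tup hp1 hp2 hl hsub hmem]

lemma sumA (q : R) (hp : 2 ≤ p) (hp2 : p ≤ l.length + 1)
    (hl : ∀ x ∈ l, x ≤ l.length) (k : ℕ) :
    ∑ T ∈ (starSets (lAsc l) k).filter (fun T => p - 1 ∉ T),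
        q ^ (lstat l T + ((l.length + 1 - p) - (T.filter fun i => p ≤ i).card))
      = ∑ T' ∈ (starSets (lAsc (ins l p)) (k+1)).filter (fun T' => p - 1 ∈ T'),
          q ^ lstat (ins l p) T' := by
  have hp1 : 1 ≤ p := by omega
  apply Finset.sum_nbij' (i := fun T => insert (p-1) (Tup p T)) (j := Tdown p)
  · intro T hT
    rw [Finset.mem_filter, mem_starSets] at hT ⊢
    obtain ⟨⟨hsub, hcard⟩, hmem⟩ := hT
    refine ⟨⟨?_, ?_⟩, Finset.mem_insert_self _ _⟩
    · intro a ha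
      rcases Finset.mem_insert.1 ha with rfl | ha'
      · rw [mem_lAsc_ins hp1 hp2 hl]
        exact Or.inl ⟨hp, rfl⟩
      · exact Tup_subset hp1 hp2 hl hsub ha'
    · rw [Finset.card_insert_of_notMem (not_mem_Tup_pred hp1 T), card_Tup hmem, hcard]
  · intro T' hT'
    rw [Finset.mem_filter, mem_starSets] at hT' ⊢
    obtain ⟨⟨hsub, hcard⟩, hmem⟩ := hT'
    have hp' : p ∉ T' := fun h => not_mem_lAsc_ins_self hp1 hp2 hl (hsub h)
    have herase : Tdown p T' = Tdown p (T'.erase (p-1)) := by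
      conv_lhs => rw [← Finset.insert_erase hmem]
      rw [Tdown_insert p _ hp1]
    refine ⟨⟨Tdown_subset hp1 hp2 hl hsub, ?_⟩, not_mem_Tdown_pred hp1 T'⟩
    rw [herase, card_Tdown hp1 (Finset.notMem_erase _ _)
      (fun h => hp' (Finset.mem_of_mem_erase h))]
    rw [Finset.card_erase_of_mem hmem, hcard]
    omega
  · intro T hT
    rw [Finset.mem_filter] at hT
    rw [Tdown_insert p _ hp1, Tdown_Tup hp1 hT.2]

  · intro T' hT'
    rw [Finset.mem_filter, mem_starSets] at hT'
    obtain ⟨⟨hsub, hcard⟩, hmem⟩ := hT'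
    have hp' : p ∉ T' := fun h => not_mem_lAsc_ins_self hp1 hp2 hl (hsub h)
    have herase : Tdown p T' = Tdown p (T'.erase (p-1)) := by
      conv_lhs => rw [← Finset.insert_erase hmem]
      rw [Tdown_insert p _ hp1]
    rw [herase, Tup_Tdown hp1 (Finset.notMem_erase _ _)
      (fun h => hp' (Finset.mem_of_mem_erase h)), Finset.insert_erase hmem]
  · intro T hT
    rw [Finset.mem_filter, mem_starSets] at hT
    obtain ⟨⟨hsub, hcard⟩, hmem⟩ := hT
    rw [lstat_TupA hp1 hp2 hl hsub hmem]

lemma sumA1 (q : R) (hp2 : (1:ℕ) ≤ l.length + 1) (k : ℕ) :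
    ∑ T' ∈ (starSets (lAsc (ins l 1)) k).filter (fun T' => (1:ℕ) - 1 ∈ T'),
        q ^ lstat (ins l 1) T' = 0 := by
  have hempty : (starSets (lAsc (ins l 1)) k).filter (fun T' => (1:ℕ) - 1 ∈ T') = ∅ := by
    rw [Finset.filter_eq_empty_iff]
    intro T' hT'
    rw [mem_starSets] at hT'
    intro hmem
    exact not_mem_lAsc_zero _ (hT'.1 (by simpa using hmem))
  rw [hempty, Finset.sum_empty]

end Insert3


lemma insertIdx_perm (v : ℕ) : ∀ (j : ℕ) (l : List ℕ), j ≤ l.length →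
    (l.insertIdx j v).Perm (v :: l)
  | 0, l, _ => by simp [List.insertIdx_zero]
  | j+1, [], h => by simp at h
  | j+1, a :: t, h => by
      rw [List.insertIdx_succ_cons]
      exact ((insertIdx_perm v j t (by simpa using h)).cons a).trans (List.Perm.swap v a t)

lemma insertIdx_erase (v : ℕ) : ∀ (j : ℕ) (l : List ℕ), v ∉ l → j ≤ l.length →
    (l.insertIdx j v).erase v = l
  | 0, l, hv, _ => by simp [List.insertIdx_zero]
  | j+1, [], hv, h => by simp at h
  | j+1, a :: t, hv, h => by
      rw [List.insertIdx_succ_cons, List.erase_cons_tail, insertIdx_erase v j t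
        (fun hm => hv (List.mem_cons_of_mem a hm)) (by simpa using h)]
      simp only [beq_iff_eq]
      intro hav
      exact hv (hav ▸ List.mem_cons_self (a := a) (l := t))

lemma indexOf_insertIdx (v : ℕ) : ∀ (j : ℕ) (l : List ℕ), v ∉ l → j ≤ l.length →
    (l.insertIdx j v).idxOf v = j
  | 0, l, hv, _ => by simp [List.insertIdx_zero]
  | j+1, [], hv, h => by simp at h
  | j+1, a :: t, hv, h => by
      rw [List.insertIdx_succ_cons, List.idxOf_cons_ne, indexOf_insertIdx v j t
        (fun hm => hv (List.mem_cons_of_mem a hm)) (by simpa using h)]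
      intro hav
      exact hv (hav ▸ List.mem_cons_self (a := a) (l := t))

lemma insertIdx_indexOf_erase (a : ℕ) : ∀ (l : List ℕ), a ∈ l →
    (l.erase a).insertIdx (l.idxOf a) a = l
  | [], h => by simp at h
  | b :: t, h => by
      by_cases hab : b = a
      · subst hab
        rw [List.erase_cons_head, List.idxOf_cons_self, List.insertIdx_zero]
      · rw [List.erase_cons_tail (by simpa using hab), List.idxOf_cons_ne _ (by
          intro hh; exact hab hh)]
        rw [List.insertIdx_succ_cons, insertIdx_indexOf_erase a t (by
          rcases List.mem_cons.1 h with h' | h'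
          · exact absurd h'.symm hab
          · exact h')]


section WordsOps

variable {R : Type*} [CommRing R]

lemma Words_entries {n : ℕ} {l : List ℕ} (h : l ∈ Words n) : ∀ x ∈ l, x ≤ l.length := by
  intro x hx
  rw [Words_length h]
  exact ((Words_mem_iff h).1 hx).2

lemma Words_succ_not_mem {n : ℕ} {l : List ℕ} (h : l ∈ Words n) : n + 1 ∉ l := by
  intro hx
  have := (Words_mem_iff h).1 hx
  omega

lemma range'_erase_last (n : ℕ) : (List.range' 1 (n+1)).erase (n+1) = List.range' 1 n := by
  rw [List.range'_concat]
  have h1 : (1:ℕ) + 1 * n = n + 1 := by omega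
  rw [h1, List.erase_append_right _ (by
    intro hm
    rw [List.mem_range'_1] at hm
    omega)]
  simp

lemma erase_mem_Words {n : ℕ} {l' : List ℕ} (h : l' ∈ Words (n+1)) :
    l'.erase (n+1) ∈ Words n := by
  rw [mem_Words]
  have := (mem_Words.1 h).erase (n+1)
  rwa [range'_erase_last] at this

lemma ins_mem_Words {n : ℕ} {l : List ℕ} {p : ℕ} (h : l ∈ Words n)
    (hp1 : 1 ≤ p) (hp2 : p ≤ n + 1) : ins l p ∈ Words (n+1) := by
  rw [mem_Words]
  have hlen := Words_length h
  have h1 : (ins l p).Perm ((l.length + 1) :: l) :=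
    insertIdx_perm _ (p-1) l (by omega)
  have h2 : ((l.length + 1) :: l).Perm ((l.length + 1) :: List.range' 1 n) :=
    (mem_Words.1 h).cons _
  have h3 : ((l.length + 1) :: List.range' 1 n).Perm (List.range' 1 (n+1)) := by
    rw [List.range'_concat, hlen]
    have e : (1:ℕ) + 1 * n = n + 1 := by omega
    rw [e]
    exact (List.perm_append_singleton _ _).symm
  exact (h1.trans h2).trans h3

lemma sum_Words_succ (n : ℕ) (g : List ℕ → R) :
    ∑ l' ∈ Words (n+1), g l'
      = ∑ x ∈ (Words n) ×ˢ Finset.Icc 1 (n+1), g (ins x.1 x.2) := by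
  apply Finset.sum_nbij' (i := fun l' => (l'.erase (n+1), l'.idxOf (n+1) + 1))
    (j := fun x => ins x.1 x.2)
  · intro l' hl'
    rw [Finset.mem_product]
    have hmem : n + 1 ∈ l' := (Words_mem_iff hl').2 ⟨by omega, by omega⟩
    have hlt : l'.idxOf (n+1) < l'.length := List.idxOf_lt_length_iff.2 hmem
    rw [Words_length hl'] at hlt
    exact ⟨erase_mem_Words hl', Finset.mem_Icc.2 ⟨by omega, by omega⟩⟩
  · intro x hx
    rw [Finset.mem_product, Finset.mem_Icc] at hx
    exact ins_mem_Words hx.1 hx.2.1 hx.2.2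
  · intro l' hl'
    have hmem : n + 1 ∈ l' := (Words_mem_iff hl').2 ⟨by omega, by omega⟩
    have hlen : (l'.erase (n+1)).length = n := Words_length (erase_mem_Words hl')
    show ins (l'.erase (n+1)) (l'.idxOf (n+1) + 1) = l'
    rw [ins, hlen, Nat.add_sub_cancel]
    exact insertIdx_indexOf_erase (n+1) l' hmem
  · intro x hx
    rw [Finset.mem_product, Finset.mem_Icc] at hx
    obtain ⟨hW, hp1, hp2⟩ := hx
    have hlen := Words_length hW
    have hnm : x.1.length + 1 ∉ x.1 := by
      rw [hlen]
      exact Words_succ_not_mem hW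
    have e1 : (ins x.1 x.2).erase (n+1) = x.1 := by
      rw [ins, ← hlen]
      exact insertIdx_erase _ _ _ hnm (by omega)
    have e2 : (ins x.1 x.2).idxOf (n+1) + 1 = x.2 := by
      rw [ins, ← hlen, indexOf_insertIdx _ _ _ hnm (by omega)]
      omega
    exact Prod.ext e1 e2
  · intro l' hl'
    have hmem : n + 1 ∈ l' := (Words_mem_iff hl').2 ⟨by omega, by omega⟩
    have hlen : (l'.erase (n+1)).length = n := Words_length (erase_mem_Words hl')
    have : ins (l'.erase (n+1)) (l'.idxOf (n+1) + 1) = l' := by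
      rw [ins, hlen, Nat.add_sub_cancel]
      exact insertIdx_indexOf_erase (n+1) l' hmem
    rw [this]

end WordsOps






variable {R : Type*} [CommRing R]

lemma exp_eq {n p : ℕ} (T : Finset ℕ) (hT : T ⊆ Finset.Icc 1 (n-1)) (hp : 1 ≤ p) :
    (n + 1 - p) - (T.filter fun i => p ≤ i).card = ((Finset.Icc p n) \ T).card := by
  have h1 : Finset.Icc p n ∩ T = T.filter (fun i => p ≤ i) := by
    ext j
    simp only [Finset.mem_inter, Finset.mem_Icc, Finset.mem_filter]
    constructor
    · rintro ⟨⟨a, b⟩, c⟩; exact ⟨c, a⟩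
    · rintro ⟨a, b⟩
      have := Finset.mem_Icc.1 (hT a)
      exact ⟨⟨b, by omega⟩, a⟩
  have h2 := Finset.card_sdiff_add_card_inter (Finset.Icc p n) T
  rw [h1, Nat.card_Icc] at h2
  omega

lemma allowed_eq {n : ℕ} (T : Finset ℕ) (hT : T ⊆ Finset.Icc 1 (n-1)) :
    (Finset.Icc 1 (n+1)).filter (fun p => p - 1 ∉ T)
      = Finset.Icc 1 (n+1) \ T.image (· + 1) := by
  ext a
  simp only [Finset.mem_filter, Finset.mem_sdiff, Finset.mem_image, Finset.mem_Icc]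
  constructor
  · rintro ⟨h1, h2⟩
    refine ⟨h1, ?_⟩
    rintro ⟨t, ht, rfl⟩
    exact h2 (by simpa using ht)
  · rintro ⟨h1, h2⟩
    refine ⟨h1, fun hmem => h2 ⟨a - 1, hmem, by omega⟩⟩

lemma allowed_card {n : ℕ} (T : Finset ℕ) (hT : T ⊆ Finset.Icc 1 (n-1)) :
    ((Finset.Icc 1 (n+1)).filter (fun p => p - 1 ∉ T)).card = n + 1 - T.card := by
  rw [allowed_eq T hT, Finset.card_sdiff_of_subset]
  · rw [Finset.card_image_of_injective _ (fun a b h => by omega), Nat.card_Icc]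
    omega
  · intro a ha
    rw [Finset.mem_image] at ha
    obtain ⟨t, ht, rfl⟩ := ha
    have := Finset.mem_Icc.1 (hT ht)
    rw [Finset.mem_Icc]
    omega

lemma sum_qpow (q : R) (n : ℕ) (T : Finset ℕ) (hT : T ⊆ Finset.Icc 1 (n-1)) :
    ∑ p ∈ (Finset.Icc 1 (n+1)).filter (fun p => p - 1 ∉ T),
        q ^ ((n + 1 - p) - (T.filter fun i => p ≤ i).card)
      = qnum q (n + 1 - T.card) := by
  classical
  set A := (Finset.Icc 1 (n+1)).filter (fun p => p - 1 ∉ T) with hA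
  have hTcard : T.card ≤ n - 1 := by
    have := Finset.card_le_card hT
    rwa [Nat.card_Icc, Nat.add_sub_cancel] at this
  have hmemA : ∀ p ∈ A, 1 ≤ p ∧ p ≤ n + 1 ∧ p - 1 ∉ T := by
    intro p hp
    rw [hA, Finset.mem_filter, Finset.mem_Icc] at hp
    exact ⟨hp.1.1, hp.1.2, hp.2⟩
  set g : ℕ → ℕ := fun p => ((Finset.Icc p n) \ T).card with hg
  have hmono : ∀ p ∈ A, ∀ p' ∈ A, p < p' → g p' < g p := by
    intro p hp p' hp' hlt
    obtain ⟨h1, h2, h3⟩ := hmemA p hp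
    obtain ⟨h1', h2', h3'⟩ := hmemA p' hp'
    apply Finset.card_lt_card
    rw [Finset.ssubset_iff_of_subset
      (Finset.sdiff_subset_sdiff (Finset.Icc_subset_Icc (by omega) le_rfl) le_rfl)]
    refine ⟨p' - 1, ?_, ?_⟩
    · rw [Finset.mem_sdiff, Finset.mem_Icc]
      exact ⟨⟨by omega, by omega⟩, h3'⟩
    · rw [Finset.mem_sdiff, Finset.mem_Icc]
      rintro ⟨⟨a, b⟩, c⟩
      omega
  have hinj : ∀ p ∈ A, ∀ p' ∈ A, g p = g p' → p = p' := by
    intro p hp p' hp' heq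
    rcases Nat.lt_trichotomy p p' with h | h | h
    · exact absurd heq (by have := hmono p hp p' hp' h; omega)
    · exact h
    · exact absurd heq (by have := hmono p' hp' p hp h; omega)
  have hbound : ∀ p ∈ A, g p < n + 1 - T.card := by
    intro p hp
    obtain ⟨h1, h2, h3⟩ := hmemA p hp
    have hsub2 : Finset.Icc p n \ T ⊆ Finset.Icc 1 n \ T :=
      Finset.sdiff_subset_sdiff (Finset.Icc_subset_Icc (by omega) le_rfl) le_rfl
    have := Finset.card_le_card hsub2
    have hTn : T ⊆ Finset.Icc 1 n := by
      intro t ht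
      have := Finset.mem_Icc.1 (hT ht)
      rw [Finset.mem_Icc]
      omega
    have h4 : (Finset.Icc 1 n \ T).card = n - T.card := by
      rw [Finset.card_sdiff_of_subset hTn, Nat.card_Icc]
      omega
    show (Finset.Icc p n \ T).card < n + 1 - T.card
    omega
  have himg : A.image g = Finset.range (n + 1 - T.card) := by
    apply Finset.eq_of_subset_of_card_le
    · intro e he
      rw [Finset.mem_image] at he
      obtain ⟨p, hp, rfl⟩ := he
      rw [Finset.mem_range]
      exact hbound p hp
    · rw [Finset.card_range,
        Finset.card_image_of_injOn
          (fun p hp p' hp' h => hinj p (Finset.mem_coe.1 hp) p' (Finset.mem_coe.1 hp') h),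
        hA, allowed_card T hT]
  have hsum : ∑ p ∈ A, q ^ ((n + 1 - p) - (T.filter fun i => p ≤ i).card)
      = ∑ p ∈ A, q ^ g p := by
    refine Finset.sum_congr rfl fun p hp => ?_
    rw [exp_eq T hT (hmemA p hp).1]
  rw [hsum, ← Finset.sum_image hinj, himg, qnum]

lemma sum_qpow' (q : R) (n : ℕ) (T : Finset ℕ) (hT : T ⊆ Finset.Icc 1 (n-1)) :
    ∑ p ∈ (Finset.Icc 2 (n+1)).filter (fun p => p - 1 ∉ T),
        q ^ ((n + 1 - p) - (T.filter fun i => p ≤ i).card)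
      = qnum q (n - T.card) := by
  classical
  have hTcard : T.card ≤ n - 1 := by
    have := Finset.card_le_card hT
    rwa [Nat.card_Icc, Nat.add_sub_cancel] at this
  have h0 : (0:ℕ) ∉ T := fun h => by have := Finset.mem_Icc.1 (hT h); omega
  have hins : (Finset.Icc 1 (n+1)).filter (fun p => p - 1 ∉ T)
      = insert 1 ((Finset.Icc 2 (n+1)).filter (fun p => p - 1 ∉ T)) := by
    ext a
    simp only [Finset.mem_insert, Finset.mem_filter, Finset.mem_Icc]
    constructor
    · rintro ⟨⟨h1, h2⟩, h3⟩
      rcases Nat.eq_or_lt_of_le h1 with h | h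
      · exact Or.inl h.symm
      · exact Or.inr ⟨⟨by omega, h2⟩, h3⟩
    · rintro (rfl | ⟨⟨h1, h2⟩, h3⟩)
      · exact ⟨⟨le_rfl, by omega⟩, by simpa using h0⟩
      · exact ⟨⟨by omega, h2⟩, h3⟩
  have hnotmem : (1:ℕ) ∉ (Finset.Icc 2 (n+1)).filter (fun p => p - 1 ∉ T) := by
    simp [Finset.mem_filter, Finset.mem_Icc]
  have key := sum_qpow q n T hT
  rw [hins, Finset.sum_insert hnotmem] at key
  have hfilt : T.filter (fun i => 1 ≤ i) = T := by
    apply Finset.filter_true_of_mem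
    intro t ht
    have := Finset.mem_Icc.1 (hT ht)
    omega
  rw [hfilt] at key
  have he : n + 1 - 1 - T.card = n - T.card := by omega
  rw [he] at key
  have he2 : n + 1 - T.card = (n - T.card) + 1 := by omega
  rw [he2, qnum, Finset.sum_range_succ, ← qnum] at key
  have := add_left_cancel (a := q ^ (n - T.card))
    (b := ∑ p ∈ (Finset.Icc 2 (n+1)).filter (fun p => p - 1 ∉ T),
        q ^ ((n + 1 - p) - (T.filter fun i => p ≤ i).card))
    (c := qnum q (n - T.card))
  apply this
  rw [key]
  ring


section Assembly

variable {R : Type*} [CommRing R]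

lemma exchange (q : R) (l : List ℕ) (k : ℕ) (P : Finset ℕ) :
    ∑ p ∈ P, ∑ T ∈ (starSets (lAsc l) k).filter (fun T => p - 1 ∉ T),
        q ^ (lstat l T + ((l.length + 1 - p) - (T.filter fun i => p ≤ i).card))
      = ∑ T ∈ starSets (lAsc l) k, q ^ lstat l T *
          ∑ p ∈ P.filter (fun p => p - 1 ∉ T),
            q ^ ((l.length + 1 - p) - (T.filter fun i => p ≤ i).card) := by
  simp only [Finset.sum_filter]
  rw [Finset.sum_comm]
  refine Finset.sum_congr rfl fun T _ => ?_
  rw [Finset.mul_sum]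
  refine Finset.sum_congr rfl fun p _ => ?_
  by_cases h : p - 1 ∉ T
  · rw [if_pos h, if_pos h, pow_add]
  · rw [if_neg h, if_neg h, mul_zero]

lemma inner_decomp_succ (q : R) {l : List ℕ} {p : ℕ} (hp1 : 1 ≤ p)
    (hp2 : p ≤ l.length + 1) (hl : ∀ x ∈ l, x ≤ l.length) (k : ℕ) :
    ∑ T' ∈ starSets (lAsc (ins l p)) (k+1), q ^ lstat (ins l p) T'
      = (∑ T ∈ (starSets (lAsc l) (k+1)).filter (fun T => p - 1 ∉ T),
          q ^ (lstat l T + ((l.length + 1 - p) - (T.filter fun i => p ≤ i).card)))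
        + (if 2 ≤ p then
            ∑ T ∈ (starSets (lAsc l) k).filter (fun T => p - 1 ∉ T),
              q ^ (lstat l T + ((l.length + 1 - p) - (T.filter fun i => p ≤ i).card))
          else 0) := by
  rw [← Finset.sum_filter_add_sum_filter_not (starSets (lAsc (ins l p)) (k+1))
    (fun T' => p - 1 ∈ T'), add_comm]
  congr 1
  · exact (sumB q hp1 hp2 hl (k+1)).symm
  · by_cases hp : 2 ≤ p
    · rw [if_pos hp]
      exact (sumA q hp hp2 hl k).symm
    · have hp1' : p = 1 := by omega
      subst hp1'
      rw [if_neg hp]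
      exact sumA1 q hp2 (k+1)

lemma starSets_zero_filter (D : Finset ℕ) (a : ℕ) :
    (starSets D 0).filter (fun T => a ∈ T) = ∅ := by
  rw [Finset.filter_eq_empty_iff]
  intro T hT
  rw [mem_starSets] at hT
  rw [Finset.card_eq_zero.1 hT.2]
  exact Finset.notMem_empty a

lemma inner_decomp_zero (q : R) {l : List ℕ} {p : ℕ} (hp1 : 1 ≤ p)
    (hp2 : p ≤ l.length + 1) (hl : ∀ x ∈ l, x ≤ l.length) :
    ∑ T' ∈ starSets (lAsc (ins l p)) 0, q ^ lstat (ins l p) T'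
      = ∑ T ∈ (starSets (lAsc l) 0).filter (fun T => p - 1 ∉ T),
          q ^ (lstat l T + ((l.length + 1 - p) - (T.filter fun i => p ≤ i).card)) := by
  rw [← Finset.sum_filter_add_sum_filter_not (starSets (lAsc (ins l p)) 0)
    (fun T' => p - 1 ∈ T'), starSets_zero_filter, Finset.sum_empty, zero_add]
  exact (sumB q hp1 hp2 hl 0).symm

def FW (q : R) (n k : ℕ) : R := ∑ l ∈ Words n, ∑ T ∈ starSets (lAsc l) k, q ^ lstat l T

lemma Icc_filter_two (n : ℕ) :
    (Finset.Icc 1 (n+1)).filter (fun p => 2 ≤ p) = Finset.Icc 2 (n+1) := by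
  ext a
  simp only [Finset.mem_filter, Finset.mem_Icc]
  omega

lemma collect (q : R) (l : List ℕ) (k : ℕ) :
    ∑ p ∈ Finset.Icc 1 (l.length+1),
        ∑ T ∈ (starSets (lAsc l) k).filter (fun T => p - 1 ∉ T),
          q ^ (lstat l T + ((l.length + 1 - p) - (T.filter fun i => p ≤ i).card))
      = qnum q (l.length + 1 - k) * ∑ T ∈ starSets (lAsc l) k, q ^ lstat l T := by
  rw [exchange, Finset.mul_sum]
  refine Finset.sum_congr rfl fun T hT => ?_
  rw [mem_starSets] at hT
  rw [sum_qpow q l.length T (hT.1.trans (lAsc_subset l)), hT.2, mul_comm]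

lemma collect' (q : R) (l : List ℕ) (k : ℕ) :
    ∑ p ∈ Finset.Icc 2 (l.length+1),
        ∑ T ∈ (starSets (lAsc l) k).filter (fun T => p - 1 ∉ T),
          q ^ (lstat l T + ((l.length + 1 - p) - (T.filter fun i => p ≤ i).card))
      = qnum q (l.length - k) * ∑ T ∈ starSets (lAsc l) k, q ^ lstat l T := by
  rw [exchange, Finset.mul_sum]
  refine Finset.sum_congr rfl fun T hT => ?_
  rw [mem_starSets] at hT
  rw [sum_qpow' q l.length T (hT.1.trans (lAsc_subset l)), hT.2, mul_comm]

lemma FW_succ (q : R) (n k : ℕ) :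
    FW q (n+1) (k+1) = qnum q (n - k) * (FW q n (k+1) + FW q n k) := by
  rw [FW, sum_Words_succ n (fun l' => ∑ T ∈ starSets (lAsc l') (k+1), q ^ lstat l' T),
    Finset.sum_product]
  have main : ∀ l ∈ Words n,
      (∑ p ∈ Finset.Icc 1 (n+1),
        ∑ T' ∈ starSets (lAsc (ins l p)) (k+1), q ^ lstat (ins l p) T')
      = qnum q (n-k) * ((∑ T ∈ starSets (lAsc l) (k+1), q ^ lstat l T)
          + (∑ T ∈ starSets (lAsc l) k, q ^ lstat l T)) := by
    intro l hW
    have hlen := Words_length hW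
    have hl := Words_entries hW
    have hstep : ∀ p ∈ Finset.Icc 1 (n+1),
        (∑ T' ∈ starSets (lAsc (ins l p)) (k+1), q ^ lstat (ins l p) T')
        = (∑ T ∈ (starSets (lAsc l) (k+1)).filter (fun T => p - 1 ∉ T),
            q ^ (lstat l T + ((l.length + 1 - p) - (T.filter fun i => p ≤ i).card)))
          + (if 2 ≤ p then
              ∑ T ∈ (starSets (lAsc l) k).filter (fun T => p - 1 ∉ T),
                q ^ (lstat l T + ((l.length + 1 - p) - (T.filter fun i => p ≤ i).card))
            else 0) := by
      intro p hp
      rw [Finset.mem_Icc] at hp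
      exact inner_decomp_succ q hp.1 (by omega) hl (k := k)
    rw [Finset.sum_congr rfl hstep, Finset.sum_add_distrib]
    have hIcc : Finset.Icc 1 (n+1) = Finset.Icc 1 (l.length+1) := by rw [hlen]
    have part1 := collect q l (k+1)
    have e1 : l.length + 1 - (k+1) = n - k := by omega
    rw [e1] at part1
    have part2' : (∑ p ∈ Finset.Icc 1 (n+1), if 2 ≤ p then
          ∑ T ∈ (starSets (lAsc l) k).filter (fun T => p - 1 ∉ T),
            q ^ (lstat l T + ((l.length + 1 - p) - (T.filter fun i => p ≤ i).card))
        else 0)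
        = ∑ p ∈ Finset.Icc 2 (n+1),
            ∑ T ∈ (starSets (lAsc l) k).filter (fun T => p - 1 ∉ T),
              q ^ (lstat l T + ((l.length + 1 - p) - (T.filter fun i => p ≤ i).card)) := by
      rw [← Finset.sum_filter, Icc_filter_two]
    have part2 := collect' q l k
    have e2 : l.length - k = n - k := by omega
    rw [e2] at part2
    have hIcc2 : Finset.Icc 2 (n+1) = Finset.Icc 2 (l.length+1) := by rw [hlen]
    rw [part2', hIcc, part1, hIcc2, part2, mul_add]
  rw [Finset.sum_congr rfl main, ← Finset.mul_sum, Finset.sum_add_distrib]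
  rfl

lemma FW_zero (q : R) (n : ℕ) :
    FW q (n+1) 0 = qnum q (n + 1) * FW q n 0 := by
  rw [FW, sum_Words_succ n (fun l' => ∑ T ∈ starSets (lAsc l') 0, q ^ lstat l' T),
    Finset.sum_product]
  have main : ∀ l ∈ Words n,
      (∑ p ∈ Finset.Icc 1 (n+1),
        ∑ T' ∈ starSets (lAsc (ins l p)) 0, q ^ lstat (ins l p) T')
      = qnum q (n+1) * ∑ T ∈ starSets (lAsc l) 0, q ^ lstat l T := by
    intro l hW
    have hlen := Words_length hW
    have hl := Words_entries hW
    have hstep : ∀ p ∈ Finset.Icc 1 (n+1),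
        (∑ T' ∈ starSets (lAsc (ins l p)) 0, q ^ lstat (ins l p) T')
        = ∑ T ∈ (starSets (lAsc l) 0).filter (fun T => p - 1 ∉ T),
            q ^ (lstat l T + ((l.length + 1 - p) - (T.filter fun i => p ≤ i).card)) := by
      intro p hp
      rw [Finset.mem_Icc] at hp
      exact inner_decomp_zero q hp.1 (by omega) hl
    rw [Finset.sum_congr rfl hstep]
    have hIcc : Finset.Icc 1 (n+1) = Finset.Icc 1 (l.length+1) := by rw [hlen]
    have part1 := collect q l 0
    have e1 : l.length + 1 - 0 = n + 1 := by omega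
    rw [e1] at part1
    rw [hIcc, part1]
  rw [Finset.sum_congr rfl main, ← Finset.mul_sum]
  rfl

end Assembly


section Final

variable {R : Type*} [CommRing R]

lemma qnum_zero (q : R) : qnum q 0 = 0 := by simp [qnum]

lemma qfact_succ (q : R) (m : ℕ) : qfact q (m+1) = qfact q m * qnum q (m+1) :=
  Finset.prod_range_succ _ _

lemma qStirling_zero_right (q : R) (n : ℕ) : qStirling q (n+1) 0 = 0 := rfl

lemma qStirling_succ (q : R) (n k : ℕ) :
    qStirling q (n+1) (k+1) = qStirling q n k + qnum q (k + 1) * qStirling q n (k + 1) := rfl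

lemma qStirling_eq_zero (q : R) : ∀ (n j : ℕ), n < j → qStirling q n j = 0
  | 0, j+1, _ => rfl
  | 0, 0, h => absurd h (by omega)
  | n+1, 0, h => absurd h (by omega)
  | n+1, j+1, h => by
      rw [qStirling_succ, qStirling_eq_zero q n j (by omega),
        qStirling_eq_zero q n (j+1) (by omega)]
      ring

lemma starSets_zero (D : Finset ℕ) : starSets D 0 = {∅} := by
  ext T
  rw [mem_starSets, Finset.mem_singleton]
  constructor
  · rintro ⟨_, hc⟩
    exact Finset.card_eq_zero.1 hc
  · rintro rfl
    exact ⟨Finset.empty_subset _, Finset.card_empty⟩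

lemma Words_zero : Words 0 = {[]} := by
  ext l
  rw [mem_Words, Finset.mem_singleton]
  constructor
  · intro h
    exact List.Perm.eq_nil h
  · rintro rfl
    rfl

lemma FW_eq (q : R) : ∀ n k : ℕ, k ≤ n → FW q n k = qfact q (n-k) * qStirling q n (n-k) := by
  intro n
  induction n with
  | zero =>
    intro k hk
    have hk0 : k = 0 := by omega
    subst hk0
    rw [FW, Words_zero, Finset.sum_singleton, starSets_zero, Finset.sum_singleton]
    have h1 : lstat [] ∅ = 0 := by
      simp [lstat, linv]
    rw [h1, pow_zero]
    show (1:R) = qfact q 0 * qStirling q 0 0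
    rw [qfact]
    simp [qStirling]
  | succ n ih =>
    intro k hk
    cases k with
    | zero =>
      rw [FW_zero, ih 0 (by omega)]
      simp only [Nat.sub_zero]
      rw [qfact_succ, qStirling_succ, qStirling_eq_zero q n (n+1) (by omega)]
      ring
    | succ k =>
      rw [FW_succ]
      rcases Nat.lt_or_ge k n with hkn | hkn
      · rw [ih (k+1) (by omega), ih k (by omega)]
        obtain ⟨m, hm⟩ : ∃ m, n - k = m + 1 := ⟨n - k - 1, by omega⟩
        have e1 : n - (k+1) = m := by omega
        have e2 : n + 1 - (k + 1) = m + 1 := by omega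
        rw [hm, e1, e2, qStirling_succ, qfact_succ]
        ring
      · have hk' : k = n := by omega
        rw [hk', Nat.sub_self, qnum_zero, zero_mul]
        have e : n + 1 - (n + 1) = 0 := by omega
        rw [e, qStirling_zero_right]
        ring

def wordOf {n : ℕ} (σ : Equiv.Perm (Fin n)) : List ℕ := List.ofFn fun i => (σ i : ℕ) + 1

lemma wordOf_length {n : ℕ} (σ : Equiv.Perm (Fin n)) : (wordOf σ).length = n := by
  simp [wordOf]

lemma oneline_eq {n : ℕ} (σ : Equiv.Perm (Fin n)) : oneline σ = ol (wordOf σ) := by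
  funext i
  rw [oneline, ol, wordOf_length]
  by_cases h : 1 ≤ i ∧ i ≤ n
  · rw [dif_pos h, if_pos h, List.getD_eq_getElem _ _ (by rw [wordOf_length]; omega)]
    simp only [wordOf, List.getElem_ofFn]
  · rw [dif_neg h, if_neg h]

lemma AscSet_eq {n : ℕ} (σ : Equiv.Perm (Fin n)) : AscSet σ = lAsc (wordOf σ) := by
  simp only [AscSet, lAsc, wordOf_length, oneline_eq]

lemma invNum_eq {n : ℕ} (σ : Equiv.Perm (Fin n)) : invNum σ = linv (wordOf σ) := by
  simp only [invNum, linv, wordOf_length, oneline_eq]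

lemma invEnd_eq {n : ℕ} (σ : Equiv.Perm (Fin n)) (j : ℕ) : invEnd σ j = linvEnd (wordOf σ) j := by
  simp only [invEnd, linvEnd, wordOf_length, oneline_eq]

lemma wordOf_mem_Words {n : ℕ} (σ : Equiv.Perm (Fin n)) : wordOf σ ∈ Words n := by
  rw [mem_Words]
  apply List.perm_of_nodup_nodup_toFinset_eq
  · rw [wordOf, List.nodup_ofFn]
    intro i j h
    simp only at h
    exact σ.injective (Fin.ext (by omega))
  · exact List.nodup_range' (s := 1) (n := n)
  · ext m
    simp only [List.mem_toFinset, wordOf, List.mem_ofFn, List.mem_range'_1]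
    constructor
    · rintro ⟨i, rfl⟩
      have h2 := (σ i).isLt
      show 1 ≤ (σ i : ℕ) + 1 ∧ (σ i : ℕ) + 1 < 1 + n
      omega
    · rintro ⟨h1, h2⟩
      exact ⟨σ.symm ⟨m - 1, by omega⟩, by simp; omega⟩

lemma wordOf_surj {n : ℕ} {l : List ℕ} (h : l ∈ Words n) :
    ∃ σ : Equiv.Perm (Fin n), wordOf σ = l := by
  have hlen := Words_length h
  have hnodup := Words_nodup h
  have hmem : ∀ x ∈ l, 1 ≤ x ∧ x ≤ n := fun x hx => (Words_mem_iff h).1 hx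
  have hgetmem : ∀ i : Fin n, l[(i:ℕ)]'(by omega) ∈ l := fun i => List.getElem_mem _
  set f : Fin n → Fin n := fun i => ⟨l[(i:ℕ)]'(by omega) - 1, by
    have := hmem _ (hgetmem i); omega⟩ with hf
  have hinj : Function.Injective f := by
    intro i j hij
    rw [hf] at hij
    simp only [Fin.mk.injEq] at hij
    have h1 := hmem _ (hgetmem i)
    have h2 := hmem _ (hgetmem j)
    have : l[(i:ℕ)]'(by omega) = l[(j:ℕ)]'(by omega) := by omega
    exact Fin.ext ((hnodup.getElem_inj_iff).1 this)
  refine ⟨Equiv.ofBijective f (Finite.injective_iff_bijective.1 hinj), ?_⟩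
  apply List.ext_getElem
  · rw [wordOf_length, hlen]
  · intro i h1 h2
    rw [wordOf_length] at h1
    simp only [wordOf, List.getElem_ofFn, Equiv.ofBijective_apply, hf]
    have hx : 1 ≤ l[i]'h2 ∧ l[i]'h2 ≤ n := hmem _ (hgetmem ⟨i, h1⟩)
    omega

lemma sum_perm_eq (n : ℕ) (g : List ℕ → R) :
    ∑ σ : Equiv.Perm (Fin n), g (wordOf σ) = ∑ l ∈ Words n, g l := by
  apply Finset.sum_bij (i := fun σ _ => wordOf σ)
  · intro σ _
    exact wordOf_mem_Words σ
  · intro σ _ τ _ h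
    apply Equiv.ext
    intro i
    have := List.ofFn_injective h
    have := congrFun this i
    exact Fin.ext (by omega)
  · intro l hl
    obtain ⟨σ, hσ⟩ := wordOf_surj hl
    exact ⟨σ, Finset.mem_univ σ, hσ⟩
  · intro σ _
    rfl

end Final

end Aux14

open Aux14

/-- For all n ≥ 1, 0 ≤ k ≤ n−1 and q in a commutative ring,
Σ_{(σ,T)∈𝔖^<_{n,k}} q^{inv(σ) − Σ_{i∈T} inv^{□,i+1}(σ)} = [n−k]_q! · S_{n,n−k}(q). -/
theorem statement14 {R : Type*} [CommRing R] (q : R) (n k : ℕ) (hn : 1 ≤ n) (hk : k ≤ n - 1) :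
    ∑ σ : Equiv.Perm (Fin n), ∑ T ∈ starSets (AscSet σ) k,
        q ^ (invNum σ - ∑ i ∈ T, invEnd σ (i + 1)) =
      qfact q (n - k) * qStirling q n (n - k) := by
  have h1 : ∀ σ : Equiv.Perm (Fin n),
      (∑ T ∈ starSets (AscSet σ) k, q ^ (invNum σ - ∑ i ∈ T, invEnd σ (i + 1)))
        = ∑ T ∈ starSets (lAsc (wordOf σ)) k, q ^ lstat (wordOf σ) T := by
    intro σ
    rw [AscSet_eq]
    refine Finset.sum_congr rfl fun T _ => ?_
    rw [lstat, invNum_eq]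
    congr 2
    exact Finset.sum_congr rfl fun i _ => invEnd_eq σ (i+1)
  rw [Finset.sum_congr rfl fun σ _ => h1 σ,
    sum_perm_eq n (fun l => ∑ T ∈ starSets (lAsc l) k, q ^ lstat l T)]
  exact FW_eq q n k (by omega)
end

section
/- Let q be an element of a commutative ring and write D'_{n,k}(q) = Σ_{(σ,S)∈𝔖^{>'}_{n,k}} q^{inv'((σ,S))}, with the conventions D'_{m,−1}(q) = 0 and D'_{m,k}(q) = 0 for k > m. Then for all n ≥ 2 and 0 ≤ k ≤ n, D'_{n,k}(q) = [n−k+1]_q · D'_{n−1,k−1}(q) + [n−k]_q · D'_{n−1,k}(q). -/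
open Finset

/-- D'_{n,k}(q) = Σ_{(σ,S)∈𝔖^{>'}_{n,k}} q^{inv'((σ,S))}, where
𝔖^{>'}_{n,k} = {(σ,S) : σ ∈ 𝔖_n, S ⊆ Des(σ) ∪ {n}, |S| = k} and
inv'((σ,S)) = inv(σ) − Σ_{i∈S} inv^{□,i}(σ).  (It vanishes for k > n automatically.) -/
def Dinv' {R : Type*} [CommRing R] (q : R) (n k : ℕ) : R :=
  ∑ σ : Equiv.Perm (Fin n), ∑ S ∈ starSets (insert n (DesSet σ)) k,
    q ^ (invNum σ - ∑ i ∈ S, invEnd σ i)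

namespace St18


def up (P i : ℕ) : ℕ := if P ≤ i then i + 1 else i

lemma up_inj (P : ℕ) : Function.Injective (up P) := by
  intro a b h; unfold up at h; split_ifs at h <;> omega

lemma up_ne (P j : ℕ) : up P j ≠ P := by unfold up; split_ifs <;> omega

def ins {m : ℕ} (τ : Equiv.Perm (Fin m)) (p : Fin (m+1)) : Equiv.Perm (Fin (m+1)) :=
  (finSuccEquiv' p).trans ((Equiv.optionCongr τ).trans (finSuccEquiv' (Fin.last m)).symm)

lemma ins_apply_self {m : ℕ} (τ : Equiv.Perm (Fin m)) (p : Fin (m+1)) :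
    ins τ p p = Fin.last m := by
  simp [ins, finSuccEquiv'_at]

lemma ins_apply_succAbove {m : ℕ} (τ : Equiv.Perm (Fin m)) (p : Fin (m+1)) (j : Fin m) :
    ins τ p (p.succAbove j) = (τ j).castSucc := by
  simp [ins, finSuccEquiv'_succAbove, finSuccEquiv'_symm_some, Fin.succAbove_last]

lemma oneline_le {m : ℕ} (τ : Equiv.Perm (Fin m)) (i : ℕ) : oneline τ i ≤ m := by
  unfold oneline; split_ifs with h
  · have := (τ ⟨i-1, by omega⟩).isLt; omega
  · omega

lemma oneline_ins_self {m : ℕ} (τ : Equiv.Perm (Fin m)) (p : Fin (m+1)) :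
    oneline (ins τ p) ((p : ℕ) + 1) = m + 1 := by
  have hp : (⟨(p:ℕ)+1-1, by omega⟩ : Fin (m+1)) = p := by ext; simp
  unfold oneline
  rw [dif_pos ⟨by omega, by omega⟩, hp, ins_apply_self]
  simp [Fin.last]

lemma oneline_ins_lt {m : ℕ} (τ : Equiv.Perm (Fin m)) (p : Fin (m+1)) {i : ℕ}
    (h1 : 1 ≤ i) (h2 : i < (p : ℕ) + 1) : oneline (ins τ p) i = oneline τ i := by
  have him : i ≤ m := by have := p.isLt; omega
  have key : (⟨i-1, by omega⟩ : Fin (m+1)) = p.succAbove ⟨i-1, by omega⟩ := by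
    rw [Fin.succAbove_of_castSucc_lt]
    · ext; simp
    · simp [Fin.lt_def]; omega
  unfold oneline
  rw [dif_pos ⟨h1, by omega⟩, dif_pos ⟨h1, him⟩, key, ins_apply_succAbove]
  simp

lemma oneline_ins_gt {m : ℕ} (τ : Equiv.Perm (Fin m)) (p : Fin (m+1)) {i : ℕ}
    (h1 : (p : ℕ) + 1 < i) (h2 : i ≤ m + 1) : oneline (ins τ p) i = oneline τ (i - 1) := by
  have key : (⟨i-1, by omega⟩ : Fin (m+1)) = p.succAbove ⟨i-2, by omega⟩ := by
    rw [Fin.succAbove_of_le_castSucc]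
    · ext; simp [Fin.succ]; omega
    · simp [Fin.le_def]; omega
  unfold oneline
  rw [dif_pos ⟨by omega, h2⟩, dif_pos ⟨by omega, by omega⟩, key, ins_apply_succAbove]
  have h3 : i - 1 - 1 = i - 2 := by omega
  simp [h3]

lemma oneline_ins_up {m : ℕ} (τ : Equiv.Perm (Fin m)) (p : Fin (m+1)) {i : ℕ}
    (h1 : 1 ≤ i) (h2 : i ≤ m) : oneline (ins τ p) (up ((p:ℕ)+1) i) = oneline τ i := by
  unfold up; split_ifs with h
  · rw [oneline_ins_gt τ p (by omega) (by omega)]; simp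
  · exact oneline_ins_lt τ p h1 (by omega)



lemma Icc_decomp {m : ℕ} {P : ℕ} (h1 : 1 ≤ P) (h2 : P ≤ m + 1) :
    Finset.Icc 1 (m+1) = insert P ((Finset.Icc 1 m).image (up P)) := by
  ext x
  simp only [mem_Icc, mem_insert, mem_image, up]
  constructor
  · intro hx
    rcases eq_or_ne x P with rfl | hne
    · exact Or.inl rfl
    · refine Or.inr ?_
      by_cases hlt : x < P
      · exact ⟨x, by omega, by rw [if_neg (by omega)]⟩
      · exact ⟨x - 1, by omega, by rw [if_pos (by omega)]; omega⟩
  · rintro (rfl | ⟨j, hj, hjx⟩)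
    · omega
    · split_ifs at hjx <;> omega

lemma invEnd_ins_self {m : ℕ} (τ : Equiv.Perm (Fin m)) (p : Fin (m+1)) :
    invEnd (ins τ p) ((p:ℕ)+1) = 0 := by
  rw [invEnd, Finset.card_eq_zero, Finset.filter_eq_empty_iff]
  intro i hi
  simp only [mem_Icc] at hi
  rw [oneline_ins_self]
  rintro ⟨hlt, hgt⟩
  have := oneline_le (ins τ p) i
  omega

lemma invEnd_ins_up {m : ℕ} (τ : Equiv.Perm (Fin m)) (p : Fin (m+1)) {i : ℕ}
    (h1 : 1 ≤ i) (h2 : i ≤ m) :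
    invEnd (ins τ p) (up ((p:ℕ)+1) i) = invEnd τ i + (if (p:ℕ)+1 ≤ i then 1 else 0) := by
  set P : ℕ := (p:ℕ)+1 with hP
  have hol := oneline_ins_up τ p h1 h2
  by_cases hc : P ≤ i
  · -- up P i = i + 1
    have hup : up P i = i + 1 := by rw [up, if_pos hc]
    rw [hup] at hol ⊢
    rw [if_pos hc]
    have hset : ((Finset.Icc 1 (m+1)).filter fun a => a < i+1 ∧ oneline (ins τ p) (i+1) < oneline (ins τ p) a)
        = insert P (((Finset.Icc 1 m).filter fun a => a < i ∧ oneline τ i < oneline τ a).image (up P)) := by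
      ext b
      simp only [mem_filter, mem_Icc, mem_insert, mem_image]
      constructor
      · rintro ⟨⟨hb1, hb2⟩, hbi, hbo⟩
        rcases eq_or_ne b P with rfl | hne
        · exact Or.inl rfl
        · refine Or.inr ?_
          by_cases hblt : b < P
          · refine ⟨b, ⟨⟨hb1, by omega⟩, by omega, ?_⟩, by rw [up, if_neg (by omega)]⟩
            rwa [hol, oneline_ins_lt τ p hb1 (by omega)] at hbo
          · refine ⟨b - 1, ⟨⟨by omega, by omega⟩, by omega, ?_⟩, by rw [up, if_pos (by omega)]; omega⟩
            rw [hol, oneline_ins_gt τ p (by omega) (by omega)] at hbo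
            exact hbo
      · rintro (rfl | ⟨a, ⟨⟨ha1, ha2⟩, hai, hao⟩, rfl⟩)
        · refine ⟨⟨by omega, by omega⟩, by omega, ?_⟩
          rw [hol, oneline_ins_self]
          have := oneline_le τ i; omega
        · have holup := oneline_ins_up τ p ha1 ha2
          refine ⟨⟨?_, ?_⟩, ?_, ?_⟩
          · unfold up; split_ifs <;> omega
          · unfold up; split_ifs <;> omega
          · unfold up; split_ifs <;> omega
          · rw [hol, holup]; exact hao
    rw [invEnd, hset, Finset.card_insert_of_notMem, Finset.card_image_of_injective _ (up_inj P), invEnd]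
    intro hmem
    rw [Finset.mem_image] at hmem
    obtain ⟨a, _, ha⟩ := hmem
    exact up_ne P a ha
  · -- up P i = i, i < P
    have hup : up P i = i := by rw [up, if_neg hc]
    rw [hup] at hol ⊢
    rw [if_neg hc]
    have hset : ((Finset.Icc 1 (m+1)).filter fun a => a < i ∧ oneline (ins τ p) i < oneline (ins τ p) a)
        = ((Finset.Icc 1 m).filter fun a => a < i ∧ oneline τ i < oneline τ a) := by
      ext b
      simp only [mem_filter, mem_Icc]
      constructor
      · rintro ⟨⟨hb1, hb2⟩, hbi, hbo⟩
        refine ⟨⟨hb1, by omega⟩, hbi, ?_⟩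
        rwa [hol, oneline_ins_lt τ p hb1 (by omega)] at hbo
      · rintro ⟨⟨hb1, hb2⟩, hbi, hbo⟩
        refine ⟨⟨hb1, by omega⟩, hbi, ?_⟩
        rwa [hol, oneline_ins_lt τ p hb1 (by omega)]
    rw [invEnd, hset, invEnd, add_zero]

lemma invNum_eq_sum {n : ℕ} (σ : Equiv.Perm (Fin n)) :
    invNum σ = ∑ j ∈ Finset.Icc 1 n, invEnd σ j := by
  rw [invNum]
  rw [Finset.card_eq_sum_card_fiberwise (f := Prod.snd) (t := Finset.Icc 1 n)
    (by intro x hx; simp only [mem_coe, mem_filter, mem_product] at hx; exact hx.1.2)]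
  refine Finset.sum_congr rfl fun j hj => ?_
  rw [invEnd]
  apply Finset.card_nbij' (i := Prod.fst) (j := fun a => (a, j))
  · intro x hx
    simp only [mem_coe, mem_filter, mem_product, mem_Icc] at hx ⊢
    obtain ⟨⟨⟨hx1, hx2⟩, hxlt⟩, hxj⟩ := hx
    subst hxj
    exact ⟨hx1, hxlt.1, hxlt.2⟩
  · intro a ha
    simp only [mem_coe, mem_filter, mem_Icc, mem_product] at ha ⊢
    simp only [mem_Icc] at hj
    exact ⟨⟨⟨ha.1, hj⟩, ha.2.1, ha.2.2⟩, trivial⟩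
  · intro x hx
    simp only [mem_coe, mem_filter] at hx
    rw [← hx.2]
  · intro a _; rfl

lemma invNum_ins {m : ℕ} (τ : Equiv.Perm (Fin m)) (p : Fin (m+1)) :
    invNum (ins τ p) = invNum τ + (m + 1 - ((p:ℕ)+1)) := by
  set P : ℕ := (p:ℕ)+1 with hP
  have h1 : 1 ≤ P := by omega
  have h2 : P ≤ m + 1 := by have := p.isLt; omega
  rw [invNum_eq_sum, Icc_decomp h1 h2, Finset.sum_insert, Finset.sum_image
    (fun a _ b _ h => up_inj P h), invEnd_ins_self, zero_add]
  · have : ∀ i ∈ Finset.Icc 1 m, invEnd (ins τ p) (up P i)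
        = invEnd τ i + (if P ≤ i then 1 else 0) := by
      intro i hi; simp only [mem_Icc] at hi; exact invEnd_ins_up τ p hi.1 hi.2
    rw [Finset.sum_congr rfl this, Finset.sum_add_distrib, ← invNum_eq_sum, Finset.sum_boole]
    have : (Finset.Icc 1 m).filter (fun x => P ≤ x) = Finset.Icc P m := by
      ext x; simp only [mem_filter, mem_Icc]; omega
    rw [this, Nat.card_Icc]
    simp
  · intro hmem
    rw [Finset.mem_image] at hmem
    obtain ⟨a, _, ha⟩ := hmem
    exact up_ne P a ha

lemma des_ins_iff {m : ℕ} (τ : Equiv.Perm (Fin m)) (p : Fin (m+1)) (i : ℕ) :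
    i ∈ DesSet (ins τ p) ↔
      (1 ≤ i ∧ i + 1 < (p:ℕ)+1 ∧ i ∈ DesSet τ) ∨ (i = (p:ℕ)+1 ∧ i ≤ m) ∨
      ((p:ℕ)+1 < i ∧ i ≤ m ∧ i - 1 ∈ DesSet τ) := by
  set P : ℕ := (p:ℕ)+1 with hP
  have h1 : 1 ≤ P := by omega
  have h2 : P ≤ m + 1 := by have := p.isLt; omega
  simp only [DesSet, mem_filter, mem_Icc]
  have hm1 : m + 1 - 1 = m := by omega
  rw [hm1]
  rcases lt_trichotomy (i+1) P with hc | hc | hc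
  · -- i + 1 < P
    have e1 : oneline (ins τ p) i = oneline τ i := by
      rcases Nat.eq_zero_or_pos i with rfl | hi
      · simp [oneline]
      · exact oneline_ins_lt τ p hi (by omega)
    have e2 : oneline (ins τ p) (i+1) = oneline τ (i+1) := oneline_ins_lt τ p (by omega) hc
    rw [e1, e2]
    constructor
    · rintro ⟨⟨hi1, hi2⟩, hd⟩
      exact Or.inl ⟨hi1, hc, ⟨⟨hi1, by omega⟩, hd⟩⟩
    · rintro (⟨hi1, _, hd⟩ | ⟨rfl, _⟩ | ⟨hlt, _, _⟩)
      · exact ⟨⟨hi1, by have := hd.1; omega⟩, hd.2⟩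
      · omega
      · omega
  · -- i + 1 = P
    have e2 : oneline (ins τ p) (i+1) = m + 1 := by rw [hc]; exact oneline_ins_self τ p
    have hno : ¬ (oneline (ins τ p) (i+1) < oneline (ins τ p) i) := by
      rw [e2]; have := oneline_le (ins τ p) i; omega
    constructor
    · rintro ⟨_, hd⟩; exact absurd hd hno
    · rintro (⟨_, h, _⟩ | ⟨he, _⟩ | ⟨hlt, _, _⟩) <;> omega
  · -- P < i + 1, i.e. P ≤ i
    by_cases him : i ≤ m
    · rcases eq_or_lt_of_le (show P ≤ i by omega) with he | hlt
      · -- i = P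
        have e1 : oneline (ins τ p) i = m + 1 := by rw [← he]; exact oneline_ins_self τ p
        have e2 : oneline (ins τ p) (i+1) ≤ m := by
          rw [oneline_ins_gt τ p (by omega) (by omega)]
          exact oneline_le τ _
        constructor
        · intro _; exact Or.inr (Or.inl ⟨he.symm, him⟩)
        · intro _; exact ⟨⟨by omega, him⟩, by omega⟩
      · -- P < i
        have e1 : oneline (ins τ p) i = oneline τ (i-1) := oneline_ins_gt τ p hlt (by omega)
        have e2 : oneline (ins τ p) (i+1) = oneline τ i := by
          rw [oneline_ins_gt τ p (by omega) (by omega)]; simp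
        rw [e1, e2]
        constructor
        · rintro ⟨_, hd⟩
          refine Or.inr (Or.inr ⟨hlt, him, ?_⟩)
          refine ⟨⟨by omega, by omega⟩, ?_⟩
          have : i - 1 + 1 = i := by omega
          rw [this]; exact hd
        · rintro (⟨_, h, _⟩ | ⟨he2, _⟩ | ⟨_, _, hd⟩)
          · omega
          · omega
          · have : i - 1 + 1 = i := by omega
            rw [this] at hd
            exact ⟨⟨by omega, him⟩, hd.2⟩
    · -- i > m : both sides false
      constructor
      · rintro ⟨⟨_, h⟩, _⟩; omega
      · rintro (⟨_, h, _⟩ | ⟨he, h⟩ | ⟨_, h, _⟩) <;> omega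

lemma Bset_ins {m : ℕ} (hm : 1 ≤ m) (τ : Equiv.Perm (Fin m)) (p : Fin (m+1)) :
    insert (m+1) (DesSet (ins τ p)) =
      insert ((p:ℕ)+1) ((((insert m (DesSet τ)).erase ((p:ℕ)+1-1))).image (up ((p:ℕ)+1))) := by
  set P : ℕ := (p:ℕ)+1 with hP
  have h1 : 1 ≤ P := by omega
  have h2 : P ≤ m + 1 := by have := p.isLt; omega
  have hdes : ∀ j, j ∈ DesSet τ → 1 ≤ j ∧ j ≤ m - 1 := by
    intro j hj; simp only [DesSet, mem_filter, mem_Icc] at hj; exact hj.1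
  ext i
  simp only [mem_insert, mem_image, mem_erase, des_ins_iff, ← hP]
  constructor
  · rintro (rfl | hi)
    · -- i = m + 1
      rcases eq_or_ne P (m+1) with he | hne
      · exact Or.inl he.symm
      · refine Or.inr ⟨m, ⟨by omega, Or.inl rfl⟩, ?_⟩
        rw [up, if_pos (by omega)]
    · rcases hi with ⟨hi1, hlt, hd⟩ | ⟨rfl, _⟩ | ⟨hlt, him, hd⟩
      · refine Or.inr ⟨i, ⟨by omega, Or.inr hd⟩, ?_⟩
        rw [up, if_neg (by omega)]
      · exact Or.inl rfl
      · refine Or.inr ⟨i - 1, ⟨by omega, Or.inr hd⟩, ?_⟩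
        rw [up, if_pos (by omega)]; omega
  · rintro (rfl | ⟨j, ⟨hjne, hj⟩, rfl⟩)
    · rcases eq_or_lt_of_le h2 with he | hlt
      · exact Or.inl (by omega)
      · exact Or.inr (Or.inr (Or.inl ⟨rfl, by omega⟩))
    · have hjm : 1 ≤ j ∧ j ≤ m := by
        rcases hj with rfl | hd
        · omega
        · have := hdes j hd; omega
      by_cases hc : P ≤ j
      · -- up P j = j + 1
        rw [up, if_pos hc]
        rcases hj with rfl | hd
        · exact Or.inl rfl
        · refine Or.inr (Or.inr (Or.inr ⟨by omega, by have := hdes j hd; omega, by simpa using hd⟩))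
      · -- up P j = j, j < P, j ≠ P - 1 so j + 1 < P
        rw [up, if_neg hc]
        rcases hj with rfl | hd
        · omega
        · refine Or.inr (Or.inl ⟨hjm.1, by omega, hd⟩)

lemma powersetCard_image' {f : ℕ → ℕ} (hf : Function.Injective f) (B : Finset ℕ) (j : ℕ) :
    Finset.powersetCard j (B.image f) = (Finset.powersetCard j B).image (Finset.image f) := by
  ext T
  simp only [Finset.mem_powersetCard, Finset.mem_image]
  constructor
  · rintro ⟨hsub, hcard⟩
    refine ⟨B.filter (fun x => f x ∈ T), ⟨Finset.filter_subset _ _, ?_⟩, ?_⟩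
    · have himg : (B.filter fun x => f x ∈ T).image f = T := by
        ext t
        simp only [Finset.mem_image, Finset.mem_filter]
        constructor
        · rintro ⟨a, ⟨_, h2⟩, rfl⟩; exact h2
        · intro ht
          obtain ⟨b, hb, rfl⟩ := Finset.mem_image.mp (hsub ht)
          exact ⟨b, ⟨hb, ht⟩, rfl⟩
      have hc2 := congrArg Finset.card himg
      rw [Finset.card_image_of_injective _ hf] at hc2
      rw [hc2, hcard]
    · ext t
      simp only [Finset.mem_image, Finset.mem_filter]
      constructor
      · rintro ⟨a, ⟨_, h2⟩, rfl⟩; exact h2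
      · intro ht
        obtain ⟨b, hb, rfl⟩ := Finset.mem_image.mp (hsub ht)
        exact ⟨b, ⟨hb, ht⟩, rfl⟩
  · rintro ⟨S, ⟨hsub, hcard⟩, rfl⟩
    exact ⟨Finset.image_subset_image hsub, by rw [Finset.card_image_of_injective _ hf, hcard]⟩

lemma pcs_erase (B : Finset ℕ) (x : ℕ) (j : ℕ) :
    Finset.powersetCard j (B.erase x) = (Finset.powersetCard j B).filter (fun S => x ∉ S) := by
  ext S
  simp only [Finset.mem_powersetCard, Finset.mem_filter, Finset.subset_erase]
  tauto

lemma sum_invEnd_le {m : ℕ} (τ : Equiv.Perm (Fin m)) {S' : Finset ℕ}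
    (h : S' ⊆ Finset.Icc 1 m) : ∑ i ∈ S', invEnd τ i ≤ invNum τ := by
  rw [invNum_eq_sum]; exact Finset.sum_le_sum_of_subset h

lemma fval_eq {m : ℕ} {S' : Finset ℕ} (h : S' ⊆ Finset.Icc 1 m) (P : ℕ) :
    (S'.filter fun i => P ≤ i).card + (Finset.Icc P m \ S').card = m + 1 - P := by
  have hfe : S'.filter (fun i => P ≤ i) = Finset.Icc P m ∩ S' := by
    ext x
    simp only [Finset.mem_filter, Finset.mem_inter, Finset.mem_Icc]
    constructor
    · rintro ⟨hx, hPx⟩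
      have := Finset.mem_Icc.mp (h hx)
      exact ⟨⟨hPx, this.2⟩, hx⟩
    · rintro ⟨⟨h1, _⟩, hx⟩; exact ⟨hx, h1⟩
  have := Finset.card_sdiff_add_card_inter (Finset.Icc P m) S'
  rw [hfe, Nat.card_Icc] at *
  omega

lemma weight_up {m : ℕ} (τ : Equiv.Perm (Fin m)) (p : Fin (m+1)) {S' : Finset ℕ}
    (h : S' ⊆ Finset.Icc 1 m) :
    ∑ i ∈ S'.image (up ((p:ℕ)+1)), invEnd (ins τ p) i
      = ∑ i ∈ S', invEnd τ i + (S'.filter fun i => (p:ℕ)+1 ≤ i).card := by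
  rw [Finset.sum_image (fun a _ b _ hab => up_inj _ hab)]
  have : ∀ i ∈ S', invEnd (ins τ p) (up ((p:ℕ)+1) i)
      = invEnd τ i + (if (p:ℕ)+1 ≤ i then 1 else 0) := by
    intro i hi
    have := Finset.mem_Icc.mp (h hi)
    exact invEnd_ins_up τ p this.1 this.2
  rw [Finset.sum_congr rfl this, Finset.sum_add_distrib, Finset.sum_boole]
  simp

lemma exponent_caseB {m : ℕ} (τ : Equiv.Perm (Fin m)) (p : Fin (m+1)) {S' : Finset ℕ}
    (h : S' ⊆ Finset.Icc 1 m) :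
    invNum (ins τ p) - ∑ i ∈ S'.image (up ((p:ℕ)+1)), invEnd (ins τ p) i
      = (invNum τ - ∑ i ∈ S', invEnd τ i) + (Finset.Icc ((p:ℕ)+1) m \ S').card := by
  rw [invNum_ins, weight_up τ p h]
  have h1 := sum_invEnd_le τ h
  have h2 := fval_eq h ((p:ℕ)+1)
  omega

lemma exponent_caseA {m : ℕ} (τ : Equiv.Perm (Fin m)) (p : Fin (m+1)) {S' : Finset ℕ}
    (h : S' ⊆ Finset.Icc 1 m) :
    invNum (ins τ p) - ∑ i ∈ insert ((p:ℕ)+1) (S'.image (up ((p:ℕ)+1))), invEnd (ins τ p) i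
      = (invNum τ - ∑ i ∈ S', invEnd τ i) + (Finset.Icc ((p:ℕ)+1) m \ S').card := by
  have hPnot : ((p:ℕ)+1) ∉ S'.image (up ((p:ℕ)+1)) := by
    intro hmem
    obtain ⟨a, _, ha⟩ := Finset.mem_image.mp hmem
    exact up_ne _ a ha
  rw [Finset.sum_insert hPnot, invEnd_ins_self, zero_add]
  exact exponent_caseB τ p h

lemma countSum {R : Type*} [CommRing R] (q : R) :
    ∀ (m : ℕ) (S' : Finset ℕ), S' ⊆ Finset.Icc 1 m →
    ∑ P ∈ (Finset.Icc 1 (m+1)) \ S'.image (· + 1), q ^ ((Finset.Icc P m \ S').card)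
      = ∑ i ∈ Finset.range (m + 1 - S'.card), q ^ i := by
  intro m
  induction m with
  | zero =>
    intro S' hS'
    have : S' = ∅ := Finset.subset_empty.mp (by simpa using hS')
    subst this
    simp
  | succ m ih =>
    intro S' hS'
    by_cases hin : m + 1 ∈ S'
    · set S'' := S'.erase (m+1) with hS''def
      have hsub : S'' ⊆ Finset.Icc 1 m := by
        intro x hx
        rw [hS''def, Finset.mem_erase] at hx
        have := Finset.mem_Icc.mp (hS' hx.2)
        rw [Finset.mem_Icc]; omega
      have setEq : Finset.Icc 1 (m+2) \ S'.image (· + 1)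
          = Finset.Icc 1 (m+1) \ S''.image (· + 1) := by
        ext x
        simp only [Finset.mem_sdiff, Finset.mem_Icc, Finset.mem_image, hS''def, Finset.mem_erase]
        constructor
        · rintro ⟨⟨hx1, hx2⟩, hne⟩
          have hxm : x ≤ m + 1 := by
            by_contra hc
            exact hne ⟨m+1, hin, by omega⟩
          exact ⟨⟨hx1, hxm⟩, fun ⟨a, ⟨_, ha⟩, hax⟩ => hne ⟨a, ha, hax⟩⟩
        · rintro ⟨⟨hx1, hx2⟩, hne⟩
          refine ⟨⟨hx1, by omega⟩, ?_⟩
          rintro ⟨a, ha, hax⟩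
          have := Finset.mem_Icc.mp (hS' ha)
          exact hne ⟨a, ⟨by omega, ha⟩, hax⟩
      have termEq : ∀ P ∈ Finset.Icc 1 (m+1) \ S''.image (· + 1),
          q ^ (Finset.Icc P (m+1) \ S').card = q ^ (Finset.Icc P m \ S'').card := by
        intro P hP
        congr 2
        ext x
        simp only [Finset.mem_sdiff, Finset.mem_Icc, hS''def, Finset.mem_erase]
        constructor
        · rintro ⟨⟨hx1, hx2⟩, hne⟩
          have : x ≠ m + 1 := fun h => hne (h ▸ hin)
          exact ⟨⟨hx1, by omega⟩, fun ⟨_, hx⟩ => hne hx⟩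
        · rintro ⟨⟨hx1, hx2⟩, hne⟩
          exact ⟨⟨hx1, by omega⟩, fun hx => hne ⟨by omega, hx⟩⟩
      rw [setEq, Finset.sum_congr rfl termEq, ih S'' hsub]
      have hc1 : S'.card = S''.card + 1 := by
        rw [hS''def, Finset.card_erase_of_mem hin]
        have : 0 < S'.card := Finset.card_pos.mpr ⟨m+1, hin⟩
        omega
      have h2 : m + 1 + 1 - S'.card = m + 1 - S''.card := by omega
      rw [h2]
    · have hsub : S' ⊆ Finset.Icc 1 m := by
        intro x hx
        have := Finset.mem_Icc.mp (hS' hx)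
        rw [Finset.mem_Icc]
        rcases eq_or_ne x (m+1) with rfl | hne
        · exact absurd hx hin
        · omega
      have setEq : Finset.Icc 1 (m+2) \ S'.image (· + 1)
          = insert (m+2) (Finset.Icc 1 (m+1) \ S'.image (· + 1)) := by
        ext x
        simp only [Finset.mem_sdiff, Finset.mem_Icc, Finset.mem_image, Finset.mem_insert]
        constructor
        · rintro ⟨⟨hx1, hx2⟩, hne⟩
          rcases eq_or_ne x (m+2) with rfl | hxe
          · exact Or.inl rfl
          · exact Or.inr ⟨⟨hx1, by omega⟩, hne⟩
        · rintro (rfl | ⟨⟨hx1, hx2⟩, hne⟩)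
          · refine ⟨⟨by omega, le_refl _⟩, ?_⟩
            rintro ⟨a, ha, hax⟩
            have := Finset.mem_Icc.mp (hsub ha)
            omega
          · exact ⟨⟨hx1, by omega⟩, hne⟩
      have hnotmem : (m+2) ∉ Finset.Icc 1 (m+1) \ S'.image (· + 1) := by
        simp [Finset.mem_sdiff, Finset.mem_Icc]
      rw [setEq, Finset.sum_insert hnotmem]
      have hterm : (Finset.Icc (m+2) (m+1) \ S').card = 0 := by
        rw [Finset.Icc_eq_empty (by omega), Finset.empty_sdiff, Finset.card_empty]
      rw [hterm, pow_zero]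
      have termEq : ∀ P ∈ Finset.Icc 1 (m+1) \ S'.image (· + 1),
          q ^ (Finset.Icc P (m+1) \ S').card = q * q ^ (Finset.Icc P m \ S').card := by
        intro P hP
        simp only [Finset.mem_sdiff, Finset.mem_Icc] at hP
        have hins : Finset.Icc P (m+1) \ S' = insert (m+1) (Finset.Icc P m \ S') := by
          ext x
          simp only [Finset.mem_sdiff, Finset.mem_Icc, Finset.mem_insert]
          constructor
          · rintro ⟨⟨hx1, hx2⟩, hne⟩
            rcases eq_or_ne x (m+1) with rfl | hxe
            · exact Or.inl rfl
            · exact Or.inr ⟨⟨hx1, by omega⟩, hne⟩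
          · rintro (rfl | ⟨⟨hx1, hx2⟩, hne⟩)
            · exact ⟨⟨by omega, le_refl _⟩, hin⟩
            · exact ⟨⟨hx1, by omega⟩, hne⟩
        have hnm : (m+1) ∉ Finset.Icc P m \ S' := by
          simp [Finset.mem_sdiff, Finset.mem_Icc]
        rw [hins, Finset.card_insert_of_notMem hnm, pow_succ, mul_comm]
      rw [Finset.sum_congr rfl termEq, ← Finset.mul_sum, ih S' hsub]
      have hcard : S'.card ≤ m := by
        have := Finset.card_le_card hsub
        rw [Nat.card_Icc] at this
        omega
      have : m + 2 - S'.card = (m + 1 - S'.card) + 1 := by omega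
      rw [this, geom_sum_succ, add_comm]

lemma starSets_eq (D : Finset ℕ) (k : ℕ) : starSets D k = Finset.powersetCard k D := by
  rw [starSets, Finset.powersetCard_eq_filter]

lemma ins_bijective {m : ℕ} :
    Function.Bijective (fun pt : Fin (m+1) × Equiv.Perm (Fin m) => ins pt.2 pt.1) := by
  rw [Fintype.bijective_iff_injective_and_card]
  constructor
  · rintro ⟨p, τ⟩ ⟨p', τ'⟩ h
    simp only at h
    have hp : p = p' := by
      have h1 : ins τ' p' p = Fin.last m := by rw [← h]; exact ins_apply_self τ p
      have h2 : ins τ' p' p' = Fin.last m := ins_apply_self τ' p'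
      exact (ins τ' p').injective (h1.trans h2.symm)
    subst hp
    have hτ : τ = τ' := by
      ext j
      have h1 : ins τ p (p.succAbove j) = (τ j).castSucc := ins_apply_succAbove τ p j
      have h2 : ins τ' p (p.succAbove j) = (τ' j).castSucc := ins_apply_succAbove τ' p j
      rw [h] at h1
      have := h1.symm.trans h2
      exact congrArg Fin.val (Fin.castSucc_injective m this)
    rw [hτ]
  · simp [Fintype.card_perm, Nat.factorial_succ]

lemma mem_B_sub {m : ℕ} (hm : 1 ≤ m) (τ : Equiv.Perm (Fin m)) :
    insert m (DesSet τ) ⊆ Finset.Icc 1 m := by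
  intro x hx
  rcases Finset.mem_insert.mp hx with rfl | hd
  · rw [Finset.mem_Icc]; omega
  · simp only [DesSet, Finset.mem_filter, Finset.mem_Icc] at hd
    rw [Finset.mem_Icc]; omega

lemma inner_sum_succ {R : Type*} [CommRing R] (q : R) {m : ℕ} (hm : 1 ≤ m)
    (τ : Equiv.Perm (Fin m)) (p : Fin (m+1)) (k : ℕ) :
    ∑ S ∈ Finset.powersetCard (k+1) (insert (m+1) (DesSet (ins τ p))),
        q ^ (invNum (ins τ p) - ∑ i ∈ S, invEnd (ins τ p) i)
      = (∑ S' ∈ Finset.powersetCard k ((insert m (DesSet τ)).erase (p:ℕ)),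
          q ^ ((invNum τ - ∑ i ∈ S', invEnd τ i) + (Finset.Icc ((p:ℕ)+1) m \ S').card))
        + ∑ S' ∈ Finset.powersetCard (k+1) ((insert m (DesSet τ)).erase (p:ℕ)),
          q ^ ((invNum τ - ∑ i ∈ S', invEnd τ i) + (Finset.Icc ((p:ℕ)+1) m \ S').card) := by
  set P : ℕ := (p:ℕ)+1 with hP
  set B : Finset ℕ := (insert m (DesSet τ)).erase (p:ℕ) with hB
  have hBsub : B ⊆ Finset.Icc 1 m := fun x hx => mem_B_sub hm τ (Finset.mem_of_mem_erase hx)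
  have hBset : insert (m+1) (DesSet (ins τ p)) = insert P (B.image (up P)) := by
    have := Bset_ins hm τ p
    simpa using this
  have hPnot : P ∉ B.image (up P) := by
    intro hmem
    obtain ⟨a, _, ha⟩ := Finset.mem_image.mp hmem
    exact up_ne _ a ha
  rw [hBset, Finset.powersetCard_succ_insert hPnot]
  have hdisj : Disjoint (Finset.powersetCard (k+1) (B.image (up P)))
      ((Finset.powersetCard k (B.image (up P))).image (insert P)) := by
    rw [Finset.disjoint_left]
    intro S hS1 hS2
    obtain ⟨T, hT, rfl⟩ := Finset.mem_image.mp hS2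
    have hsub := (Finset.mem_powersetCard.mp hS1).1
    exact hPnot (hsub (Finset.mem_insert_self P T))
  rw [Finset.sum_union hdisj]
  rw [add_comm]
  congr 1
  · -- case A : sets containing P
    rw [Finset.sum_image (fun T hT T' hT' hins => by
      have h1 : P ∉ T := fun hc => hPnot ((Finset.mem_powersetCard.mp hT).1 hc)
      have h2 : P ∉ T' := fun hc => hPnot ((Finset.mem_powersetCard.mp hT').1 hc)
      rw [← Finset.erase_insert h1, ← Finset.erase_insert h2, hins])]
    rw [powersetCard_image' (up_inj P)]
    rw [Finset.sum_image (fun a _ b _ h => Finset.image_injective (up_inj P) h)]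
    refine Finset.sum_congr rfl fun S' hS' => ?_
    have hsub : S' ⊆ Finset.Icc 1 m := (Finset.mem_powersetCard.mp hS').1.trans hBsub
    rw [exponent_caseA τ p hsub]
  · -- case B : sets not containing P
    rw [powersetCard_image' (up_inj P)]
    rw [Finset.sum_image (fun a _ b _ h => Finset.image_injective (up_inj P) h)]
    refine Finset.sum_congr rfl fun S' hS' => ?_
    have hsub : S' ⊆ Finset.Icc 1 m := (Finset.mem_powersetCard.mp hS').1.trans hBsub
    rw [exponent_caseB τ p hsub]

lemma inner_sum_zero {R : Type*} [CommRing R] (q : R) {m : ℕ}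
    (τ : Equiv.Perm (Fin m)) (p : Fin (m+1)) :
    ∑ S ∈ Finset.powersetCard 0 (insert (m+1) (DesSet (ins τ p))),
        q ^ (invNum (ins τ p) - ∑ i ∈ S, invEnd (ins τ p) i)
      = ∑ S' ∈ Finset.powersetCard 0 ((insert m (DesSet τ)).erase (p:ℕ)),
          q ^ ((invNum τ - ∑ i ∈ S', invEnd τ i) + (Finset.Icc ((p:ℕ)+1) m \ S').card) := by
  rw [Finset.powersetCard_zero, Finset.powersetCard_zero, Finset.sum_singleton,
    Finset.sum_singleton]
  have h := exponent_caseB τ p (S' := ∅) (Finset.empty_subset _)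
  simp only [Finset.image_empty, Finset.sum_empty] at h ⊢
  rw [h]

lemma fin_count {R : Type*} [CommRing R] (q : R) {m : ℕ} {S' : Finset ℕ}
    (hsub : S' ⊆ Finset.Icc 1 m) :
    ∑ p : Fin (m+1), (if (p:ℕ) ∉ S' then q ^ (Finset.Icc ((p:ℕ)+1) m \ S').card else 0)
      = ∑ i ∈ Finset.range (m + 1 - S'.card), q ^ i := by
  rw [← countSum q m S' hsub, ← Finset.sum_filter]
  refine Finset.sum_nbij' (i := fun p : Fin (m+1) => (p:ℕ)+1)
    (j := fun P => (⟨min (P-1) m, by omega⟩ : Fin (m+1))) ?_ ?_ ?_ ?_ ?_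
  · intro p hp
    simp only [Finset.mem_filter, Finset.mem_univ, true_and] at hp
    simp only [Finset.mem_sdiff, Finset.mem_Icc, Finset.mem_image]
    refine ⟨⟨by omega, by have := p.isLt; omega⟩, ?_⟩
    rintro ⟨a, ha, hax⟩
    have : a = (p:ℕ) := by omega
    exact hp (this ▸ ha)
  · intro P hP
    simp only [Finset.mem_sdiff, Finset.mem_Icc, Finset.mem_image] at hP
    simp only [Finset.mem_filter, Finset.mem_univ, true_and]
    intro hc
    have hPm : P ≤ m + 1 := hP.1.2
    have hP1 : 1 ≤ P := hP.1.1
    have : min (P-1) m = P - 1 := by omega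
    rw [this] at hc
    exact hP.2 ⟨P-1, hc, by omega⟩
  · intro p hp
    ext
    simp only
    have := p.isLt
    omega
  · intro P hP
    simp only [Finset.mem_sdiff, Finset.mem_Icc] at hP
    have hP1 : 1 ≤ P := hP.1.1
    have hPm : P ≤ m + 1 := hP.1.2
    simp only
    omega
  · intro p hp
    rfl

lemma swap_count {R : Type*} [CommRing R] (q : R) {m : ℕ} (hm : 1 ≤ m)
    (τ : Equiv.Perm (Fin m)) (j : ℕ) :
    ∑ p : Fin (m+1), ∑ S' ∈ Finset.powersetCard j ((insert m (DesSet τ)).erase (p:ℕ)),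
        q ^ ((invNum τ - ∑ i ∈ S', invEnd τ i) + (Finset.Icc ((p:ℕ)+1) m \ S').card)
      = qnum q (m + 1 - j) *
          ∑ S' ∈ Finset.powersetCard j (insert m (DesSet τ)),
            q ^ (invNum τ - ∑ i ∈ S', invEnd τ i) := by
  have step1 : ∀ p : Fin (m+1),
      ∑ S' ∈ Finset.powersetCard j ((insert m (DesSet τ)).erase (p:ℕ)),
        q ^ ((invNum τ - ∑ i ∈ S', invEnd τ i) + (Finset.Icc ((p:ℕ)+1) m \ S').card)
      = ∑ S' ∈ Finset.powersetCard j (insert m (DesSet τ)),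
          (if (p:ℕ) ∉ S' then q ^ ((invNum τ - ∑ i ∈ S', invEnd τ i) + (Finset.Icc ((p:ℕ)+1) m \ S').card) else 0) := by
    intro p
    rw [pcs_erase, Finset.sum_filter]
  rw [Finset.sum_congr rfl (fun p _ => step1 p), Finset.sum_comm]
  rw [qnum, Finset.mul_sum]
  refine Finset.sum_congr rfl fun S' hS' => ?_
  obtain ⟨hsub0, hcard⟩ := Finset.mem_powersetCard.mp hS'
  have hsub : S' ⊆ Finset.Icc 1 m := hsub0.trans (mem_B_sub hm τ)
  have : ∀ p : Fin (m+1),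
      (if (p:ℕ) ∉ S' then q ^ ((invNum τ - ∑ i ∈ S', invEnd τ i) + (Finset.Icc ((p:ℕ)+1) m \ S').card) else 0)
      = q ^ (invNum τ - ∑ i ∈ S', invEnd τ i) *
        (if (p:ℕ) ∉ S' then q ^ (Finset.Icc ((p:ℕ)+1) m \ S').card else 0) := by
    intro p
    rw [pow_add, mul_ite, mul_zero]
  rw [Finset.sum_congr rfl (fun p _ => this p), ← Finset.mul_sum, fin_count q hsub, hcard]
  ring

lemma main_zero {R : Type*} [CommRing R] (q : R) {m : ℕ} (hm : 1 ≤ m) :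
    Dinv' q (m+1) 0 = qnum q (m+1) * Dinv' q m 0 := by
  unfold Dinv'
  simp only [starSets_eq]
  rw [← Function.Bijective.sum_comp (ins_bijective (m := m))
    (fun σ => ∑ S ∈ Finset.powersetCard 0 (insert (m+1) (DesSet σ)),
      q ^ (invNum σ - ∑ i ∈ S, invEnd σ i))]
  rw [Fintype.sum_prod_type]
  rw [Finset.sum_comm]
  have : ∀ τ : Equiv.Perm (Fin m), ∀ p : Fin (m+1),
      ∑ S ∈ Finset.powersetCard 0 (insert (m+1) (DesSet (ins τ p))),
          q ^ (invNum (ins τ p) - ∑ i ∈ S, invEnd (ins τ p) i)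
      = ∑ S' ∈ Finset.powersetCard 0 ((insert m (DesSet τ)).erase (p:ℕ)),
          q ^ ((invNum τ - ∑ i ∈ S', invEnd τ i) + (Finset.Icc ((p:ℕ)+1) m \ S').card) :=
    fun τ p => inner_sum_zero q τ p
  rw [Finset.sum_congr rfl (fun τ _ => Finset.sum_congr rfl (fun p _ => this τ p))]
  rw [Finset.sum_congr rfl (fun τ _ => swap_count q hm τ 0)]
  rw [← Finset.mul_sum]
  congr 1

lemma main_succ {R : Type*} [CommRing R] (q : R) {m : ℕ} (hm : 1 ≤ m) (k : ℕ) :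
    Dinv' q (m+1) (k+1) = qnum q (m+1-k) * Dinv' q m k + qnum q (m-k) * Dinv' q m (k+1) := by
  unfold Dinv'
  simp only [starSets_eq]
  rw [← Function.Bijective.sum_comp (ins_bijective (m := m))
    (fun σ => ∑ S ∈ Finset.powersetCard (k+1) (insert (m+1) (DesSet σ)),
      q ^ (invNum σ - ∑ i ∈ S, invEnd σ i))]
  rw [Fintype.sum_prod_type]
  rw [Finset.sum_comm]
  rw [Finset.sum_congr rfl (fun τ _ => Finset.sum_congr rfl
    (fun p _ => inner_sum_succ q hm τ p k))]
  rw [Finset.sum_congr rfl (fun τ _ => Finset.sum_add_distrib)]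
  rw [Finset.sum_add_distrib]
  rw [Finset.sum_congr rfl (fun τ _ => swap_count q hm τ k),
    Finset.sum_congr rfl (fun τ _ => swap_count q hm τ (k+1))]
  rw [← Finset.mul_sum, ← Finset.mul_sum]
  have e : m + 1 - (k+1) = m - k := by omega
  rw [e]

end St18

/-- For all n ≥ 2 and 0 ≤ k ≤ n,
D'_{n,k}(q) = [n−k+1]_q · D'_{n−1,k−1}(q) + [n−k]_q · D'_{n−1,k}(q), with the conventions
D'_{m,−1}(q) = 0 and D'_{m,k}(q) = 0 for k > m. -/
theorem statement18 {R : Type*} [CommRing R] (q : R) (n k : ℕ) (hn : 2 ≤ n) (hk : k ≤ n) :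
    Dinv' q n k =
      qnum q (n - k + 1) * (if k = 0 then 0 else Dinv' q (n - 1) (k - 1)) +
        qnum q (n - k) * Dinv' q (n - 1) k := by
  obtain ⟨m, rfl⟩ : ∃ m, n = m + 1 := ⟨n - 1, by omega⟩
  have hm : 1 ≤ m := by omega
  rcases k with _ | k'
  · rw [if_pos rfl, mul_zero, zero_add]
    simpa using St18.main_zero q hm
  · rw [if_neg (Nat.succ_ne_zero k')]
    have h1 : m + 1 - (k'+1) + 1 = m + 1 - k' := by omega
    have h2 : m + 1 - (k'+1) = m - k' := by omega
    have h3 : m + 1 - 1 = m := by omega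
    have h4 : k' + 1 - 1 = k' := by omega
    rw [h1, h2, h3, h4]
    exact St18.main_succ q hm k'
end

section
/- (Carlitz's insertion lemma.) Fix n ≥ 2 and σ ∈ 𝔖_{n−1}. For 0 ≤ g ≤ n−1, let ins_g(σ) ∈ 𝔖_n be the permutation σ_1 ⋯ σ_g n σ_{g+1} ⋯ σ_{n−1} obtained by inserting n immediately after position g (at the front when g = 0). Then the map g ↦ maj(ins_g(σ)) − maj(σ) is a bijection from {0, 1, …, n−1} to {0, 1, …, n−1}; equivalently, the multiset {maj(τ) : τ ∈ 𝔖_n is obtained from σ by inserting n into one of its n gaps} equals {maj(σ), maj(σ)+1, …, maj(σ)+n−1}. -/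
open Finset

/-- `IsInsertion σ g τ` says that τ ∈ 𝔖_{m+1} is the permutation
σ_1 ⋯ σ_g (m+1) σ_{g+1} ⋯ σ_m obtained from σ ∈ 𝔖_m by inserting the largest letter m+1
immediately after position g (at the front when g = 0). -/
def IsInsertion {m : ℕ} (σ : Equiv.Perm (Fin m)) (g : ℕ) (τ : Equiv.Perm (Fin (m + 1))) :
    Prop :=
  g ≤ m ∧ (∀ i, 1 ≤ i → i ≤ g → oneline τ i = oneline σ i) ∧
    oneline τ (g + 1) = m + 1 ∧
    (∀ i, g + 2 ≤ i → i ≤ m + 1 → oneline τ i = oneline σ (i - 1))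


namespace S19
open Equiv

variable {m : ℕ}

lemma oneline_le (σ : Perm (Fin m)) (i : ℕ) : oneline σ i ≤ m := by
  unfold oneline; split
  · exact (σ _).isLt
  · omega

lemma oneline_eq (σ : Perm (Fin m)) {i : ℕ} (h1 : 1 ≤ i) (h2 : i ≤ m) :
    oneline σ i = (σ ⟨i - 1, by omega⟩ : ℕ) + 1 := dif_pos ⟨h1, h2⟩

noncomputable def insPerm (σ : Perm (Fin m)) (g : ℕ) (hg : g ≤ m) : Perm (Fin (m+1)) :=
  Equiv.ofBijective (fun j => Fin.mk
    (if h : (j : ℕ) < g then (σ ⟨j, by omega⟩ : ℕ)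
     else if h2 : (j : ℕ) = g then m
     else (σ ⟨(j:ℕ) - 1, by have := j.isLt; omega⟩ : ℕ))
    (by split_ifs with h1 h2
        · exact Nat.lt_succ_of_lt (Fin.is_lt _)
        · omega
        · exact Nat.lt_succ_of_lt (Fin.is_lt _)))
    (Finite.injective_iff_bijective.mp (by
      intro j j' heq
      have hb : ∀ x : Fin m, (σ x : ℕ) < m := fun x => (σ x).isLt
      have hj := j.isLt; have hj' := j'.isLt
      have hv := congrArg Fin.val heq
      simp only at hv
      split_ifs at hv with h1 h2 h3 h4 h5 <;>
        first
          | exact Fin.ext (by omega)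
          | exact absurd hv (Nat.ne_of_lt (hb _))
          | exact absurd hv (Nat.ne_of_gt (hb _))
          | (have h6 := σ.injective (Fin.ext hv)
             simp only [Fin.mk.injEq] at h6
             exact Fin.ext (by omega))))

lemma insPerm_apply (σ : Perm (Fin m)) (g : ℕ) (hg : g ≤ m) (j : Fin (m+1)) :
    ((insPerm σ g hg j : Fin (m+1)) : ℕ) =
      if h : (j : ℕ) < g then (σ ⟨j, by omega⟩ : ℕ)
      else if h2 : (j : ℕ) = g then m
      else (σ ⟨(j:ℕ) - 1, by have := j.isLt; omega⟩ : ℕ) := rfl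

lemma insPerm_isInsertion (σ : Perm (Fin m)) (g : ℕ) (hg : g ≤ m) :
    IsInsertion σ g (insPerm σ g hg) := by
  refine ⟨hg, ?_, ?_, ?_⟩
  · intro i hi1 hi2
    rw [oneline_eq _ hi1 (by omega), oneline_eq _ hi1 (by omega), insPerm_apply,
      dif_pos]
    all_goals first
      | rfl
      | exact (by omega : i - 1 < g)
  · rw [oneline_eq _ (by omega) (by omega), insPerm_apply, dif_neg, dif_pos]
    all_goals first
      | rfl
      | exact (by omega : g + 1 - 1 = g)
      | exact (by omega : ¬ g + 1 - 1 < g)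
  · intro i hi1 hi2
    rw [oneline_eq _ (by omega) hi2, oneline_eq _ (by omega) (by omega),
      insPerm_apply, dif_neg, dif_neg]
    all_goals first
      | rfl
      | exact (by omega : ¬ i - 1 = g)
      | exact (by omega : ¬ i - 1 < g)

lemma insertion_unique {σ : Perm (Fin m)} {g : ℕ} {τ τ' : Perm (Fin (m+1))}
    (h : IsInsertion σ g τ) (h' : IsInsertion σ g τ') : τ = τ' := by
  obtain ⟨hg, ha, hb, hc⟩ := h
  obtain ⟨_, ha', hb', hc'⟩ := h'
  have key : ∀ i, 1 ≤ i → i ≤ m + 1 → oneline τ i = oneline τ' i := by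
    intro i hi1 hi2
    rcases lt_trichotomy i (g+1) with hlt | heq | hgt
    · rw [ha i hi1 (by omega), ha' i hi1 (by omega)]
    · rw [heq, hb, hb']
    · rw [hc i (by omega) hi2, hc' i (by omega) hi2]
  ext j
  have hjl := j.isLt
  have hk := key ((j : ℕ) + 1) (by omega) (by omega)
  have e1 := oneline_eq τ (i := (j : ℕ) + 1) (by omega) (by omega)
  have e2 := oneline_eq τ' (i := (j : ℕ) + 1) (by omega) (by omega)
  have hj0 : (⟨(j : ℕ) + 1 - 1, by omega⟩ : Fin (m+1)) = j := Fin.ext (by simp)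
  rw [hj0] at e1 e2
  rw [e1, e2] at hk
  omega

lemma mem_DesSet {n : ℕ} {σ : Perm (Fin n)} {i : ℕ} :
    i ∈ DesSet σ ↔ (1 ≤ i ∧ i ≤ n - 1) ∧ oneline σ (i + 1) < oneline σ i := by
  unfold DesSet; rw [Finset.mem_filter, Finset.mem_Icc]

lemma desSet_ins_top {σ : Perm (Fin m)} {τ : Perm (Fin (m+1))}
    (hτ : IsInsertion σ m τ) : DesSet τ = DesSet σ := by
  obtain ⟨hgm, hlow, hmid, hhigh⟩ := hτ
  ext i
  rw [mem_DesSet, mem_DesSet]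
  simp only [Nat.add_sub_cancel]
  constructor
  · rintro ⟨⟨hi1, him⟩, hd⟩
    by_cases hem : i = m
    · exfalso
      have h1 := hlow i hi1 (by omega)
      have h2 := oneline_le σ i
      rw [hem] at hd h1 h2
      rw [hmid] at hd
      omega
    · refine ⟨⟨hi1, by omega⟩, ?_⟩
      rw [← hlow i hi1 (by omega), ← hlow (i+1) (by omega) (by omega)]
      exact hd
  · rintro ⟨⟨hi1, him⟩, hd⟩
    have hm1 : 1 ≤ m := by omega
    refine ⟨⟨hi1, by omega⟩, ?_⟩
    rw [hlow i hi1 (by omega), hlow (i+1) (by omega) (by omega)]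
    exact hd

lemma desSet_ins {σ : Perm (Fin m)} {g : ℕ} (hg : g < m) {τ : Perm (Fin (m+1))}
    (hτ : IsInsertion σ g τ) :
    DesSet τ = ((DesSet σ).filter (· < g) ∪ {g+1}) ∪
      ((DesSet σ).filter (fun d => g < d)).image (· + 1) := by
  obtain ⟨hgm, hlow, hmid, hhigh⟩ := hτ
  ext i
  simp only [Finset.mem_union, Finset.mem_filter, Finset.mem_singleton,
    Finset.mem_image, mem_DesSet, Nat.add_sub_cancel]
  constructor
  · rintro ⟨⟨hi1, him⟩, hd⟩
    by_cases hlt : i < g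
    · left; left
      refine ⟨⟨⟨hi1, by omega⟩, ?_⟩, hlt⟩
      rw [← hlow i hi1 (by omega), ← hlow (i+1) (by omega) (by omega)]
      exact hd
    · by_cases heq : i = g
      · exfalso
        have h1 := hlow i hi1 (by omega)
        have h2 := oneline_le σ i
        rw [heq] at hd
        rw [hmid] at hd
        rw [heq] at h1 h2
        omega
      · by_cases heq2 : i = g + 1
        · left; right; exact heq2
        · right
          refine ⟨i - 1, ⟨⟨⟨by omega, by omega⟩, ?_⟩, by omega⟩, by omega⟩
          have e1 := hhigh i (by omega) (by omega)
          have e2 := hhigh (i+1) (by omega) (by omega)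
          rw [e1, e2] at hd
          simp only [Nat.add_sub_cancel] at hd
          have : i - 1 + 1 = i := by omega
          rw [this]
          exact hd
  · rintro ((⟨⟨⟨hi1, him⟩, hd⟩, hlt⟩ | rfl) | ⟨d, ⟨⟨⟨hd1, hdm⟩, hdd⟩, hgd⟩, rfl⟩)
    · refine ⟨⟨hi1, by omega⟩, ?_⟩
      rw [hlow i hi1 (by omega), hlow (i+1) (by omega) (by omega)]
      exact hd
    · refine ⟨⟨by omega, by omega⟩, ?_⟩
      rw [hmid, hhigh (g+1+1) (by omega) (by omega)]
      simp only [Nat.add_sub_cancel]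
      have := oneline_le σ (g+1)
      omega
    · refine ⟨⟨by omega, by omega⟩, ?_⟩
      rw [hhigh (d+1) (by omega) (by omega), hhigh (d+1+1) (by omega) (by omega)]
      simp only [Nat.add_sub_cancel]
      exact hdd

noncomputable def insF {m : ℕ} (σ : Perm (Fin m)) (g : ℕ) : ℕ :=
  if g = m then 0
  else if g ∈ DesSet σ then ((DesSet σ).filter (fun d => g < d)).card + 1
  else g + 1 + ((DesSet σ).filter (fun d => g < d)).card

lemma maj_ins (σ : Perm (Fin m)) {g : ℕ} (hg : g ≤ m) {τ : Perm (Fin (m+1))}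
    (hτ : IsInsertion σ g τ) :
    majNum τ = majNum σ + insF σ g := by
  unfold majNum
  rcases eq_or_lt_of_le hg with rfl | hlt
  · rw [desSet_ins_top hτ, insF, if_pos rfl, Nat.add_zero]
  · rw [desSet_ins hlt hτ]
    have hd1 : Disjoint ((DesSet σ).filter (· < g)) ({g+1} : Finset ℕ) := by
      simp only [Finset.disjoint_singleton_right, Finset.mem_filter]
      omega
    have hd2 : Disjoint ((DesSet σ).filter (· < g) ∪ {g+1})
        (((DesSet σ).filter (fun d => g < d)).image (· + 1)) := by
      rw [Finset.disjoint_left]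
      intro a ha hb
      simp only [Finset.mem_union, Finset.mem_filter, Finset.mem_singleton] at ha
      simp only [Finset.mem_image, Finset.mem_filter] at hb
      obtain ⟨d, ⟨_, hgd⟩, rfl⟩ := hb
      omega
    rw [Finset.sum_union hd2, Finset.sum_union hd1, Finset.sum_singleton,
      Finset.sum_image (by intro x _ y _ h; simp only at h; omega)]
    have hsplit := Finset.sum_filter_add_sum_filter_not (DesSet σ) (· < g) id
    simp only [id_eq] at hsplit
    have hnot : (DesSet σ).filter (fun d => ¬ d < g) =
        (DesSet σ).filter (fun d => d = g) ∪ (DesSet σ).filter (fun d => g < d) := by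
      ext a
      simp only [Finset.mem_union, Finset.mem_filter]
      constructor
      · rintro ⟨ha, h⟩; rcases Nat.lt_or_ge g a with h' | h'
        · exact Or.inr ⟨ha, h'⟩
        · exact Or.inl ⟨ha, by omega⟩
      · rintro (⟨ha, h⟩ | ⟨ha, h⟩) <;> exact ⟨ha, by omega⟩
    have hdisj3 : Disjoint ((DesSet σ).filter (fun d => d = g))
        ((DesSet σ).filter (fun d => g < d)) := by
      rw [Finset.disjoint_left]; intro a ha hb
      simp only [Finset.mem_filter] at ha hb; omega
    rw [hnot, Finset.sum_union hdisj3] at hsplit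
    have hsum1 : ∑ d ∈ (DesSet σ).filter (fun d => d = g), d =
        if g ∈ DesSet σ then g else 0 := by
      split_ifs with hmem
      · rw [Finset.filter_eq' (DesSet σ) g, if_pos hmem, Finset.sum_singleton]
      · rw [Finset.filter_false_of_mem, Finset.sum_empty]
        intro x hx; intro h; exact hmem (h ▸ hx)
    have hplus : ∑ d ∈ (DesSet σ).filter (fun d => g < d), (d + 1) =
        (∑ d ∈ (DesSet σ).filter (fun d => g < d), d) +
          ((DesSet σ).filter (fun d => g < d)).card := by
      rw [Finset.sum_add_distrib, Finset.sum_const, smul_eq_mul, mul_one]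
    rw [insF, if_neg (by omega)]
    split_ifs with hmem
    · rw [if_pos hmem] at hsum1
      omega
    · rw [if_neg hmem] at hsum1
      omega

lemma desSet_subset (σ : Perm (Fin m)) : DesSet σ ⊆ Finset.Icc 1 (m - 1) :=
  Finset.filter_subset _ _

lemma k_le (σ : Perm (Fin m)) (a : ℕ) :
    ((DesSet σ).filter (fun d => a < d)).card ≤ m - 1 - a := by
  have h : (DesSet σ).filter (fun d => a < d) ⊆ Finset.Icc (a+1) (m-1) := by
    intro x hx
    simp only [Finset.mem_filter] at hx
    have := desSet_subset σ hx.1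
    simp only [Finset.mem_Icc] at this ⊢
    omega
  calc _ ≤ (Finset.Icc (a+1) (m-1)).card := Finset.card_le_card h
    _ = m - 1 - a := by rw [Nat.card_Icc]; omega

lemma D_card_le (σ : Perm (Fin m)) : (DesSet σ).card ≤ m - 1 := by
  calc _ ≤ (Finset.Icc 1 (m-1)).card := Finset.card_le_card (desSet_subset σ)
    _ = m - 1 := by rw [Nat.card_Icc]; omega

lemma k_lt_of_mem {σ : Perm (Fin m)} {a : ℕ} (ha : a ∈ DesSet σ) :
    ((DesSet σ).filter (fun d => a < d)).card + 1 ≤ (DesSet σ).card := by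
  have h : (DesSet σ).filter (fun d => a < d) ⊆ (DesSet σ).erase a := by
    intro x hx
    simp only [Finset.mem_filter] at hx
    exact Finset.mem_erase.mpr ⟨by omega, hx.1⟩
  have := Finset.card_le_card h
  rw [Finset.card_erase_of_mem ha] at this
  have hpos : 1 ≤ (DesSet σ).card := Finset.card_pos.mpr ⟨a, ha⟩
  omega

lemma k_ge (σ : Perm (Fin m)) (a : ℕ) :
    (DesSet σ).card ≤ a + ((DesSet σ).filter (fun d => a < d)).card := by
  have hsplit := Finset.card_filter_add_card_filter_not
    (s := DesSet σ) (p := fun d => a < d)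
  have h : (DesSet σ).filter (fun d => ¬ a < d) ⊆ Finset.Icc 1 a := by
    intro x hx
    simp only [Finset.mem_filter] at hx
    have := desSet_subset σ hx.1
    simp only [Finset.mem_Icc] at this ⊢
    omega
  have h2 := Finset.card_le_card h
  rw [Nat.card_Icc] at h2
  omega

lemma k_mono {σ : Perm (Fin m)} {a b : ℕ} (hb : b ∈ DesSet σ) (hab : a < b) :
    ((DesSet σ).filter (fun d => b < d)).card <
      ((DesSet σ).filter (fun d => a < d)).card := by
  apply Finset.card_lt_card
  rw [Finset.ssubset_iff_of_subset]
  · exact ⟨b, Finset.mem_filter.mpr ⟨hb, hab⟩, by simp⟩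
  · intro x hx
    simp only [Finset.mem_filter] at hx ⊢
    exact ⟨hx.1, by omega⟩

lemma k_close {σ : Perm (Fin m)} {a b : ℕ} (hb : b ∉ DesSet σ) (hab : a < b) :
    ((DesSet σ).filter (fun d => a < d)).card ≤
      ((DesSet σ).filter (fun d => b < d)).card + (b - 1 - a) := by
  have hsub : (DesSet σ).filter (fun d => a < d) ⊆
      (DesSet σ).filter (fun d => b < d) ∪ Finset.Icc (a+1) (b-1) := by
    intro x hx
    simp only [Finset.mem_filter] at hx
    simp only [Finset.mem_union, Finset.mem_filter, Finset.mem_Icc]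
    rcases Nat.lt_or_ge b x with h | h
    · exact Or.inl ⟨hx.1, h⟩
    · have hxb : x ≠ b := by rintro rfl; exact hb hx.1
      exact Or.inr ⟨by omega, by omega⟩
  calc _ ≤ ((DesSet σ).filter (fun d => b < d) ∪ Finset.Icc (a+1) (b-1)).card :=
        Finset.card_le_card hsub
    _ ≤ _ := by
        have := Finset.card_union_le ((DesSet σ).filter (fun d => b < d))
          (Finset.Icc (a+1) (b-1))
        rw [Nat.card_Icc] at this
        omega

lemma insF_le {σ : Perm (Fin m)} {g : ℕ} (hg : g ≤ m) : insF σ g ≤ m := by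
  unfold insF
  split_ifs with h1 h2
  · omega
  · have := k_lt_of_mem h2
    have := D_card_le σ
    omega
  · have := k_le σ g
    omega

lemma insF_ne {σ : Perm (Fin m)} {a b : ℕ} (hab : a < b) (hbm : b ≤ m) :
    insF σ a ≠ insF σ b := by
  have ham : a ≠ m := by omega
  unfold insF
  rw [if_neg ham]
  split_ifs with h1 h2 h3 h4 h5
  · omega
  · have := k_mono h3 hab
    omega
  · have := k_lt_of_mem h1
    have := k_ge σ b
    omega
  · omega
  · have := k_lt_of_mem h5
    have := k_ge σ a
    omega
  · have := k_close h5 hab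
    omega

lemma insF_bijOn (σ : Perm (Fin m)) : Set.BijOn (insF σ) (Set.Iic m) (Set.Iic m) := by
  have hmaps : Set.MapsTo (insF σ) (Set.Iic m) (Set.Iic m) := fun g hg => insF_le hg
  have hinj : Set.InjOn (insF σ) (Set.Iic m) := by
    intro a ha b hb h
    by_contra hne
    rcases Nat.lt_or_ge a b with hl | hge
    · exact insF_ne hl hb h
    · exact insF_ne (by omega) ha h.symm
  exact (Set.Finite.injOn_iff_bijOn_of_mapsTo (Set.finite_Iic m) hmaps).mp hinj

end S19

/-- Carlitz's insertion lemma: for n = m+1 ≥ 2 and σ ∈ 𝔖_m, each gap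
g ∈ {0,…,m} admits a unique insertion ins_g(σ) ∈ 𝔖_{m+1} of the letter m+1, and the map
g ↦ maj(ins_g(σ)) − maj(σ) is a bijection from {0,1,…,m} to {0,1,…,m}. -/
theorem statement19 (m : ℕ) (hm : 1 ≤ m) (σ : Equiv.Perm (Fin m)) :
    (∀ g ≤ m, ∃! τ : Equiv.Perm (Fin (m + 1)), IsInsertion σ g τ) ∧
    (∀ ins : ℕ → Equiv.Perm (Fin (m + 1)), (∀ g ≤ m, IsInsertion σ g (ins g)) →
      Set.BijOn (fun g => majNum (ins g) - majNum σ) (Set.Iic m) (Set.Iic m)) := by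
  constructor
  · intro g hg
    exact ⟨S19.insPerm σ g hg, S19.insPerm_isInsertion σ g hg,
      fun τ' h' => S19.insertion_unique h' (S19.insPerm_isInsertion σ g hg)⟩
  · intro ins hins
    apply (S19.insF_bijOn σ).congr
    intro g hg
    have h := S19.maj_ins σ (Set.mem_Iic.mp hg) (hins g (Set.mem_Iic.mp hg))
    simp only []
    omega
end
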